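/- arXiv:1710.11218 — 12 statements merged into one kernel-verified Lean document; each statement's English description precedes it below -/
import Mathlib

section
/- Suppose the cyclic group C₂ of order 2 acts by automorphisms on a finite abelian group G with |G^{C₂}| ≤ 2, where G^{C₂} is the subgroup of fixed points. Then the generator x of C₂ acts by inversion on the subgroup G_{2'} of elements of odd order. -/
open Pointwise

/-- If `C₂` acts by automorphisms on a finite abelian group `G` with at most two
fixed points, then the generator acts by inversion on the elements of odd order. -/
theorem c2_action_inverts_odd_part (G : Type*) [CommGroup G] [Finite G]
    (φ : G ≃* G) (hinvol : ∀ g : G, φ (φ g) = g)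
    (hfix : Nat.card {g : G // φ g = g} ≤ 2) :
    ∀ g : G, Odd (orderOf g) → φ g = g⁻¹ := by
  intro g hg
  -- the fixed-point subgroup
  let S : Subgroup G :=
    { carrier := {g | φ g = g}
      one_mem' := by simp
      mul_mem' := fun ha hb => by
        simp only [Set.mem_setOf_eq] at *
        simp [map_mul, ha, hb]
      inv_mem' := fun ha => by
        simp only [Set.mem_setOf_eq] at *
        simp [ha] }
  have hcardS : Nat.card S ≤ 2 := hfix
  have hmem : g * φ g ∈ S := by
    show φ (g * φ g) = g * φ g
    rw [map_mul, hinvol, mul_comm]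
  -- order of g * φ g divides orderOf g, hence is odd
  have hφord : orderOf (φ g) = orderOf g := orderOf_injective φ.toMonoidHom φ.injective g
  have hdvd : orderOf (g * φ g) ∣ orderOf g := by
    have := (Commute.all g (φ g)).orderOf_mul_dvd_lcm
    rwa [hφord, Nat.lcm_self] at this
  have hodd : Odd (orderOf (g * φ g)) := hg.of_dvd_nat hdvd
  -- order also divides card of S ≤ 2
  have hdvd2 : orderOf (g * φ g) ∣ Nat.card S := by
    have : orderOf (⟨g * φ g, hmem⟩ : S) ∣ Nat.card S := orderOf_dvd_natCard _
    rwa [Subgroup.orderOf_mk] at this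
  have hpos : 0 < Nat.card S := Nat.card_pos
  have hle : orderOf (g * φ g) ≤ 2 := le_trans (Nat.le_of_dvd hpos hdvd2) hcardS
  have h1 : orderOf (g * φ g) = 1 := by
    interval_cases h : orderOf (g * φ g)
    · exact absurd h (orderOf_pos _).ne'
    · rfl
    · exact absurd hodd (by simp [h])
  have : g * φ g = 1 := orderOf_eq_one_iff.mp h1
  rw [mul_comm] at this
  exact eq_inv_of_mul_eq_one_left this
end

section
/- Suppose C₂ = ⟨x⟩ acts by automorphisms on a finite abelian 2-group P that is cyclic of order 2ⁿ, and the fixed-point subgroup has order at most 2. Then for a generator g of P, either ˣg = g^{2ⁿ−1} (inversion) or ˣg = g^{2^{n−1}−1}. -/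
open Pointwise

/-- If `C₂` acts by automorphisms on a cyclic group `P` of order `2 ^ n` with at
most two fixed points, then on a generator `g` the action is `g ↦ g ^ (2 ^ n - 1)`
(inversion) or `g ↦ g ^ (2 ^ (n - 1) - 1)`. -/
theorem c2_action_on_cyclic_two_group (P : Type*) [Group P] [Finite P]
    (n : ℕ) (hn : 1 ≤ n) (hcard : Nat.card P = 2 ^ n)
    (g : P) (hg : ∀ p : P, p ∈ Subgroup.zpowers g)
    (φ : P ≃* P) (hinvol : ∀ p : P, φ (φ p) = p)
    (hfix : Nat.card {p : P // φ p = p} ≤ 2) :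
    φ g = g ^ (2 ^ n - 1) ∨ φ g = g ^ (2 ^ (n - 1) - 1) := by
  have hgord : orderOf g = 2 ^ n := by
    rw [orderOf_eq_card_of_forall_mem_zpowers hg, hcard]
  obtain ⟨k, hk⟩ : ∃ k : ℕ, φ g = g ^ k := by
    obtain ⟨k, hk⟩ := mem_powers_iff_mem_zpowers.mpr (hg (φ g))
    exact ⟨k, hk.symm⟩
  -- k * k ≡ 1 mod 2 ^ n
  have hkk : g ^ (k * k) = g ^ 1 := by
    have h := hinvol g
    rw [hk, map_pow, hk, ← pow_mul] at h
    rw [pow_one, h]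
  have hmod : k * k ≡ 1 [MOD 2 ^ n] := by
    have := pow_eq_pow_iff_modEq.mp hkk
    rwa [hgord] at this
  -- k is odd
  have h2le : 2 ≤ 2 ^ n := by
    calc 2 = 2 ^ 1 := (pow_one 2).symm
    _ ≤ 2 ^ n := Nat.pow_le_pow_right (by omega) hn
  have hk1 : 1 ≤ k * k := by
    rcases Nat.eq_zero_or_pos (k * k) with h | h
    · exfalso
      rw [h] at hmod
      have : 0 % 2 ^ n = 1 % 2 ^ n := hmod
      rw [Nat.zero_mod, Nat.mod_eq_of_lt (by omega)] at this
      omega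
    · exact h
  have hkodd : k % 2 = 1 := by
    have h2 : k * k ≡ 1 [MOD 2] :=
      Nat.ModEq.of_dvd (dvd_pow_self 2 (by omega)) hmod
    have hh2 : k * k % 2 = 1 % 2 := h2
    rcases Nat.even_or_odd k with he | ho
    · exfalso
      have : Even (k * k) := Nat.even_mul.mpr (Or.inl he)
      rw [Nat.even_iff] at this
      omega
    · exact Nat.odd_iff.mp ho
  rcases eq_or_lt_of_le hn with h1 | h2
  · -- n = 1 : φ g = g ^ (2 - 1) = g
    left
    rw [hk]
    apply pow_eq_pow_iff_modEq.mpr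
    rw [hgord, ← h1]
    show k % 2 = 1 % 2
    omega
  -- n ≥ 2
  have hn2 : 2 ≤ n := h2
  -- fixed subgroup
  have hk4 : k % 4 = 3 := by
    by_contra hc
    have hk41 : k % 4 = 1 := by omega
    -- then g ^ (2 ^ (n-2)) generates a fixed subgroup of order 4
    set h : P := g ^ (2 ^ (n - 2)) with hh
    have hordh : orderOf h = 4 := by
      rw [hh, orderOf_pow, hgord, Nat.gcd_eq_right (pow_dvd_pow 2 (by omega)),
        Nat.pow_div (by omega) (by omega)]
      have : n - (n - 2) = 2 := by omega
      rw [this]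
    have hfixh : φ h = h := by
      rw [hh, map_pow, hk, ← pow_mul]
      apply pow_eq_pow_iff_modEq.mpr
      rw [hgord]
      have hmm : k * 2 ^ (n - 2) ≡ 1 * 2 ^ (n - 2) [MOD 4 * 2 ^ (n - 2)] :=
        Nat.ModEq.mul_right' _ (show k % 4 = 1 % 4 by omega)
      have hpow : 4 * 2 ^ (n - 2) = 2 ^ n := by
        have : 2 ^ n = 2 ^ 2 * 2 ^ (n - 2) := by
          rw [← pow_add]; congr 1; omega
        omega
      rw [hpow, one_mul] at hmm
      exact hmm
    -- fixed subgroup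
    let H : Subgroup P :=
      { carrier := {p | φ p = p}
        mul_mem' := by intro a b ha hb; simp only [Set.mem_setOf_eq] at *
                       rw [map_mul, ha, hb]
        one_mem' := map_one φ
        inv_mem' := by intro a ha; simp only [Set.mem_setOf_eq] at *
                       rw [map_inv, ha] }
    have hle : Subgroup.zpowers h ≤ H := by
      intro p hp
      obtain ⟨m, rfl⟩ := hp
      show φ (h ^ m) = h ^ m
      rw [map_zpow, hfixh]
    have hcardH : Nat.card H ≤ 2 := by
      have : Nat.card H = Nat.card {p : P // φ p = p} :=
        Nat.card_congr (Equiv.subtypeEquivRight (fun p => Iff.rfl))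
      omega
    have h4 : (4:ℕ) ≤ Nat.card H := by
      have := Subgroup.card_le_of_le hle
      rwa [Nat.card_zpowers, hordh] at this
    omega
  -- now k ≡ 3 mod 4, derive 2^(n-1) ∣ k + 1
  have hdvd : 2 ^ n ∣ k * k - 1 := (Nat.modEq_iff_dvd' hk1).mp hmod.symm
  obtain ⟨j, hj⟩ : ∃ j, k = 4 * j + 3 := ⟨k / 4, by omega⟩
  have hfac : k * k - 1 = 2 * ((2 * j + 1) * (k + 1)) := by
    subst hj; ring_nf; omega
  have hdvd2 : 2 ^ (n - 1) ∣ (2 * j + 1) * (k + 1) := by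
    have h1 : 2 ^ n = 2 * 2 ^ (n - 1) := by
      rw [← pow_succ']; congr 1; omega
    rw [hfac, h1] at hdvd
    exact (mul_dvd_mul_iff_left (by norm_num : (2:ℕ) ≠ 0)).mp hdvd
  have hcop : Nat.Coprime (2 ^ (n - 1)) (2 * j + 1) := by
    apply Nat.Coprime.pow_left
    exact (Nat.Prime.coprime_iff_not_dvd Nat.prime_two).mpr (by omega)
  have hdvd3 : 2 ^ (n - 1) ∣ k + 1 := hcop.dvd_of_dvd_mul_left hdvd2
  obtain ⟨t, ht⟩ := hdvd3
  have hpos : 0 < 2 ^ (n - 1) := Nat.pow_pos (by omega)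
  have hposn : 0 < 2 ^ n := Nat.pow_pos (by omega)
  have h2n : 2 ^ n = 2 ^ (n - 1) * 2 := by
    rw [← pow_succ]; congr 1; omega
  rcases Nat.even_or_odd t with ⟨s, hs⟩ | ⟨s, hs⟩
  · left
    rw [hk]
    apply pow_eq_pow_iff_modEq.mpr
    rw [hgord]
    have heq : k + 1 = 2 ^ n * s := by rw [ht, hs, h2n]; ring
    apply Nat.ModEq.add_right_cancel' 1
    have h1 : 2 ^ n - 1 + 1 = 2 ^ n := by omega
    rw [heq, h1]
    calc 2 ^ n * s ≡ 0 [MOD 2 ^ n] := (Nat.modEq_zero_iff_dvd).mpr ⟨s, rfl⟩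
      _ ≡ 2 ^ n [MOD 2 ^ n] := ((Nat.modEq_zero_iff_dvd).mpr dvd_rfl).symm
  · right
    rw [hk]
    apply pow_eq_pow_iff_modEq.mpr
    rw [hgord]
    have heq : k + 1 = 2 ^ n * s + 2 ^ (n - 1) := by
      rw [ht, hs, h2n]; ring
    apply Nat.ModEq.add_right_cancel' 1
    have h1 : 2 ^ (n - 1) - 1 + 1 = 2 ^ (n - 1) := by omega
    rw [heq, h1]
    calc 2 ^ n * s + 2 ^ (n - 1)
        ≡ 0 + 2 ^ (n - 1) [MOD 2 ^ n] :=
          Nat.ModEq.add_right _ ((Nat.modEq_zero_iff_dvd).mpr ⟨s, rfl⟩)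
      _ = 2 ^ (n - 1) := by omega
end

section
/- Suppose C₂ acts by automorphisms on a finite abelian 2-group P with |P^{C₂}| ≤ 2 and P not cyclic. Then P is isomorphic to C_{2ⁿ} × C₂ for some n ≥ 1. In particular, the subgroup of P generated by elements of order 2 has rank at most 2. -/
open Pointwise

universe u

theorem two_group_cyclic_aux : ∀ (n : ℕ) (K : Type u) [CommGroup K] [Finite K],
    IsPGroup 2 K → Nat.card K = n → Nat.card {x : K // x * x = 1} ≤ 2 → IsCyclic K := by
  intro n
  induction n using Nat.strong_induction_on with
  | _ n IH =>
  intro K _ _ hpg hn h2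
  haveI : Fact (Nat.Prime 2) := ⟨Nat.prime_two⟩
  by_cases hsmall : Nat.card K ≤ 2
  · have h0 : Nat.card K ≠ 0 := Nat.card_pos.ne'
    rcases (by omega : Nat.card K = 1 ∨ Nat.card K = 2) with h | h
    · haveI := (Nat.card_eq_one_iff_unique.mp h).1
      exact isCyclic_of_subsingleton
    · exact isCyclic_of_prime_card (p := 2) h
  · push_neg at hsmall
    set sq : K →* K := powMonoidHom 2 with hsq
    have hker : ∀ x : K, x ∈ sq.ker ↔ x * x = 1 := by
      intro x
      simp [hsq, MonoidHom.mem_ker, powMonoidHom, pow_two]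
    have hkcard : Nat.card sq.ker ≤ 2 := by
      refine le_trans (Nat.card_le_card_of_injective
        (fun x : sq.ker => (⟨x.1, (hker x.1).1 x.2⟩ : {x : K // x * x = 1})) ?_) h2
      intro a b hab
      exact Subtype.ext (by simpa using congrArg Subtype.val hab)
    -- card K = 2 ^ m with m ≥ 1, so Cauchy gives an element of order 2
    haveI : Fintype K := Fintype.ofFinite K
    obtain ⟨m, hm⟩ := IsPGroup.iff_card.mp hpg
    have hmne : m ≠ 0 := by
      rintro rfl
      omega
    have hdvdK : (2:ℕ) ∣ Fintype.card K := by
      rw [← Nat.card_eq_fintype_card, hm]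
      exact dvd_pow_self 2 hmne
    obtain ⟨τ, hτ⟩ := exists_prime_orderOf_dvd_card 2 hdvdK
    have hτker : τ ∈ sq.ker := by
      rw [hker, ← pow_two, ← hτ]
      exact pow_orderOf_eq_one τ
    have hτ1 : τ ≠ 1 := by
      intro h; rw [h, orderOf_one] at hτ; omega
    have hker2 : Nat.card sq.ker = 2 := by
      have : 1 < Nat.card sq.ker := by
        rw [Subgroup.one_lt_card_iff_ne_bot]
        intro hbot
        exact hτ1 ((Subgroup.eq_bot_iff_forall _).mp hbot τ hτker)
      omega
    have hsplit : Nat.card K = Nat.card sq.range * 2 := by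
      rw [Subgroup.card_eq_card_quotient_mul_card_subgroup sq.ker, hker2,
        Nat.card_congr (QuotientGroup.quotientKerEquivRange sq).toEquiv]
    have hrlt : Nat.card sq.range < n := by omega
    have hr2 : Nat.card {x : sq.range // x * x = 1} ≤ 2 := by
      refine le_trans (Nat.card_le_card_of_injective
        (fun x : {x : sq.range // x * x = 1} =>
          (⟨x.1.1, by
            have := congrArg (Subtype.val) x.2
            simpa using this⟩ : {x : K // x * x = 1})) ?_) h2
      intro a b hab
      exact Subtype.ext (Subtype.ext (by simpa using congrArg Subtype.val hab))
    have hrc : IsCyclic sq.range :=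
      IH _ hrlt sq.range (hpg.to_subgroup _) rfl hr2
    obtain ⟨y, hy⟩ := hrc.exists_generator
    have hyord : orderOf y = Nat.card sq.range := orderOf_eq_card_of_forall_mem_zpowers hy
    obtain ⟨x, hx⟩ := MonoidHom.mem_range.mp y.2
    have hxy : x ^ 2 = (y : K) := hx
    obtain ⟨k, hk⟩ := hpg x
    obtain ⟨m', -, hm'⟩ := (Nat.dvd_prime_pow Nat.prime_two).mp (orderOf_dvd_of_pow_eq_one hk)
    have hyval : orderOf (y : K) = orderOf y := Subgroup.orderOf_coe y
    rcases Nat.eq_zero_or_pos m' with hm0 | hm1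
    · exfalso
      rw [hm0, pow_zero] at hm'
      have hx1 : x = 1 := orderOf_eq_one_iff.mp hm'
      have : orderOf (y : K) = 1 := by
        rw [← hxy, hx1, one_pow, orderOf_one]
      rw [hyval, hyord] at this
      omega
    · have hgcd : Nat.gcd (orderOf x) 2 = 2 :=
        Nat.gcd_eq_right (hm' ▸ dvd_pow_self 2 (by omega))
      have hord2 : orderOf (x ^ 2) = orderOf x / 2 := by
        rw [orderOf_pow' x (two_ne_zero), hgcd]
      have hdvd : 2 ∣ orderOf x := hm' ▸ dvd_pow_self 2 (by omega)
      have : orderOf x = Nat.card K := by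
        rw [hxy, hyval, hyord] at hord2
        omega
      exact isCyclic_of_orderOf_eq_card x this

/-- If `C₂` acts by automorphisms on a finite abelian `2`-group `P` which is not
cyclic and has at most two fixed points, then `P ≅ C_{2^n} × C₂` for some `n ≥ 1`;
in particular the subgroup generated by the elements of order `2` has rank at
most `2`, i.e. at most `4` elements of order dividing `2`. -/
theorem c2_action_on_noncyclic_two_group (P : Type*) [CommGroup P] [Finite P]
    (hP : IsPGroup 2 P)
    (φ : P ≃* P) (hinvol : ∀ p : P, φ (φ p) = p)
    (hfix : Nat.card {p : P // φ p = p} ≤ 2)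
    (hnc : ¬IsCyclic P) :
    (∃ n : ℕ, 1 ≤ n ∧
      Nonempty (P ≃* (Multiplicative (ZMod (2 ^ n)) × Multiplicative (ZMod 2)))) ∧
    Nat.card {p : P // p * p = 1} ≤ 4 := by
  haveI : Fact (Nat.Prime 2) := ⟨Nat.prime_two⟩
  set N : P →* P := (MonoidHom.id P) * φ.toMonoidHom with hN
  have hNapp : ∀ p, N p = p * φ p := fun p => rfl
  set K : Subgroup P := N.ker with hKdef
  have hKmem : ∀ p : P, p ∈ K ↔ p * φ p = 1 := fun p => Iff.rfl
  have hKinv : ∀ p ∈ K, φ p = p⁻¹ := by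
    intro p hp
    have h : φ p * p = 1 := by rw [mul_comm]; exact (hKmem p).mp hp
    exact eq_inv_of_mul_eq_one_left h
  -- range of N consists of fixed points
  have hrange : ∀ q ∈ N.range, φ q = q := by
    rintro q ⟨p, rfl⟩
    rw [hNapp, map_mul, hinvol, mul_comm]
  -- index of K is at most 2
  have hindex : K.index ≤ 2 := by
    have h1 : K.index = Nat.card N.range := by
      rw [Subgroup.index]
      exact Nat.card_congr (QuotientGroup.quotientKerEquivRange N).toEquiv
    rw [h1]
    refine le_trans (Nat.card_le_card_of_injective
      (fun q : N.range => (⟨q.1, hrange q.1 q.2⟩ : {p : P // φ p = p})) ?_) hfix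
    intro a b hab
    exact Subtype.ext (by simpa using congrArg Subtype.val hab)
  -- square-one elements of K are fixed points
  have hfixK : Nat.card {x : K // x * x = 1} ≤ 2 := by
    refine le_trans (Nat.card_le_card_of_injective
      (fun x : {x : K // x * x = 1} =>
        (⟨x.1.1, by
          have hx : (x.1 : P) * x.1 = 1 := by
            have := congrArg Subtype.val x.2
            simpa using this
          have hinv : (x.1 : P)⁻¹ = x.1 := inv_eq_of_mul_eq_one_right hx
          rw [hKinv x.1.1 x.1.2, hinv]⟩ : {p : P // φ p = p})) ?_) hfix
    intro a b hab
    exact Subtype.ext (Subtype.ext (by simpa using congrArg Subtype.val hab))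
  have hKcyc : IsCyclic K := two_group_cyclic_aux _ K (hP.to_subgroup K) rfl hfixK
  -- there is an involution outside K
  obtain ⟨t, ht2, htK⟩ : ∃ t : P, t * t = 1 ∧ t ∉ K := by
    by_contra hcon
    push_neg at hcon
    apply hnc
    refine two_group_cyclic_aux _ P hP rfl ?_
    refine le_trans (Nat.card_le_card_of_injective
      (fun x : {p : P // p * p = 1} =>
        (⟨x.1, by
          have hinv : (x.1 : P)⁻¹ = x.1 := inv_eq_of_mul_eq_one_right x.2
          rw [hKinv x.1 (hcon x.1 x.2), hinv]⟩ : {p : P // φ p = p})) ?_) hfix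
    intro a b hab
    exact Subtype.ext (by simpa using congrArg Subtype.val hab)
  have ht1 : t ≠ 1 := fun h => htK (h ▸ K.one_mem)
  have htord : orderOf t = 2 := orderOf_eq_prime (by rw [pow_two]; exact ht2) ht1
  -- index is exactly 2
  have hKne : K ≠ ⊤ := fun h => htK (h ▸ Subgroup.mem_top t)
  have hindex2 : K.index = 2 := by
    have h0 : K.index ≠ 0 := Subgroup.index_ne_zero_of_finite
    have h1 : K.index ≠ 1 := fun h => hKne (Subgroup.index_eq_one.mp h)
    omega
  have hcardP : Nat.card P = Nat.card K * 2 := by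
    rw [← Subgroup.card_mul_index K, hindex2]
  -- card K = 2 ^ n with n ≥ 1
  obtain ⟨n, hn⟩ := IsPGroup.iff_card.mp (hP.to_subgroup K)
  have hn1 : 1 ≤ n := by
    by_contra hcon
    apply hnc
    have : Nat.card P = 2 := by
      rw [hcardP, hn]
      interval_cases n
      · rfl
    exact isCyclic_of_prime_card (p := 2) this
  -- the subgroup generated by t
  set T : Subgroup P := Subgroup.zpowers t with hT
  have hcardT : Nat.card T = 2 := by rw [hT, Nat.card_zpowers, htord]
  have htT : t ∈ T := Subgroup.mem_zpowers t
  have hTmem : ∀ s ∈ T, s = 1 ∨ s = t := by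
    rintro s ⟨z, rfl⟩
    have ht2' : t ^ (2 : ℤ) = 1 := by
      rw [zpow_two]; exact ht2
    rcases Int.even_or_odd z with ⟨c, hc⟩ | ⟨c, hc⟩
    · left
      show t ^ z = 1
      rw [hc, ← two_mul, zpow_mul, ht2', one_zpow]
    · right
      show t ^ z = t
      rw [hc, zpow_add, zpow_mul, ht2', one_zpow, one_mul, zpow_one]
  have hTcyc : IsCyclic T := by
    refine isCyclic_of_orderOf_eq_card (⟨t, htT⟩ : T) ?_
    rw [hcardT, ← htord]
    exact (Subgroup.orderOf_coe (⟨t, htT⟩ : T)).symm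
  -- the multiplication map K × T → P is a bijective homomorphism
  set m : K × T →* P :=
    (K.subtype.comp (MonoidHom.fst K T)) * (T.subtype.comp (MonoidHom.snd K T)) with hm
  have hmapp : ∀ x : K × T, m x = (x.1 : P) * (x.2 : P) := fun x => rfl
  have hminj : Function.Injective m := by
    rw [injective_iff_map_eq_one]
    rintro ⟨k, s⟩ hks
    rw [hmapp] at hks
    have hsK : (s : P) ∈ K := by
      have : (s : P) = (k : P)⁻¹ := eq_inv_of_mul_eq_one_right hks
      rw [this]; exact K.inv_mem k.2
    have hs1 : (s : P) = 1 := by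
      rcases hTmem s s.2 with h | h
      · exact h
      · exact absurd (h ▸ hsK) htK
    have hk1 : (k : P) = 1 := by
      rw [hs1, mul_one] at hks; exact hks
    exact Prod.ext (Subtype.ext hk1) (Subtype.ext hs1)
  have hmcard : Nat.card (K × T) = Nat.card P := by
    rw [Nat.card_prod, hcardT, hcardP]
  have hmbij : Function.Bijective m :=
    (Nat.bijective_iff_injective_and_card m).mpr ⟨hminj, hmcard⟩
  set e : K × T ≃* P := MulEquiv.ofBijective m hmbij with he
  -- assemble the isomorphism
  have eK : Multiplicative (ZMod (2 ^ n)) ≃* K := by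
    rw [← hn]; exact zmodCyclicMulEquiv hKcyc
  have eT : Multiplicative (ZMod 2) ≃* T := by
    have := zmodCyclicMulEquiv hTcyc; rw [hcardT] at this; exact this
  refine ⟨⟨n, hn1, ⟨e.symm.trans (MulEquiv.prodCongr eK.symm eT.symm)⟩⟩, ?_⟩
  -- counting square-one elements
  have hBle : Nat.card {s : T // s * s = 1} ≤ 2 := by
    rw [← hcardT]
    exact Nat.card_le_card_of_injective Subtype.val Subtype.val_injective
  have hinj : Function.Injective (fun p : {p : P // p * p = 1} =>
      ((⟨(e.symm p.1).1, by
          have h : e.symm p.1 * e.symm p.1 = 1 := by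
            rw [← map_mul, p.2, map_one]
          exact congrArg Prod.fst h⟩,
        ⟨(e.symm p.1).2, by
          have h : e.symm p.1 * e.symm p.1 = 1 := by
            rw [← map_mul, p.2, map_one]
          exact congrArg Prod.snd h⟩) :
        {x : K // x * x = 1} × {s : T // s * s = 1})) := by
    intro a b hab
    have h1 := congrArg (Subtype.val ∘ Prod.fst) hab
    have h2 := congrArg (Subtype.val ∘ Prod.snd) hab
    simp only [Function.comp] at h1 h2
    have : e.symm a.1 = e.symm b.1 := Prod.ext (by simpa using h1) (by simpa using h2)
    exact Subtype.ext (e.symm.injective this)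
  calc Nat.card {p : P // p * p = 1}
      ≤ Nat.card ({x : K // x * x = 1} × {s : T // s * s = 1}) :=
        Nat.card_le_card_of_injective _ hinj
    _ = Nat.card {x : K // x * x = 1} * Nat.card {s : T // s * s = 1} := Nat.card_prod _ _
    _ ≤ 2 * 2 := Nat.mul_le_mul hfixK hBle
    _ = 4 := rfl
end

section
/- Let G be a finite group whose center Z(G) has order greater than 2. Then the faithful part ∂B^×(G) of the unit group of the Burnside ring is trivial. In particular, if G is abelian with |G| > 2, then ∂B^×(G) is trivial. -/
open Pointwise

/-- Mark of the transitive `G`-set `G ⧸ K` at the subgroup `H`: the number of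
`H`-fixed points of `G ⧸ K`. -/
noncomputable def burnsideMark (G : Type*) [Group G] (K H : Subgroup G) : ℤ :=
  Nat.card {x : G ⧸ K // ∀ h ∈ H, h • x = x}

/-- The Burnside ring of `G`, realized inside the ghost ring `Subgroup G → ℤ`
as the subring generated by the marks of the transitive `G`-sets. -/
noncomputable def BurnsideRing (G : Type*) [Group G] : Subring (Subgroup G → ℤ) :=
  Subring.closure (Set.range (burnsideMark G))

/-- Ghost coordinates of a unit of the Burnside ring. -/
noncomputable def ghost {G : Type*} [Group G] (u : (BurnsideRing G)ˣ) : Subgroup G → ℤ :=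
  (u.val : Subgroup G → ℤ)
/-- A unit of the Burnside ring is faithful iff its mark is `1` at every subgroup
containing a nontrivial normal subgroup of `G`. -/
def IsFaithfulUnit {G : Type*} [Group G] (u : (BurnsideRing G)ˣ) : Prop :=
  ∀ K : Subgroup G, (∃ M : Subgroup G, M.Normal ∧ M ≠ ⊥ ∧ M ≤ K) → ghost u K = 1

section Aux

universe u
variable (G : Type u) [Group G]

instance : MulAction G PEmpty.{u+1} where
  smul _ x := x.elim
  one_smul x := x.elim
  mul_smul _ _ x := x.elim

/-- Mark vector of a `G`-set `X`. -/
noncomputable def markVec (X : Type u) [MulAction G X] : Subgroup G → ℤ :=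
  fun K => (Nat.card {x : X // ∀ h ∈ K, h • x = x} : ℤ)

/-- `f` is the ghost vector of a virtual finite `G`-set. -/
def IsVirtual (f : Subgroup G → ℤ) : Prop :=
  ∃ (X : Type u) (mx : MulAction G X) (Y : Type u) (my : MulAction G Y),
    Finite X ∧ Finite Y ∧ f = @markVec G _ X mx - @markVec G _ Y my

variable {G}

lemma fixed_iff_le_stabilizer {X : Type u} [MulAction G X] (K : Subgroup G) (x : X) :
    (∀ h ∈ K, h • x = x) ↔ K ≤ MulAction.stabilizer G x := Iff.rfl

lemma markVec_sum (X Y : Type u) [MulAction G X] [MulAction G Y] [Finite X] [Finite Y] :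
    markVec G (X ⊕ Y) = markVec G X + markVec G Y := by
  funext K
  have e : {c : X ⊕ Y // ∀ h ∈ K, h • c = c} ≃
      {x : X // ∀ h ∈ K, h • x = x} ⊕ {y : Y // ∀ h ∈ K, h • y = y} :=
    Equiv.subtypeSum.trans
      (Equiv.sumCongr
        (Equiv.subtypeEquivRight (fun x => by
          simp only [Sum.smul_inl, Sum.inl.injEq]))
        (Equiv.subtypeEquivRight (fun y => by
          simp only [Sum.smul_inr, Sum.inr.injEq])))
  simp only [markVec, Pi.add_apply, Nat.card_congr e, Nat.card_sum]
  push_cast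
  ring

lemma markVec_prod (X Y : Type u) [MulAction G X] [MulAction G Y] [Finite X] [Finite Y] :
    markVec G (X × Y) = markVec G X * markVec G Y := by
  funext K
  have e : {c : X × Y // ∀ h ∈ K, h • c = c} ≃
      {x : X // ∀ h ∈ K, h • x = x} × {y : Y // ∀ h ∈ K, h • y = y} :=
    (Equiv.subtypeEquivRight (fun c => by
      constructor
      · intro hc
        exact ⟨fun h hh => congrArg Prod.fst (hc h hh),
               fun h hh => congrArg Prod.snd (hc h hh)⟩
      · rintro ⟨h1, h2⟩ h hh
        exact Prod.ext (h1 h hh) (h2 h hh))).trans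
      (Equiv.subtypeProdEquivProd)
  simp only [markVec, Pi.mul_apply, Nat.card_congr e, Nat.card_prod]
  push_cast
  ring

lemma markVec_punit : markVec G PUnit.{u+1} = 1 := by
  funext K
  have : Nat.card {x : PUnit.{u+1} // ∀ h ∈ K, h • x = x} = 1 := by
    rw [Nat.card_eq_one_iff_unique]
    constructor
    · constructor
      rintro ⟨⟨⟩, _⟩ ⟨⟨⟩, _⟩
      rfl
    · exact ⟨⟨PUnit.unit, fun h _ => Subsingleton.elim _ _⟩⟩
  simp [markVec, this]

lemma markVec_pempty : markVec G PEmpty.{u+1} = 0 := by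
  funext K
  simp [markVec, Nat.card_of_isEmpty]

lemma isVirtual_of_mem_closure [Finite G] {f : Subgroup G → ℤ} (hf : f ∈ BurnsideRing G) :
    IsVirtual G f := by
  rw [BurnsideRing] at hf
  induction hf using Subring.closure_induction with
  | mem f hf =>
    obtain ⟨K, rfl⟩ := hf
    haveI : Finite (G ⧸ K) := Quotient.finite _
    exact ⟨G ⧸ K, inferInstance, PEmpty, inferInstance, inferInstance, inferInstance, by
      rw [markVec_pempty, sub_zero]; rfl⟩
  | one =>
    exact ⟨PUnit, inferInstance, PEmpty, inferInstance, inferInstance, inferInstance, by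
      rw [markVec_pempty, markVec_punit]; ring⟩
  | zero =>
    exact ⟨PEmpty, inferInstance, PEmpty, inferInstance, inferInstance, inferInstance, by
      rw [markVec_pempty]; ring⟩
  | add f g _ _ hf hg =>
    obtain ⟨X, mx, Y, my, fX, fY, rfl⟩ := hf
    obtain ⟨X', mx', Y', my', fX', fY', rfl⟩ := hg
    exact ⟨X ⊕ X', inferInstance, Y ⊕ Y', inferInstance, inferInstance, inferInstance, by
      rw [markVec_sum, markVec_sum]; ring⟩
  | neg f _ hf =>
    obtain ⟨X, mx, Y, my, fX, fY, rfl⟩ := hf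
    exact ⟨Y, my, X, mx, fY, fX, by ring⟩
  | mul f g _ _ hf hg =>
    obtain ⟨X, mx, Y, my, fX, fY, rfl⟩ := hf
    obtain ⟨X', mx', Y', my', fX', fY', rfl⟩ := hg
    exact ⟨(X × X') ⊕ (Y × Y'), inferInstance, (X × Y') ⊕ (Y × X'), inferInstance,
      inferInstance, inferInstance, by
      rw [markVec_sum, markVec_sum, markVec_prod, markVec_prod, markVec_prod, markVec_prod]
      ring⟩

end Aux

section Congruence

universe u
variable {G : Type u} [Group G] [Finite G]

open MulAction Subgroup

omit [Finite G] in
/-- The key congruence (Burnside's lemma): for any finite `G`-set `X` and subgroup `K`,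
the sum over central elements `z` of the marks at `K ⊔ ⟨z⟩` is divisible by the order
of the center. -/
lemma markVec_center_congruence [Fintype (Subgroup.center G)]
    (X : Type u) [mX : MulAction G X] [Finite X] (K : Subgroup G) :
    (Nat.card (Subgroup.center G) : ℤ) ∣
      ∑ z : Subgroup.center G, markVec G X (K ⊔ Subgroup.zpowers (z : G)) := by
  classical
  set S := {x : X // ∀ h ∈ K, h • x = x} with hS
  letI actS : MulAction (Subgroup.center G) S :=
    { smul := fun z x => ⟨(z : G) • x.1, by
        intro h hh
        have hc : (z : G) * h = h * (z : G) :=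
          ((Subgroup.mem_center_iff.mp z.2) h).symm
        calc h • (z : G) • x.1 = (h * (z : G)) • x.1 := (mul_smul _ _ _).symm
          _ = ((z : G) * h) • x.1 := by rw [hc]
          _ = (z : G) • h • x.1 := mul_smul _ _ _
          _ = (z : G) • x.1 := by rw [x.2 h hh]⟩
      one_smul := fun x => Subtype.ext (by show ((1 : Subgroup.center G) : G) • x.1 = x.1; simp)
      mul_smul := fun z w x => Subtype.ext (by
        show ((z * w : Subgroup.center G) : G) • x.1 = (z : G) • (w : G) • x.1
        rw [Subgroup.coe_mul, mul_smul]) }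
  letI : Fintype S := Fintype.ofFinite _
  letI : ∀ z : Subgroup.center G, Fintype (fixedBy S z) := fun z => Fintype.ofFinite _
  letI : Fintype (Quotient (orbitRel (Subgroup.center G) S)) := Fintype.ofFinite _
  have burn := MulAction.sum_card_fixedBy_eq_card_orbits_mul_card_group (Subgroup.center G) S
  have hcard : ∀ z : Subgroup.center G,
      (Fintype.card (fixedBy S z) : ℤ) = markVec G X (K ⊔ Subgroup.zpowers (z : G)) := by
    intro z
    have e : fixedBy S z ≃ {x : X // ∀ h ∈ K ⊔ Subgroup.zpowers (z : G), h • x = x} := by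
      refine { toFun := fun s => ⟨s.1.1, ?_⟩, invFun := fun x => ⟨⟨x.1, ?_⟩, ?_⟩,
               left_inv := fun s => Subtype.ext (Subtype.ext rfl),
               right_inv := fun x => Subtype.ext rfl }
      · rw [fixed_iff_le_stabilizer]
        refine sup_le ((fixed_iff_le_stabilizer K _).mp s.1.2) (Subgroup.zpowers_le.mpr ?_)
        have hz : z • s.1 = s.1 := s.2
        exact congrArg Subtype.val hz
      · intro h hh
        exact x.2 h (le_sup_left (α := Subgroup G) hh)
      · show z • (⟨x.1, _⟩ : S) = _
        refine Subtype.ext ?_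
        show (z : G) • x.1 = x.1
        exact x.2 (z : G) (le_sup_right (α := Subgroup G)
          (Subgroup.mem_zpowers (z : G)))
    rw [markVec, ← Nat.card_eq_fintype_card, Nat.card_congr e]
  calc (Nat.card (Subgroup.center G) : ℤ)
      ∣ ((Fintype.card (Quotient (orbitRel (Subgroup.center G) S)) *
          Fintype.card (Subgroup.center G) : ℕ) : ℤ) := by
        rw [Nat.card_eq_fintype_card]
        exact Int.natCast_dvd_natCast.mpr (dvd_mul_left _ _)
    _ = ∑ z : Subgroup.center G, markVec G X (K ⊔ Subgroup.zpowers (z : G)) := by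
        rw [← burn]
        push_cast
        exact Finset.sum_congr rfl (fun z _ => hcard z)

lemma ring_center_congruence [Fintype (Subgroup.center G)] {f : Subgroup G → ℤ}
    (hf : f ∈ BurnsideRing G) (K : Subgroup G) :
    (Nat.card (Subgroup.center G) : ℤ) ∣
      ∑ z : Subgroup.center G, f (K ⊔ Subgroup.zpowers (z : G)) := by
  classical
  obtain ⟨X, mx, Y, my, fX, fY, rfl⟩ := isVirtual_of_mem_closure hf
  simp only [Pi.sub_apply, Finset.sum_sub_distrib]
  exact dvd_sub (markVec_center_congruence X K) (markVec_center_congruence Y K)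

end Congruence

/-- If the center of a finite group `G` has order greater than `2`, then the
faithful part of `B^×(G)` is trivial; in particular this holds for an abelian
group of order greater than `2`. -/
theorem faithful_units_trivial_of_large_center (G : Type*) [Group G] [Finite G] :
    (2 < Nat.card (Subgroup.center G) →
      ∀ u : (BurnsideRing G)ˣ, IsFaithfulUnit u → u = 1) ∧
    ((∀ a b : G, a * b = b * a) → 2 < Nat.card G →
      ∀ u : (BurnsideRing G)ˣ, IsFaithfulUnit u → u = 1) := by
  classical
  have main : 2 < Nat.card (Subgroup.center G) →
      ∀ u : (BurnsideRing G)ˣ, IsFaithfulUnit u → u = 1 := by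
    intro hbig u hu
    letI : Fintype (Subgroup.center G) := Fintype.ofFinite _
    set n : ℕ := Nat.card (Subgroup.center G) with hn
    -- every ghost coordinate is ±1
    have hpm : ∀ K : Subgroup G, ghost u K = 1 ∨ ghost u K = -1 := by
      intro K
      have h1 : (u.val : Subgroup G → ℤ) * ((u⁻¹).val : Subgroup G → ℤ) = 1 :=
        congrArg Subtype.val u.mul_inv
      have h2 : ghost u K * ((u⁻¹).val : Subgroup G → ℤ) K = 1 := congrFun h1 K
      exact Int.isUnit_iff.mp (IsUnit.of_mul_eq_one _ h2)
    -- key: each coordinate is 1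
    have key : ∀ K : Subgroup G, ghost u K = 1 := by
      intro K
      rcases hpm K with h | h
      · exact h
      exfalso
      have hdvd := ring_center_congruence (G := G) u.val.2 K
      have hsum : ∑ z : Subgroup.center G, ghost u (K ⊔ Subgroup.zpowers (z : G))
          = ((n - 1 : ℕ) : ℤ) + ghost u K := by
        rw [← Finset.sum_erase_add _ _ (Finset.mem_univ (1 : Subgroup.center G))]
        congr 1
        · rw [Finset.sum_congr rfl (fun z hz => ?_), Finset.sum_const,
            Finset.card_erase_of_mem (Finset.mem_univ _), Finset.card_univ, nsmul_eq_mul, mul_one,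
            ← Nat.card_eq_fintype_card]
          have hz1 : (z : G) ≠ 1 := by
            have := Finset.ne_of_mem_erase hz
            intro hcontra
            exact this (Subtype.ext hcontra)
          refine hu _ ⟨Subgroup.zpowers (z : G), ?_, ?_, le_sup_right⟩
          · constructor
            intro a ha g
            rcases Subgroup.mem_zpowers_iff.mp ha with ⟨k, rfl⟩
            have hc : (z : G) ^ k ∈ Subgroup.center G := zpow_mem z.2 k
            rw [Subgroup.mem_center_iff.mp hc g, mul_assoc, mul_inv_cancel, mul_one]
            exact Subgroup.zpow_mem_zpowers _ _
          · exact Subgroup.zpowers_ne_bot.mpr hz1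
        · show ghost u (K ⊔ Subgroup.zpowers ((1 : Subgroup.center G) : G)) = ghost u K
          rw [Subgroup.coe_one, Subgroup.zpowers_one_eq_bot, sup_bot_eq]
      have hdvd' : (n : ℤ) ∣ ((n - 1 : ℕ) : ℤ) + (-1) := by
        rw [← h, ← hsum]; exact hdvd
      have hge : 1 ≤ n := by omega
      have h2 : (n : ℤ) ∣ 2 := by
        have h3 := dvd_sub (dvd_refl (n : ℤ)) hdvd'
        rwa [show (n : ℤ) - (((n - 1 : ℕ) : ℤ) + (-1)) = 2 by
          push_cast [Nat.cast_sub hge]; ring] at h3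
      have h4 : (n : ℤ) ≤ 2 := Int.le_of_dvd (by norm_num) h2
      have h5 : n ≤ 2 := by exact_mod_cast h4
      omega
    have : u.val = 1 := Subtype.ext (funext key)
    exact Units.ext this
  refine ⟨main, ?_⟩
  intro hcomm hbig u hu
  apply main ?_ u hu
  have : Subgroup.center G = ⊤ := by
    rw [Subgroup.eq_top_iff']
    intro x
    rw [Subgroup.mem_center_iff]
    intro g
    exact hcomm g x
  rw [this, Subgroup.card_top]
  exact hbig
end

section
/- Let G be a pseudodihedral group (or abelian). If S is a normal subgroup of G, then G/S is isomorphic to a subgroup of G. Moreover, every pseudodihedral subgroup Y of G is isomorphic to a quotient of G. -/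
open Pointwise

/-- A pseudodihedral group: `C₂ ⋉ N` with `N` abelian of order `> 2`, cyclic Sylow
`2`-subgroup, and a complement of order `2` acting by inversion. -/
def IsPseudodihedral (G : Type*) [Group G] : Prop :=
  ∃ N : Subgroup G, (∀ a b : N, a * b = b * a) ∧ 2 < Nat.card N ∧ N.index = 2 ∧
    (∀ P : Sylow 2 N, IsCyclic (P : Subgroup N)) ∧
    ∃ x : G, x ∉ N ∧ x * x = 1 ∧ ∀ n ∈ N, x * n * x⁻¹ = n⁻¹

section Duality

open Function

/-- Precomposition with a monoid hom, as a monoid hom on character groups. -/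
@[simps] def precompHom {A B : Type*} [Monoid A] [Monoid B] (p : A →* B) :
    (B →* ℂˣ) →* (A →* ℂˣ) where
  toFun χ := χ.comp p
  map_one' := by ext; simp
  map_mul' χ₁ χ₂ := by ext; simp

lemma neZeroExp (A : Type*) [CommGroup A] [Finite A] :
    NeZero ((Monoid.exponent A : ℂ)) :=
  ⟨Nat.cast_ne_zero.mpr Monoid.exponent_ne_zero_of_finite⟩

/-- Every quotient of a finite abelian group embeds into the group. -/
lemma exists_injective_of_surjective {A Q : Type*} [CommGroup A] [Finite A] [CommGroup Q]
    (p : A →* Q) (hp : Surjective p) : ∃ j : Q →* A, Injective j := by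
  have : Finite Q := Finite.of_surjective p hp
  have := neZeroExp A
  have := neZeroExp Q
  obtain ⟨eA⟩ := CommGroup.monoidHom_mulEquiv_of_hasEnoughRootsOfUnity A ℂ
  obtain ⟨eQ⟩ := CommGroup.monoidHom_mulEquiv_of_hasEnoughRootsOfUnity Q ℂ
  refine ⟨(eA.toMonoidHom.comp (precompHom p)).comp eQ.symm.toMonoidHom, ?_⟩
  have hpre : Injective (precompHom p : (Q →* ℂˣ) →* (A →* ℂˣ)) := by
    intro χ₁ χ₂ h
    refine MonoidHom.ext fun b => ?_
    obtain ⟨a, rfl⟩ := hp b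
    exact DFunLike.congr_fun h a
  exact eA.injective.comp (hpre.comp eQ.symm.injective)

/-- Every subgroup of a finite abelian group is a quotient of the group. -/
lemma exists_surjective_onto_subgroup {A : Type*} [CommGroup A] [Finite A] (B : Subgroup A) :
    ∃ s : A →* B, Surjective s := by
  have := neZeroExp A
  have := neZeroExp (↥B)
  have := neZeroExp (A ⧸ B)
  obtain ⟨eA⟩ := CommGroup.monoidHom_mulEquiv_of_hasEnoughRootsOfUnity A ℂ
  obtain ⟨eB⟩ := CommGroup.monoidHom_mulEquiv_of_hasEnoughRootsOfUnity (↥B) ℂ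
  obtain ⟨eQ⟩ := CommGroup.monoidHom_mulEquiv_of_hasEnoughRootsOfUnity (A ⧸ B) ℂ
  have : Finite (A →* ℂˣ) := Finite.of_equiv A eA.symm.toEquiv
  have : Finite ((↥B) →* ℂˣ) := Finite.of_equiv (↥B) eB.symm.toEquiv
  set res : (A →* ℂˣ) →* ((↥B) →* ℂˣ) := precompHom B.subtype with hres
  have hu : Injective (precompHom (QuotientGroup.mk' B) : ((A ⧸ B) →* ℂˣ) →* (A →* ℂˣ)) := by
    intro χ₁ χ₂ h
    refine MonoidHom.ext fun q => ?_
    obtain ⟨a, rfl⟩ := QuotientGroup.mk'_surjective B q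
    exact DFunLike.congr_fun h a
  have hrange : (precompHom (QuotientGroup.mk' B) :
      ((A ⧸ B) →* ℂˣ) →* (A →* ℂˣ)).range = res.ker := by
    ext χ
    constructor
    · rintro ⟨χ', rfl⟩
      refine MonoidHom.ext fun b => ?_
      have hb1 : ((b : A) : A ⧸ B) = 1 := (QuotientGroup.eq_one_iff _).2 b.2
      show χ' (((b : A) : A ⧸ B)) = 1
      rw [hb1, map_one]
    · intro hχ
      have hB : B ≤ χ.ker := by
        intro b hb
        have := DFunLike.congr_fun hχ (⟨b, hb⟩ : B)
        simpa [res] using this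
      exact ⟨QuotientGroup.lift B χ hB, by ext a; simp⟩
  have hcardker : Nat.card res.ker = Nat.card (A ⧸ B) := by
    rw [← hrange]
    rw [Nat.card_congr (MonoidHom.ofInjective hu).toEquiv.symm]
    exact Nat.card_congr eQ.toEquiv
  have hcardrange : Nat.card res.range = Nat.card (↥B) := by
    have h1 : Nat.card (A →* ℂˣ) = Nat.card res.range * Nat.card res.ker := by
      rw [Subgroup.card_eq_card_quotient_mul_card_subgroup res.ker,
        Nat.card_congr (QuotientGroup.quotientKerEquivRange res).toEquiv]
    have h2 : Nat.card A = Nat.card (A ⧸ B) * Nat.card (↥B) :=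
      Subgroup.card_eq_card_quotient_mul_card_subgroup B
    have h3 : Nat.card (A →* ℂˣ) = Nat.card A := Nat.card_congr eA.toEquiv
    have hpos : 0 < Nat.card (A ⧸ B) := Nat.card_pos
    rw [hcardker] at h1
    rw [h3, h2, mul_comm (Nat.card res.range)] at h1
    exact Nat.eq_of_mul_eq_mul_left hpos h1.symm
  have hres_surj : Surjective res := by
    rw [← MonoidHom.range_eq_top]
    refine Subgroup.eq_top_of_card_eq _ ?_
    rw [hcardrange]
    exact (Nat.card_congr eB.toEquiv).symm
  exact ⟨eB.toMonoidHom.comp (res.comp eA.symm.toMonoidHom),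
    eB.surjective.comp (hres_surj.comp eA.symm.surjective)⟩

end Duality

section Ext

open Function

variable {G : Type*} [Group G] {N : Subgroup G} {x : G}

lemma mem_of_not_mem_mul (hidx : N.index = 2) {a b : G} (ha : a ∉ N) (hb : b ∉ N) :
    a * b ∈ N :=
  (Subgroup.mul_mem_iff_of_index_two hidx).2 (iff_of_false ha hb)

lemma not_mem_mul_left (hidx : N.index = 2) {a b : G} (ha : a ∈ N) (hb : b ∉ N) :
    a * b ∉ N := fun h =>
  hb (((Subgroup.mul_mem_iff_of_index_two hidx).1 h).1 ha)

lemma not_mem_mul_right (hidx : N.index = 2) {a b : G} (ha : a ∉ N) (hb : b ∈ N) :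
    a * b ∉ N := fun h =>
  ha (((Subgroup.mul_mem_iff_of_index_two hidx).1 h).2 hb)

/-- Elements outside `N` conjugate elements of `N` to their inverses. -/
lemma conj_eq_inv_of_not_mem (hcomm : ∀ a b : G, a ∈ N → b ∈ N → a * b = b * a)
    (hidx : N.index = 2) (hx : x ∉ N) (hxx : x * x = 1)
    (hinv : ∀ n ∈ N, x * n * x⁻¹ = n⁻¹) {u : G} (hu : u ∉ N) {n : G} (hn : n ∈ N) :
    u * n * u⁻¹ = n⁻¹ := by
  set w := u * x with hw
  have hwN : w ∈ N := mem_of_not_mem_mul hidx hu hx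
  have hxinv : x⁻¹ = x := inv_eq_of_mul_eq_one_right hxx
  have hu' : u = w * x := by
    rw [hw, mul_assoc, hxx, mul_one]
  have h1 : x * n * x⁻¹ = n⁻¹ := hinv n hn
  calc u * n * u⁻¹ = w * (x * n * x⁻¹) * w⁻¹ := by
        rw [hu']; group
    _ = w * n⁻¹ * w⁻¹ := by rw [h1]
    _ = n⁻¹ * w * w⁻¹ := by rw [hcomm w n⁻¹ hwN (inv_mem hn)]
    _ = n⁻¹ := by rw [mul_assoc, mul_inv_cancel, mul_one]

/-- Elements outside `N` square to `1`. -/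
lemma sq_eq_one_of_not_mem (hcomm : ∀ a b : G, a ∈ N → b ∈ N → a * b = b * a)
    (hidx : N.index = 2) (hx : x ∉ N) (hxx : x * x = 1)
    (hinv : ∀ n ∈ N, x * n * x⁻¹ = n⁻¹) {u : G} (hu : u ∉ N) : u * u = 1 := by
  have h := conj_eq_inv_of_not_mem hcomm hidx hx hxx hinv hu
      (mem_of_not_mem_mul hidx hu hx) (n := u * x)
  have hxinv : x⁻¹ = x := inv_eq_of_mul_eq_one_right hxx
  have : u * (u * x) * u⁻¹ = x * u⁻¹ := by rw [h, mul_inv_rev, hxinv]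
  have h2 : u * (u * x) = x := by
    have := congrArg (· * u) this
    simpa [mul_assoc] using this
  calc u * u = (u * (u * x)) * x⁻¹ := by group
    _ = x * x⁻¹ := by rw [h2]
    _ = 1 := mul_inv_cancel x

variable {H : Type*} [Group H]

/-- Extension of a homomorphism `N →* H` to `G`, sending the nontrivial coset via `x ↦ y`. -/
lemma exists_ext_hom (hcomm : ∀ a b : G, a ∈ N → b ∈ N → a * b = b * a)
    (hidx : N.index = 2) (hx : x ∉ N) (hxx : x * x = 1)
    (hinv : ∀ n ∈ N, x * n * x⁻¹ = n⁻¹)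
    (φ : N →* H) {y : H}
    (hyy : y * y = 1) (hyinv : ∀ n : N, y * φ n * y⁻¹ = (φ n)⁻¹) :
    ∃ F : G →* H, (∀ g (hg : g ∈ N), F g = φ ⟨g, hg⟩) ∧
      (∀ g (hg : g ∉ N) (h' : g * x ∈ N), F g = φ ⟨g * x, h'⟩ * y) := by
  classical
  have hxinv : x⁻¹ = x := inv_eq_of_mul_eq_one_right hxx
  have hyinv' : y⁻¹ = y := inv_eq_of_mul_eq_one_right hyy
  have hswap : ∀ n : N, y * φ n = (φ n)⁻¹ * y := by
    intro n
    have := hyinv n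
    calc y * φ n = (y * φ n * y⁻¹) * y := by group
      _ = (φ n)⁻¹ * y := by rw [this]
  refine ⟨{ toFun := fun g => if h : g ∈ N then φ ⟨g, h⟩
              else φ ⟨g * x, mem_of_not_mem_mul hidx h hx⟩ * y,
            map_one' := ?_, map_mul' := ?_ }, ?_, ?_⟩
  · rw [dif_pos (one_mem N)]
    exact map_one φ
  · intro a b
    by_cases ha : a ∈ N <;> by_cases hb : b ∈ N
    · rw [dif_pos (mul_mem ha hb), dif_pos ha, dif_pos hb]
      exact map_mul φ ⟨a, ha⟩ ⟨b, hb⟩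
    · have hab : a * b ∉ N := not_mem_mul_left hidx ha hb
      rw [dif_neg hab, dif_pos ha, dif_neg hb]
      have he : (⟨a * b * x, mem_of_not_mem_mul hidx hab hx⟩ : N) =
          ⟨a, ha⟩ * ⟨b * x, mem_of_not_mem_mul hidx hb hx⟩ := by
        ext; simp [mul_assoc]
      rw [he, map_mul, mul_assoc]
    · have hab : a * b ∉ N := not_mem_mul_right hidx ha hb
      rw [dif_neg hab, dif_neg ha, dif_pos hb]
      have hbx : b * x = x * b⁻¹ := by
        have := hinv b hb
        calc b * x = x * (x⁻¹ * b * x) := by group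
          _ = x * (x * b * x⁻¹)⁻¹⁻¹ := by rw [hxinv]; group
          _ = x * b⁻¹ := by rw [this, inv_inv]
      have he : (⟨a * b * x, mem_of_not_mem_mul hidx hab hx⟩ : N) =
          ⟨a * x, mem_of_not_mem_mul hidx ha hx⟩ * (⟨b, hb⟩ : N)⁻¹ := by
        ext
        show a * b * x = (a * x) * b⁻¹
        rw [mul_assoc, hbx, ← mul_assoc]
      rw [he, map_mul, map_inv]
      calc φ ⟨a * x, _⟩ * (φ ⟨b, hb⟩)⁻¹ * y
          = φ ⟨a * x, _⟩ * ((φ ⟨b, hb⟩)⁻¹ * y) := by rw [mul_assoc]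
        _ = φ ⟨a * x, _⟩ * (y * φ ⟨b, hb⟩) := by rw [hswap]
        _ = φ ⟨a * x, _⟩ * y * φ ⟨b, hb⟩ := by rw [mul_assoc]
    · have hab : a * b ∈ N := mem_of_not_mem_mul hidx ha hb
      rw [dif_pos hab, dif_neg ha, dif_neg hb]
      have hbb : b * b = 1 := sq_eq_one_of_not_mem hcomm hidx hx hxx hinv hb
      have hbinv : b⁻¹ = b := inv_eq_of_mul_eq_one_right hbb
      have he : (⟨a * b, hab⟩ : N) =
          ⟨a * x, mem_of_not_mem_mul hidx ha hx⟩ *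
            (⟨b * x, mem_of_not_mem_mul hidx hb hx⟩ : N)⁻¹ := by
        ext
        show a * b = (a * x) * (b * x)⁻¹
        rw [mul_inv_rev, hxinv, hbinv, ← mul_assoc, mul_assoc a x x, hxx, mul_one]
      rw [he, map_mul, map_inv]
      calc φ ⟨a * x, _⟩ * (φ ⟨b * x, _⟩)⁻¹
          = φ ⟨a * x, _⟩ * (y * (φ ⟨b * x, _⟩ * y)) := by
            rw [← mul_assoc y, hswap, mul_assoc, hyy, mul_one]
        _ = (φ ⟨a * x, _⟩ * y) * (φ ⟨b * x, _⟩ * y) := by group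
  · intro g hg
    exact dif_pos hg
  · intro g hg h'
    simp only [MonoidHom.coe_mk, OneHom.coe_mk, dif_neg hg]

end Ext

/-- A pseudodihedral group is not abelian. -/
lemma IsPseudodihedral.not_comm {H : Type*} [Group H] (h : IsPseudodihedral H)
    (hc : ∀ a b : H, a * b = b * a) : False := by
  obtain ⟨M, hMc, hMcard, hMidx, hMsyl, z, hzM, hzz, hzinv⟩ := h
  -- every element of `M` is its own inverse
  have hsq : ∀ m : M, m * m = 1 := by
    intro m
    have h1 : z * (m : H) * z⁻¹ = (m : H)⁻¹ := hzinv m m.2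
    have h2 : z * (m : H) * z⁻¹ = (m : H) := by
      rw [hc z m, mul_assoc, mul_inv_cancel, mul_one]
    have h3 : (m : H) = (m : H)⁻¹ := h2.symm.trans h1
    exact Subtype.ext (mul_eq_one_iff_eq_inv.2 h3)
  -- `M` is a 2-group, so its unique Sylow 2-subgroup is `⊤`, hence `M` is cyclic
  have hp2 : IsPGroup 2 (⊤ : Subgroup M) := by
    intro g
    refine ⟨1, Subtype.ext ?_⟩
    push_cast
    rw [pow_two]
    exact hsq _
  let P : Sylow 2 M :=
    ⟨⊤, hp2, fun {Q} _ hle => le_antisymm le_top hle⟩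
  have hcyc : IsCyclic (↥(⊤ : Subgroup M)) := hMsyl P
  have hcycM : IsCyclic M := isCyclic_of_surjective (Subgroup.topEquiv (G := M)).toMonoidHom
    (Subgroup.topEquiv (G := M)).surjective
  obtain ⟨g, hg⟩ := hcycM.exists_generator
  have hcard : orderOf g = Nat.card M := orderOf_eq_card_of_forall_mem_zpowers hg
  have hdvd : orderOf g ∣ 2 := orderOf_dvd_of_pow_eq_one (by rw [pow_two]; exact hsq g)
  have : Nat.card M ≤ 2 := hcard ▸ Nat.le_of_dvd two_pos hdvd
  omega

/-- If `G` is pseudodihedral or abelian, then every quotient of `G` is isomorphic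
to a subgroup of `G`, and every pseudodihedral subgroup of `G` is isomorphic to a
quotient of `G`. -/
theorem pseudodihedral_quotients_and_subgroups (G : Type*) [Group G] [Finite G]
    (hG : IsPseudodihedral G ∨ ∀ a b : G, a * b = b * a) :
    (∀ S : Subgroup G, S.Normal →
      ∃ X : Subgroup G, ∃ f : G →* X, Function.Surjective f ∧ f.ker = S) ∧
    (∀ Y : Subgroup G, IsPseudodihedral Y →
      ∃ f : G →* Y, Function.Surjective f) := by
  -- it suffices to produce, for each normal `S`, an endomorphism of `G` with kernel `S`
  have key : ∀ (F : G →* G) (S : Subgroup G), F.ker = S →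
      ∃ X : Subgroup G, ∃ f : G →* X, Function.Surjective f ∧ f.ker = S := by
    intro F S hF
    exact ⟨F.range, F.rangeRestrict, F.rangeRestrict_surjective,
      by rw [MonoidHom.ker_rangeRestrict, hF]⟩
  rcases hG with hPD | hab
  · obtain ⟨N, hNc, hNcard, hNidx, hNsyl, x, hxN, hxx, hxinv⟩ := hPD
    letI : CommGroup (↥N) := { (inferInstance : Group ↥N) with mul_comm := hNc }
    have hcommG : ∀ a b : G, a ∈ N → b ∈ N → a * b = b * a := fun a b ha hb =>
      congrArg Subtype.val (hNc ⟨a, ha⟩ ⟨b, hb⟩)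
    constructor
    · intro S hS
      haveI := hS
      by_cases hSN : S ≤ N
      · -- `S ≤ N`: quotient is again "pseudodihedral-like", embed via `N`
        set S' : Subgroup (↥N) := S.subgroupOf N with hS'
        haveI : S'.Normal := ⟨fun n hn g => by
          rwa [mul_comm g n, mul_assoc, mul_inv_cancel, mul_one]⟩
        letI : CommGroup (↥N ⧸ S') :=
          { (inferInstance : Group (↥N ⧸ S')) with
            mul_comm := fun a b => by
              obtain ⟨u, rfl⟩ := QuotientGroup.mk'_surjective S' a
              obtain ⟨v, rfl⟩ := QuotientGroup.mk'_surjective S' b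
              rw [← map_mul, ← map_mul, mul_comm] }
        obtain ⟨j, hj⟩ := exists_injective_of_surjective (QuotientGroup.mk' S')
          (QuotientGroup.mk'_surjective S')
        set φ : (↥N) →* G := N.subtype.comp (j.comp (QuotientGroup.mk' S')) with hφ
        have hφmem : ∀ n : ↥N, φ n ∈ N := fun n => (j ((QuotientGroup.mk' S') n)).2
        have hker : ∀ n : ↥N, φ n = 1 ↔ (n : G) ∈ S := by
          intro n
          constructor
          · intro h
            have h1 : j ((QuotientGroup.mk' S') n) = 1 :=
              Subtype.ext (by simpa [hφ] using h)
            have h2 : (QuotientGroup.mk' S') n = 1 := by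
              apply hj; rw [h1, map_one]
            have h3 : n ∈ S' := (QuotientGroup.eq_one_iff n).1 h2
            exact (Subgroup.mem_subgroupOf).1 h3
          · intro h
            have h3 : n ∈ S' := (Subgroup.mem_subgroupOf).2 h
            have h2 : (QuotientGroup.mk' S') n = 1 := (QuotientGroup.eq_one_iff n).2 h3
            show φ n = 1
            rw [hφ, MonoidHom.comp_apply, MonoidHom.comp_apply, h2, map_one, map_one]
        obtain ⟨F, hFin, hFout⟩ := exists_ext_hom hcommG hNidx hxN hxx hxinv φ
          hxx (fun n => hxinv (φ n) (hφmem n))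
        refine key F S (Subgroup.ext fun g => ?_)
        constructor
        · intro hg
          have hg1 : F g = 1 := hg
          by_cases hgN : g ∈ N
          · rw [hFin g hgN] at hg1
            exact (hker ⟨g, hgN⟩).1 hg1
          · exfalso
            have h' : g * x ∈ N := mem_of_not_mem_mul hNidx hgN hxN
            rw [hFout g hgN h'] at hg1
            have hx' : x = (φ ⟨g * x, h'⟩)⁻¹ := eq_inv_of_mul_eq_one_right hg1
            exact hxN (hx' ▸ inv_mem (hφmem ⟨g * x, h'⟩))
        · intro hg
          have hgN : g ∈ N := hSN hg
          show F g = 1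
          rw [hFin g hgN]
          exact (hker ⟨g, hgN⟩).2 hg
      · -- `S ⊄ N`: the quotient is abelian and embeds into `N`
        obtain ⟨c, hcS, hcN⟩ := SetLike.not_le_iff_exists.1 hSN
        set p : (↥N) →* G ⧸ S := (QuotientGroup.mk' S).comp N.subtype with hp
        have hpsurj : Function.Surjective p := by
          intro q
          obtain ⟨g, rfl⟩ := QuotientGroup.mk'_surjective S q
          by_cases hg : g ∈ N
          · exact ⟨⟨g, hg⟩, rfl⟩
          · refine ⟨⟨g * c, mem_of_not_mem_mul hNidx hg hcN⟩, ?_⟩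
            show (QuotientGroup.mk' S) (g * c) = (QuotientGroup.mk' S) g
            rw [map_mul]
            have : (QuotientGroup.mk' S) c = 1 := (QuotientGroup.eq_one_iff c).2 hcS
            rw [this, mul_one]
        letI : CommGroup (G ⧸ S) :=
          { (inferInstance : Group (G ⧸ S)) with
            mul_comm := fun a b => by
              obtain ⟨u, rfl⟩ := hpsurj a
              obtain ⟨v, rfl⟩ := hpsurj b
              rw [← map_mul, ← map_mul, mul_comm] }
        obtain ⟨j, hj⟩ := exists_injective_of_surjective p hpsurj
        set F : G →* G := (N.subtype.comp j).comp (QuotientGroup.mk' S) with hF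
        refine key F S (Subgroup.ext fun g => ?_)
        have : F g = 1 ↔ (QuotientGroup.mk' S) g = 1 := by
          constructor
          · intro h
            apply hj
            rw [map_one]
            exact Subtype.ext (by simpa [hF] using h)
          · intro h
            show F g = 1
            rw [hF, MonoidHom.comp_apply, MonoidHom.comp_apply, h, map_one, map_one]
        rw [MonoidHom.mem_ker, this]
        exact QuotientGroup.eq_one_iff g
    · -- pseudodihedral subgroups are quotients
      intro Y hY
      have hYnotleN : ¬ Y ≤ N := by
        intro hle
        exact hY.not_comm fun a b => Subtype.ext (hcommG a b (hle a.2) (hle b.2))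
      obtain ⟨y, hyY, hyN⟩ := SetLike.not_le_iff_exists.1 hYnotleN
      have hyy : y * y = 1 := sq_eq_one_of_not_mem hcommG hNidx hxN hxx hxinv hyN
      set B : Subgroup (↥N) := (Y ⊓ N).subgroupOf N with hB
      obtain ⟨s, hs⟩ := exists_surjective_onto_subgroup B
      set e := Subgroup.subgroupOfEquivOfLe (inf_le_right : Y ⊓ N ≤ N) with he
      set ψ : (↥N) →* (↥Y) :=
        (Subgroup.inclusion (inf_le_left : Y ⊓ N ≤ Y)).comp
          (e.toMonoidHom.comp s) with hψ
      have hψcoe : ∀ n : ↥N, (ψ n : G) = ((e (s n) : ↥(Y ⊓ N)) : G) := fun n => rfl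
      have hψN : ∀ n : ↥N, (ψ n : G) ∈ N := fun n => (e (s n)).2.2
      have hyinv' : ∀ n : ↥N, (⟨y, hyY⟩ : ↥Y) * ψ n * (⟨y, hyY⟩ : ↥Y)⁻¹ = (ψ n)⁻¹ := by
        intro n
        apply Subtype.ext
        push_cast
        exact conj_eq_inv_of_not_mem hcommG hNidx hxN hxx hxinv hyN (hψN n)
      obtain ⟨F, hFin, hFout⟩ := exists_ext_hom hcommG hNidx hxN hxx hxinv ψ
        (y := (⟨y, hyY⟩ : ↥Y)) (Subtype.ext (by push_cast; exact hyy)) hyinv'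
      refine ⟨F, fun t => ?_⟩
      by_cases ht : (t : G) ∈ N
      · obtain ⟨m, hm⟩ := hs (e.symm ⟨(t : G), ⟨t.2, ht⟩⟩)
        refine ⟨(m : G), ?_⟩
        rw [hFin (m : G) m.2]
        apply Subtype.ext
        show ((e (s ⟨(m : G), m.2⟩) : ↥(Y ⊓ N)) : G) = (t : G)
        have : s ⟨(m : G), m.2⟩ = s m := rfl
        rw [this, hm, e.apply_symm_apply]
      · have htyN : (t : G) * y ∈ N := mem_of_not_mem_mul hNidx ht hyN
        have htyY : (t : G) * y ∈ Y := mul_mem t.2 hyY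
        obtain ⟨m, hm⟩ := hs (e.symm ⟨(t : G) * y, ⟨htyY, htyN⟩⟩)
        refine ⟨(m : G) * x, ?_⟩
        have hgN : (m : G) * x ∉ N := not_mem_mul_left hNidx m.2 hxN
        have hgx : ((m : G) * x) * x ∈ N := by
          rw [mul_assoc, hxx, mul_one]; exact m.2
        rw [hFout _ hgN hgx]
        have h1 : (⟨(m : G) * x * x, hgx⟩ : ↥N) = m :=
          Subtype.ext (show (m : G) * x * x = (m : G) by rw [mul_assoc, hxx, mul_one])
        rw [h1]
        apply Subtype.ext
        push_cast
        show (ψ m : G) * y = (t : G)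
        have h2 : (ψ m : G) = (t : G) * y := by
          rw [hψcoe m, hm, e.apply_symm_apply]
        rw [h2, mul_assoc, hyy, mul_one]
  · -- abelian case
    letI : CommGroup G := { (inferInstance : Group G) with mul_comm := hab }
    constructor
    · intro S hS
      haveI := hS
      obtain ⟨j, hj⟩ := exists_injective_of_surjective (QuotientGroup.mk' S)
        (QuotientGroup.mk'_surjective S)
      refine key (j.comp (QuotientGroup.mk' S)) S (Subgroup.ext fun g => ?_)
      have : j ((QuotientGroup.mk' S) g) = 1 ↔ (QuotientGroup.mk' S) g = 1 := by
        constructor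
        · intro h; apply hj; rw [h, map_one]
        · intro h; rw [h, map_one]
      rw [MonoidHom.mem_ker, MonoidHom.comp_apply, this]
      exact QuotientGroup.eq_one_iff g
    · intro Y hY
      exact absurd (fun a b : ↥Y => Subtype.ext (hab a b)) (fun h => hY.not_comm h)
end

section
/- Let G be a pseudodihedral group with unique abelian subgroup N of index 2 (the unique cyclic subgroup of index 2 if G ≅ D₈). If S is a nontrivial normal subgroup of G with [G:S] > 2, then S ≤ N. -/
open Pointwise

/-- In a pseudodihedral group `G = ⟨x⟩ ⋉ N` (with `N` the abelian subgroup of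
index `2`, cyclic `2`-part), every nontrivial normal subgroup of index greater
than `2` is contained in `N`. -/
theorem pseudodihedral_normal_le (G : Type*) [Group G] [Finite G]
    (N : Subgroup G) (hab : ∀ a b : N, a * b = b * a)
    (hcard : 2 < Nat.card N) (hidx : N.index = 2)
    (hsyl : ∀ P : Sylow 2 N, IsCyclic (P : Subgroup N))
    (x : G) (hxN : x ∉ N) (hx2 : x * x = 1)
    (hinv : ∀ n ∈ N, x * n * x⁻¹ = n⁻¹)
    (S : Subgroup G) (hS : S.Normal) (hSbot : S ≠ ⊥) (hSidx : 2 < S.index) :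
    S ≤ N := by
  by_contra hSN
  obtain ⟨s, hsS, hsN⟩ := SetLike.not_le_iff_exists.mp hSN
  -- commutativity of elements of N inside G
  have hcomm : ∀ a ∈ N, ∀ b ∈ N, a * b = b * a := by
    intro a ha b hb
    have := hab ⟨a, ha⟩ ⟨b, hb⟩
    exact congrArg Subtype.val this
  -- write s = x * n with n ∈ N
  have hn : x⁻¹ * s ∈ N := by
    rw [Subgroup.mul_mem_iff_of_index_two hidx]
    simp only [inv_mem_iff]
    exact iff_of_false hxN hsN
  set n : G := x⁻¹ * s with hn_def
  have hs_eq : s = x * n := by rw [hn_def]; group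
  -- all squares of elements of N lie in S
  have hsq : ∀ m ∈ N, m * m ∈ S := by
    intro m hm
    have h1 : m * s * m⁻¹ * s⁻¹ ∈ S :=
      S.mul_mem (hS.conj_mem s hsS m) (S.inv_mem hsS)
    have c1 : x * m⁻¹ * x⁻¹ = m := by rw [hinv m⁻¹ (N.inv_mem hm), inv_inv]
    have c2 : n * m⁻¹ = m⁻¹ * n := hcomm n hn m⁻¹ (N.inv_mem hm)
    have e : m * s * m⁻¹ * s⁻¹ = m * m := by
      rw [hs_eq, mul_inv_rev]
      calc m * (x * n) * m⁻¹ * (n⁻¹ * x⁻¹)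
          = m * (x * (n * m⁻¹ * n⁻¹) * x⁻¹) := by group
        _ = m * (x * m⁻¹ * x⁻¹) := by rw [c2]; group
        _ = m * m := by rw [c1]
    rwa [e] at h1
  -- squaring homomorphism on N
  letI : CommGroup N := { (inferInstance : Group N) with mul_comm := hab }
  let sq : N →* N := powMonoidHom 2
  -- the kernel of sq has at most 2 elements
  have hker_le : Nat.card sq.ker ≤ 2 := by
    have hpker : IsPGroup 2 sq.ker := by
      intro g
      refine ⟨1, ?_⟩
      have hg : (g : N) ^ 2 = 1 := g.2
      refine Subtype.ext ?_
      push_cast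
      simpa using hg
    obtain ⟨Q, hQ⟩ := hpker.exists_le_sylow
    haveI : IsCyclic (Q : Subgroup N) := hsyl Q
    have hcardeq : Nat.card (sq.ker.subgroupOf (Q : Subgroup N)) = Nat.card sq.ker :=
      Nat.card_congr (Subgroup.subgroupOfEquivOfLe hQ).toEquiv
    haveI : IsCyclic (sq.ker.subgroupOf (Q : Subgroup N)) := inferInstance
    have hexp : Monoid.exponent (sq.ker.subgroupOf (Q : Subgroup N)) ∣ 2 := by
      apply Monoid.exponent_dvd_of_forall_pow_eq_one
      intro g
      have hg : ((g : (Q : Subgroup N)) : N) ∈ sq.ker := g.2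
      have hg2 : ((g : (Q : Subgroup N)) : N) ^ 2 = 1 := hg
      refine Subtype.ext (Subtype.ext ?_)
      push_cast
      simpa using hg2
    have := IsCyclic.exponent_eq_card (α := (sq.ker.subgroupOf (Q : Subgroup N)))
    rw [← hcardeq, ← this]
    exact Nat.le_of_dvd (by norm_num) hexp
  -- Nat.card N ≤ 2 * Nat.card sq.range
  have hrange : Nat.card N ≤ 2 * Nat.card sq.range := by
    have h1 : Nat.card sq.ker * sq.ker.index = Nat.card N := Subgroup.card_mul_index _
    have h2 : sq.ker.index = Nat.card sq.range := by
      rw [Subgroup.index]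
      exact Nat.card_congr (QuotientGroup.quotientKerEquivRange sq).toEquiv
    calc Nat.card N = Nat.card sq.ker * Nat.card sq.range := by rw [← h1, h2]
      _ ≤ 2 * Nat.card sq.range := by
          exact Nat.mul_le_mul_right _ hker_le
  -- injection of sq.range × Bool into S
  have hmemS : ∀ r : sq.range, ((r : N) : G) ∈ S := by
    rintro ⟨r, m, rfl⟩
    have : (((powMonoidHom 2 m : N) : G)) = (m : G) * (m : G) := by
      simp [powMonoidHom, pow_two]
    rw [this]
    exact hsq _ m.2
  have hinj : Nat.card (sq.range × Bool) ≤ Nat.card S := by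
    apply Nat.card_le_card_of_injective
      (f := fun p : sq.range × Bool =>
        (⟨(if p.2 then s else 1) * ((p.1 : N) : G), by
          rcases p with ⟨r, b⟩
          cases b
          · simpa using hmemS r
          · exact S.mul_mem hsS (hmemS r)⟩ : S))
    rintro ⟨r₁, b₁⟩ ⟨r₂, b₂⟩ hEq
    simp only [Subtype.mk.injEq] at hEq
    cases b₁ <;> cases b₂ <;>
      simp only [Bool.false_eq_true, if_false, if_true, one_mul] at hEq
    · simp only [Prod.mk.injEq]
      exact ⟨Subtype.ext (Subtype.ext hEq), trivial⟩
    · exfalso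
      have hs2 : s = ((r₁ : N) : G) * ((r₂ : N) : G)⁻¹ := eq_mul_inv_of_mul_eq hEq.symm
      exact hsN (hs2 ▸ N.mul_mem (r₁ : N).2 (N.inv_mem (r₂ : N).2))
    · exfalso
      have hs2 : s = ((r₂ : N) : G) * ((r₁ : N) : G)⁻¹ := eq_mul_inv_of_mul_eq hEq
      exact hsN (hs2 ▸ N.mul_mem (r₂ : N).2 (N.inv_mem (r₁ : N).2))
    · simp only [Prod.mk.injEq]
      exact ⟨Subtype.ext (Subtype.ext (mul_left_cancel hEq)), trivial⟩
  have hcardS : Nat.card N ≤ Nat.card S := by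
    calc Nat.card N ≤ 2 * Nat.card sq.range := hrange
      _ = Nat.card (sq.range × Bool) := by
          rw [Nat.card_prod]
          simp [Nat.card_eq_fintype_card]
          ring
      _ ≤ Nat.card S := hinj
  -- conclude S.index ≤ 2, contradiction
  have hG1 : Nat.card S * S.index = Nat.card G := Subgroup.card_mul_index S
  have hG2 : Nat.card N * N.index = Nat.card G := Subgroup.card_mul_index N
  have hSpos : 0 < Nat.card S := Nat.card_pos
  have : S.index * Nat.card S ≤ 2 * Nat.card S := by
    calc S.index * Nat.card S = Nat.card G := by rw [mul_comm]; exact hG1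
      _ = Nat.card N * 2 := by rw [← hG2, hidx]
      _ ≤ Nat.card S * 2 := Nat.mul_le_mul_right _ hcardS
      _ = 2 * Nat.card S := mul_comm _ _
  have hle : S.index ≤ 2 := Nat.le_of_mul_le_mul_right this hSpos
  omega
end

section
/- Let G be a finite abelian group. Then the unit group B^×(G) of the Burnside ring of G is generated by the elements Ten^G_H(−1) as H ranges over the subgroups of G, where Ten^G_H denotes tensor (multiplicative) induction. -/
open Pointwise

/-- The ghost vector of the tensor induction `Ten_H^G(-1)` of the unit `-1 ∈ B(H)ˣ`:
its mark at `L ≤ G` is `(-1)` raised to the number of `(L,H)`-double cosets in `G`. -/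
noncomputable def tenNegOne {G : Type*} [Group G] (H : Subgroup G) : Subgroup G → ℤ :=
  fun L => (-1) ^ Nat.card (DoubleCoset.Quotient (L : Set G) (H : Set G))

section Aux
set_option linter.unusedSectionVars false
open scoped Classical

variable {G : Type*} [CommGroup G] [Finite G]

private lemma smul_quot_eq_iff (K : Subgroup G) (h : G) (x : G ⧸ K) :
    h • x = x ↔ h ∈ K := by
  induction x using QuotientGroup.induction_on with
  | H g =>
    rw [MulAction.Quotient.smul_mk, smul_eq_mul, QuotientGroup.eq]
    constructor
    · intro hm
      have : (h * g)⁻¹ * g = h⁻¹ := by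
        rw [mul_inv_rev]
        rw [mul_comm g⁻¹ h⁻¹, mul_assoc, inv_mul_cancel, mul_one]
      rw [this] at hm
      exact (inv_mem_iff).1 hm
    · intro hm
      have : (h * g)⁻¹ * g = h⁻¹ := by
        rw [mul_inv_rev]
        rw [mul_comm g⁻¹ h⁻¹, mul_assoc, inv_mul_cancel, mul_one]
      rw [this]
      exact inv_mem hm

private lemma burnsideMark_eq (K L : Subgroup G) :
    burnsideMark G K L = if L ≤ K then (K.index : ℤ) else 0 := by
  unfold burnsideMark
  by_cases h : L ≤ K
  · rw [if_pos h]
    have hall : ∀ x : G ⧸ K, ∀ h' ∈ L, h' • x = x := fun x h' hh' =>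
      (smul_quot_eq_iff K h' x).2 (h hh')
    rw [Nat.card_congr (Equiv.subtypeUnivEquiv hall), Subgroup.index_eq_card]
  · rw [if_neg h]
    obtain ⟨h₀, hL, hK⟩ := SetLike.not_le_iff_exists.1 h
    have : IsEmpty {x : G ⧸ K // ∀ h ∈ L, h • x = x} :=
      ⟨fun ⟨x, hx⟩ => hK ((smul_quot_eq_iff K h₀ x).1 (hx h₀ hL))⟩
    simp [Nat.card_of_isEmpty]

private lemma mark_mem (K : Subgroup G) : burnsideMark G K ∈ BurnsideRing G :=
  Subring.subset_closure (Set.mem_range_self K)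

private lemma one_eq_mark_top : (1 : Subgroup G → ℤ) = burnsideMark G ⊤ := by
  funext L
  rw [burnsideMark_eq, if_pos le_top, Subgroup.index_top]
  rfl

/-- product of two marks is a natural multiple of a mark -/
private lemma mark_mul_mark (K K' : Subgroup G) :
    burnsideMark G K * burnsideMark G K'
      = (K'.index / K'.relIndex K) • burnsideMark G (K ⊓ K') := by
  haveI : K'.Normal := Subgroup.normal_of_comm K'
  have hdvd : K'.relIndex K ∣ K'.index := Subgroup.relIndex_dvd_index_of_normal K' K
  have hinf : (K ⊓ K').index = K'.relIndex K * K.index := by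
    rw [← Subgroup.relIndex_mul_index (inf_le_left : K ⊓ K' ≤ K), inf_comm,
      Subgroup.inf_relIndex_right]
  have hkey : (K'.index / K'.relIndex K) * (K ⊓ K').index = K.index * K'.index := by
    rw [hinf, ← mul_assoc, Nat.div_mul_cancel hdvd, mul_comm]
  funext L
  simp only [Pi.mul_apply, Pi.smul_apply, burnsideMark_eq, smul_ite, nsmul_eq_mul]
  by_cases h : L ≤ K ⊓ K'
  · rw [if_pos h, if_pos (h.trans inf_le_left), if_pos (h.trans inf_le_right)]
    rw [← Nat.cast_mul, ← Nat.cast_mul, hkey]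
  · rw [if_neg h, mul_zero]
    rw [le_inf_iff] at h
    push_neg at h
    by_cases h1 : L ≤ K
    · rw [if_neg (h h1), mul_zero]
    · rw [if_neg h1, zero_mul]

private lemma mem_addClosure {f : Subgroup G → ℤ} (hf : f ∈ BurnsideRing G) :
    f ∈ AddSubgroup.closure (Set.range (burnsideMark G)) := by
  classical
  set A := AddSubgroup.closure (Set.range (burnsideMark G)) with hA
  have hmul : ∀ a ∈ A, ∀ b ∈ A, a * b ∈ A := by
    intro a ha
    refine AddSubgroup.closure_induction ?_ ?_ ?_ ?_ ha
    · rintro x ⟨K, rfl⟩ b hb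
      refine AddSubgroup.closure_induction ?_ ?_ ?_ ?_ hb
      · rintro y ⟨K', rfl⟩
        rw [mark_mul_mark]
        exact AddSubgroup.nsmul_mem _ (AddSubgroup.subset_closure (Set.mem_range_self _)) _
      · rw [mul_zero]; exact zero_mem _
      · intro y z _ _ hy hz
        rw [mul_add]; exact add_mem hy hz
      · intro y _ hy
        rw [mul_neg]; exact neg_mem hy
    · intro b _; rw [zero_mul]; exact zero_mem _
    · intro x y _ _ hx hy b hb
      rw [add_mul]; exact add_mem (hx b hb) (hy b hb)
    · intro x _ hx b hb
      rw [neg_mul]; exact neg_mem (hx b hb)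
  refine Subring.closure_induction ?_ ?_ ?_ ?_ ?_ ?_ hf
  · intro x hx; exact AddSubgroup.subset_closure hx
  · exact zero_mem _
  · rw [one_eq_mark_top]; exact AddSubgroup.subset_closure (Set.mem_range_self _)
  · intro x y _ _ hx hy; exact add_mem hx hy
  · intro x _ hx; exact neg_mem hx
  · intro x y _ _ hx hy; exact hmul x hx y hy

end Aux
section Aux2
set_option linter.unusedSectionVars false
open scoped Classical

variable {G : Type*} [CommGroup G] [Finite G]

private lemma mark_congruence [Fintype G] (f : Subgroup G → ℤ)
    (hf : f ∈ AddSubgroup.closure (Set.range (burnsideMark G))) (L : Subgroup G) :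
    (Nat.card G : ℤ) ∣ ∑ g : G, f (Subgroup.zpowers g ⊔ L) := by
  refine AddSubgroup.closure_induction ?_ ?_ ?_ ?_ hf
  · rintro x ⟨K, rfl⟩
    simp only [burnsideMark_eq]
    by_cases hLK : L ≤ K
    · have hcong : ∀ g : G, (if Subgroup.zpowers g ⊔ L ≤ K then (K.index : ℤ) else 0)
          = if g ∈ K then (K.index : ℤ) else 0 := by
        intro g
        have : Subgroup.zpowers g ⊔ L ≤ K ↔ g ∈ K := by
          rw [sup_le_iff, Subgroup.zpowers_le]
          exact ⟨fun h => h.1, fun h => ⟨h, hLK⟩⟩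
        simp [this]
      rw [Finset.sum_congr rfl fun g _ => hcong g, ← Finset.sum_filter, Finset.sum_const]
      have hcard : (Finset.univ.filter fun g : G => g ∈ K).card = Nat.card K := by
        rw [Nat.card_eq_fintype_card, Fintype.card_subtype]
      rw [hcard, nsmul_eq_mul, ← Nat.cast_mul, Subgroup.card_mul_index]
    · have hzero : ∀ g : G, (if Subgroup.zpowers g ⊔ L ≤ K then (K.index : ℤ) else 0) = 0 := by
        intro g
        rw [if_neg fun h => hLK (le_sup_right.trans h)]
      rw [Finset.sum_congr rfl fun g _ => hzero g, Finset.sum_const, smul_zero]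
      exact dvd_zero _
  · simp
  · intro x y _ _ hx hy
    simp only [Pi.add_apply, Finset.sum_add_distrib]
    exact dvd_add hx hy
  · intro x _ hx
    simp only [Pi.neg_apply, Finset.sum_neg_distrib]
    exact dvd_neg.2 hx

private lemma index_lt_of_lt {L K : Subgroup G} (h : L < K) : K.index < L.index := by
  have hm := Subgroup.relIndex_mul_index h.le
  have h0 : K.index ≠ 0 := Subgroup.index_ne_zero_of_finite
  have hr0 : L.relIndex K ≠ 0 := by
    rw [Subgroup.relIndex]
    exact Subgroup.index_ne_zero_of_finite
  have hr1 : L.relIndex K ≠ 1 := by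
    intro h1
    exact absurd (le_antisymm h.le (Subgroup.relIndex_eq_one.1 h1)) h.ne
  have : 2 ≤ L.relIndex K := by omega
  calc K.index < 2 * K.index := by omega
    _ ≤ L.relIndex K * K.index := Nat.mul_le_mul_right _ this
    _ = L.index := hm

private lemma key_lemma [Fintype G] (f : Subgroup G → ℤ)
    (hf : f ∈ AddSubgroup.closure (Set.range (burnsideMark G)))
    (hpm : ∀ L, f L = 1 ∨ f L = -1) (htop : f ⊤ = 1)
    (h2 : ∀ M : Subgroup G, M.index = 2 → f M = 1) : ∀ L, f L = 1 := by
  have main : ∀ n : ℕ, ∀ L : Subgroup G, L.index ≤ n → f L = 1 := by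
    intro n
    induction n with
    | zero =>
      intro L hL
      exact absurd (Nat.le_zero.1 hL) Subgroup.index_ne_zero_of_finite
    | succ n ih =>
      intro L hL
      by_cases hTop : L = ⊤
      · rw [hTop]; exact htop
      by_cases h2' : L.index = 2
      · exact h2 L h2'
      have hge : 3 ≤ L.index := by
        have h0 : L.index ≠ 0 := Subgroup.index_ne_zero_of_finite
        have h1 : L.index ≠ 1 := fun h => hTop (Subgroup.index_eq_one.1 h)
        omega
      rcases hpm L with hfl | hfl
      · exact hfl
      exfalso
      have hcong := mark_congruence f hf L
      have hsum : ∑ g : G, f (Subgroup.zpowers g ⊔ L)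
          = ∑ g : G, (if g ∈ L then (-1 : ℤ) else 1) := by
        refine Finset.sum_congr rfl fun g _ => ?_
        by_cases hg : g ∈ L
        · rw [if_pos hg, sup_eq_right.2 (Subgroup.zpowers_le.2 hg), hfl]
        · rw [if_neg hg]
          have hlt : L < Subgroup.zpowers g ⊔ L :=
            lt_of_le_of_ne le_sup_right fun h =>
              hg (h ▸ (le_sup_left : Subgroup.zpowers g ≤ _) (Subgroup.mem_zpowers g))
          exact ih _ (by have := index_lt_of_lt hlt; omega)
      have hval : ∀ g : G, (if g ∈ L then (-1 : ℤ) else 1)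
          = 1 - (if g ∈ L then (2 : ℤ) else 0) := by
        intro g; by_cases hg : g ∈ L <;> simp [hg]
      rw [hsum, Finset.sum_congr rfl fun g _ => hval g, Finset.sum_sub_distrib,
        ← Finset.sum_filter, Finset.sum_const, Finset.sum_const] at hcong
      have hcard : (Finset.univ.filter fun g : G => g ∈ L).card = Nat.card L := by
        rw [Nat.card_eq_fintype_card, Fintype.card_subtype]
      rw [hcard] at hcong
      have hL0 : (Nat.card L : ℤ) ≠ 0 := by
        have : 0 < Nat.card L := Nat.card_pos
        exact_mod_cast this.ne'
      have hcong' : (Nat.card G : ℤ) ∣ ((Nat.card G : ℤ) - 2 * Nat.card L) := by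
        convert hcong using 1
        simp only [Finset.card_univ, nsmul_eq_mul, mul_one]
        push_cast [Nat.card_eq_fintype_card]
        ring
      have hdvd2 : (Nat.card G : ℤ) ∣ ((Nat.card L : ℤ) * 2) := by
        have := dvd_sub (dvd_refl (Nat.card G : ℤ)) hcong'
        convert this using 1
        · rfl
        ring
      have hNG : (Nat.card L : ℤ) * L.index = (Nat.card G : ℤ) := by
        exact_mod_cast congrArg (Nat.cast : ℕ → ℤ) (Subgroup.card_mul_index L)
      rw [← hNG] at hdvd2
      have hidx : (L.index : ℤ) ∣ 2 := (mul_dvd_mul_iff_left hL0).1 hdvd2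
      have : L.index ≤ 2 := Nat.le_of_dvd (by norm_num) (by exact_mod_cast hidx)
      omega
  intro L
  exact main L.index L le_rfl

end Aux2
section Aux3
set_option linter.unusedSectionVars false
open scoped Classical

variable {G : Type*} [CommGroup G] [Finite G]

private lemma doset_card (L H : Subgroup G) :
    Nat.card (DoubleCoset.Quotient (L : Set G) (H : Set G)) = (L ⊔ H).index := by
  haveI : H.Normal := Subgroup.normal_of_comm H
  rw [Subgroup.index_eq_card]
  refine Nat.card_congr ?_
  show Quotient (DoubleCoset.setoid (L : Set G) (H : Set G))
    ≃ Quotient (QuotientGroup.leftRel (L ⊔ H))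
  refine Quotient.congrRight fun a b => ?_
  rw [show (DoubleCoset.setoid (L : Set G) (H : Set G)) a b ↔ _ from DoubleCoset.rel_iff,
    QuotientGroup.leftRel_apply]
  constructor
  · rintro ⟨l, hl, h, hh, rfl⟩
    have : a⁻¹ * (l * a * h) = l * h := by
      rw [mul_comm l a, ← mul_assoc, ← mul_assoc, inv_mul_cancel, one_mul]
    rw [this]
    exact mul_mem (Subgroup.mem_sup_left hl) (Subgroup.mem_sup_right hh)
  · intro hab
    have : a⁻¹ * b ∈ (L : Set G) * (H : Set G) := by
      rw [← Subgroup.mul_normal]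
      exact_mod_cast hab
    obtain ⟨l, hl, h, hh, hlh⟩ := this
    have hlh' : l * h = a⁻¹ * b := hlh
    refine ⟨l, hl, h, hh, ?_⟩
    have hb : b = a * (l * h) := by
      rw [hlh', ← mul_assoc, mul_inv_cancel, one_mul]
    rw [hb, ← mul_assoc, mul_comm a l]

private lemma tenNegOne_top_apply (L : Subgroup G) : tenNegOne (⊤ : Subgroup G) L = -1 := by
  rw [tenNegOne, doset_card, sup_top_eq, Subgroup.index_top, pow_one]

private lemma eq_of_le_of_index_eq {L K : Subgroup G} (h : L ≤ K) (hi : L.index = K.index) :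
    L = K := by
  have hm := Subgroup.relIndex_mul_index h
  have h0 : K.index ≠ 0 := Subgroup.index_ne_zero_of_finite
  have h1 : L.relIndex K = 1 := by
    rw [hi] at hm
    refine Nat.eq_of_mul_eq_mul_right (Nat.pos_of_ne_zero h0) ?_
    rw [hm, one_mul]
  exact le_antisymm h (Subgroup.relIndex_eq_one.1 h1)

private lemma sup_index_one {L M : Subgroup G} (hM : M.index = 2) (hLM : ¬L ≤ M) :
    (L ⊔ M).index = 1 := by
  have hd : (L ⊔ M).index ∣ M.index := Subgroup.index_dvd_of_le le_sup_right
  rw [hM] at hd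
  rcases (Nat.prime_two.eq_one_or_self_of_dvd _ hd) with h | h
  · exact h
  · exfalso
    have heq : M = L ⊔ M := eq_of_le_of_index_eq le_sup_right (by rw [hM, h])
    exact hLM ((le_sup_left : L ≤ L ⊔ M).trans heq.ge)

private lemma tenNegOne_two_apply {M : Subgroup G} (hM : M.index = 2) (L : Subgroup G) :
    tenNegOne M L = if L ≤ M then 1 else -1 := by
  rw [tenNegOne, doset_card]
  by_cases hLM : L ≤ M
  · rw [if_pos hLM, sup_eq_right.2 hLM, hM]
    norm_num
  · rw [if_neg hLM, sup_index_one hM hLM, pow_one]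

end Aux3
section Main
set_option linter.unusedSectionVars false
open scoped Classical

variable {G : Type*} [CommGroup G] [Finite G]

private noncomputable def tfun (M : Subgroup G) : Subgroup G → ℤ := fun L => if L ≤ M then 1 else -1

private lemma tfun_sq (M : Subgroup G) : tfun M * tfun M = 1 := by
  funext L
  simp only [tfun, Pi.mul_apply, Pi.one_apply]
  by_cases h : L ≤ M <;> simp [h]

private lemma tfun_mem {M : Subgroup G} (hM : M.index = 2) : tfun M ∈ BurnsideRing G := by
  have : tfun M = burnsideMark G M - 1 := by
    funext L
    simp only [tfun, Pi.sub_apply, Pi.one_apply, burnsideMark_eq, hM]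
    by_cases h : L ≤ M <;> simp [h]
  rw [this]
  exact sub_mem (mark_mem M) (one_mem _)

private noncomputable def mUnit (M : Subgroup G) (hM : M.index = 2) : (BurnsideRing G)ˣ where
  val := ⟨tfun M, tfun_mem hM⟩
  inv := ⟨tfun M, tfun_mem hM⟩
  val_inv := Subtype.ext (tfun_sq M)
  inv_val := Subtype.ext (tfun_sq M)

private lemma ghost_mUnit {M : Subgroup G} (hM : M.index = 2) :
    ghost (mUnit M hM) = tenNegOne M := by
  funext L
  show tfun M L = tenNegOne M L
  rw [tenNegOne_two_apply hM, tfun]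

private lemma ghost_neg_one : ghost (-1 : (BurnsideRing G)ˣ) = tenNegOne (⊤ : Subgroup G) := by
  funext L
  rw [tenNegOne_top_apply]
  show (((-1 : (BurnsideRing G)ˣ) : BurnsideRing G) : Subgroup G → ℤ) L = -1
  rw [Units.val_neg, Units.val_one]
  simp

private lemma pm_mul {a b : ℤ} (ha : a = 1 ∨ a = -1) (hb : b = 1 ∨ b = -1) :
    a * b = 1 ∨ a * b = -1 := by
  rcases ha with h | h <;> rcases hb with h' | h' <;> simp [h, h']

private lemma pm_pow (n : ℕ) : ((-1 : ℤ)) ^ n = 1 ∨ ((-1 : ℤ)) ^ n = -1 := by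
  rcases Nat.even_or_odd n with h | h
  · left; exact h.neg_one_pow
  · right; exact h.neg_one_pow

end Main
/-- The unit group of the Burnside ring of a finite abelian group is generated by
the tensor inductions `Ten^G_H(-1)` for `H ≤ G`. -/
theorem burnside_units_abelian_generated_by_ten (G : Type*) [CommGroup G] [Finite G] :
    Subgroup.closure
      {v : (BurnsideRing G)ˣ | ∃ H : Subgroup G, ghost v = tenNegOne H} = ⊤ := by
  classical
  letI : Fintype G := Fintype.ofFinite G
  letI : Fintype (Subgroup G) := Fintype.ofFinite _
  rw [eq_top_iff]
  intro v _
  set f : Subgroup G → ℤ := ((v : BurnsideRing G) : Subgroup G → ℤ) with hfdef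
  have hfmem : f ∈ BurnsideRing G := (v : BurnsideRing G).2
  have hpm : ∀ L, f L = 1 ∨ f L = -1 := by
    intro L
    have h1 : ((v : BurnsideRing G) * ((v⁻¹ : (BurnsideRing G)ˣ) : BurnsideRing G)) = 1 :=
      v.mul_inv
    have h2 : f L * (((v⁻¹ : (BurnsideRing G)ˣ) : BurnsideRing G) : Subgroup G → ℤ) L = 1 := by
      have h3 := congrArg (fun x : BurnsideRing G => (x : Subgroup G → ℤ) L) h1
      simp only [MulMemClass.coe_mul, Pi.mul_apply, OneMemClass.coe_one, Pi.one_apply] at h3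
      exact h3
    exact Int.isUnit_iff.1 (IsUnit.of_mul_eq_one _ h2)
  set T : Finset (Subgroup G) :=
    Finset.univ.filter (fun M => M.index = 2 ∧ f M ≠ f ⊤) with hT
  have hTprop : ∀ M ∈ T, M.index = 2 ∧ f M ≠ f ⊤ := by
    intro M hM
    rw [hT] at hM
    exact (Finset.mem_filter.1 hM).2
  have hTmem : ∀ M : Subgroup G, M.index = 2 → f M ≠ f ⊤ → M ∈ T := by
    intro M h1 h2
    rw [hT, Finset.mem_filter]
    exact ⟨Finset.mem_univ _, h1, h2⟩
  set c : ℤ := f ⊤ * (-1) ^ T.card with hc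
  have hcpm : c = 1 ∨ c = -1 := pm_mul (hpm ⊤) (pm_pow _)
  set P : Subgroup G → ℤ := fun L => ∏ M ∈ T, (if L ≤ M then (1 : ℤ) else -1) with hP
  have hPapp : ∀ L, P L = ∏ M ∈ T, (if L ≤ M then (1 : ℤ) else -1) := fun L => rfl
  have hPpm : ∀ L, P L = 1 ∨ P L = -1 := by
    intro L
    rw [hPapp]
    refine Finset.prod_induction _ (fun x => x = 1 ∨ x = -1) (fun a b => pm_mul) (Or.inl rfl) ?_
    intro M _
    by_cases h : L ≤ M <;> simp [h]
  have hPmem : P ∈ BurnsideRing G := by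
    have : P = ∏ M ∈ T, tfun M := by
      funext L
      rw [Finset.prod_apply, hPapp]
      exact Finset.prod_congr rfl fun M _ => by simp [tfun]
    rw [this]
    exact Subring.prod_mem _ fun M hM => tfun_mem (hTprop M hM).1
  have hcmem : (fun _ : Subgroup G => c) ∈ BurnsideRing G := by
    have : (fun _ : Subgroup G => c) = ((c : ℤ) : Subgroup G → ℤ) := by
      funext L
      simp
    rw [this]
    exact intCast_mem (BurnsideRing G) c
  set g : Subgroup G → ℤ := fun L => f L * (c * P L) with hg
  have hgapp : ∀ L, g L = f L * (c * P L) := fun L => rfl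
  have hgmem : g ∈ BurnsideRing G := by
    have : g = f * ((fun _ => c) * P) := by
      funext L
      simp [hgapp, Pi.mul_apply]
    rw [this]
    exact mul_mem hfmem (mul_mem hcmem hPmem)
  have hgpm : ∀ L, g L = 1 ∨ g L = -1 := fun L => by
    rw [hgapp]; exact pm_mul (hpm L) (pm_mul hcpm (hPpm L))
  have hMnotTop : ∀ M ∈ T, ¬((⊤ : Subgroup G) ≤ M) := by
    intro M hM htop
    have h2 := (hTprop M hM).1
    rw [top_le_iff.1 htop, Subgroup.index_top] at h2
    exact absurd h2 (by norm_num)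
  have hgtop : g ⊤ = 1 := by
    have hPtop : P ⊤ = (-1 : ℤ) ^ T.card := by
      rw [hPapp, Finset.prod_congr rfl (fun M hM => if_neg (hMnotTop M hM)),
        Finset.prod_const]
    rw [hgapp, hPtop, hc]
    obtain h1 | h1 := hpm ⊤ <;> obtain h2 | h2 := pm_pow T.card <;>
      rw [h1, h2] <;> norm_num
  have hle_iff : ∀ M ∈ T, ∀ M₀ : Subgroup G, M₀.index = 2 → (M₀ ≤ M ↔ M₀ = M) := by
    intro M hM M₀ h₀
    constructor
    · intro h
      exact eq_of_le_of_index_eq h (by rw [h₀, (hTprop M hM).1])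
    · rintro rfl; exact le_rfl
  have hg2 : ∀ M₀ : Subgroup G, M₀.index = 2 → g M₀ = 1 := by
    intro M₀ h₀
    by_cases hmem : M₀ ∈ T
    · have hcard1 : 1 ≤ T.card := Finset.card_pos.2 ⟨M₀, hmem⟩
      have hPM : P M₀ = (-1 : ℤ) ^ (T.card - 1) := by
        have hinner : ∀ M ∈ T.erase M₀, (if M₀ ≤ M then (1 : ℤ) else -1) = -1 := by
          intro M hM
          have hMT := Finset.mem_of_mem_erase hM
          have hne := Finset.ne_of_mem_erase hM
          rw [if_neg fun hle => hne ((hle_iff M hMT M₀ h₀).1 hle).symm]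
        rw [hPapp, ← Finset.mul_prod_erase T _ hmem, if_pos le_rfl, one_mul,
          Finset.prod_congr rfl hinner, Finset.prod_const, Finset.card_erase_of_mem hmem]
      have hne := (hTprop M₀ hmem).2
      have hfM : f M₀ = -f ⊤ := by
        rcases hpm M₀ with h | h <;> rcases hpm ⊤ with h' | h' <;>
          simp [h, h'] at hne ⊢
      have hsplit : (-1 : ℤ) ^ T.card = (-1) ^ (T.card - 1) * (-1) := by
        conv_lhs => rw [show T.card = (T.card - 1) + 1 by omega]
        rw [pow_succ]
      rw [hgapp, hfM, hPM, hc, hsplit]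
      obtain h1 | h1 := hpm ⊤ <;> obtain h2 | h2 := pm_pow (T.card - 1) <;>
        rw [h1, h2] <;> norm_num
    · have hfM : f M₀ = f ⊤ := by
        by_contra hne
        exact hmem (hTmem M₀ h₀ hne)
      have hPM : P M₀ = (-1 : ℤ) ^ T.card := by
        have hinner : ∀ M ∈ T, (if M₀ ≤ M then (1 : ℤ) else -1) = -1 := by
          intro M hM
          rw [if_neg fun hle => hmem (((hle_iff M hM M₀ h₀).1 hle) ▸ hM)]
        rw [hPapp, Finset.prod_congr rfl hinner, Finset.prod_const]
      rw [hgapp, hfM, hPM, hc]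
      obtain h1 | h1 := hpm ⊤ <;> obtain h2 | h2 := pm_pow T.card <;>
        rw [h1, h2] <;> norm_num
  have hgone : ∀ L, g L = 1 := key_lemma g (mem_addClosure hgmem) hgpm hgtop hg2
  have hfinal : ∀ L, f L = c * P L := by
    intro L
    have h1 := hgone L
    rw [hgapp] at h1
    rcases pm_mul hcpm (hPpm L) with h | h <;> rw [h] at h1 ⊢ <;> linarith
  -- units
  set u : Subgroup G → (BurnsideRing G)ˣ :=
    fun M => if h : M.index = 2 ∧ f M ≠ f ⊤ then mUnit M h.1 else 1 with hu
  set ε : (BurnsideRing G)ˣ := if c = 1 then 1 else -1 with hε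
  have hclosuremem : ε * ∏ M ∈ T, u M ∈
      Subgroup.closure {w : (BurnsideRing G)ˣ | ∃ H, ghost w = tenNegOne H} := by
    refine mul_mem ?_ (Subgroup.prod_mem _ fun M hM => ?_)
    · rw [hε]
      split
      · exact one_mem _
      · exact Subgroup.subset_closure ⟨⊤, ghost_neg_one⟩
    · have hprop := hTprop M hM
      rw [hu]
      simp only [dif_pos hprop]
      exact Subgroup.subset_closure ⟨M, ghost_mUnit hprop.1⟩
  suffices hv : v = ε * ∏ M ∈ T, u M by
    rw [hv]
    exact hclosuremem
  refine Units.ext ?_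
  refine Subtype.ext ?_
  funext L
  have h2 : ((∏ M ∈ T, u M : (BurnsideRing G)ˣ) : BurnsideRing G)
      = ∏ M ∈ T, ((u M : (BurnsideRing G)ˣ) : BurnsideRing G) :=
    map_prod (Units.coeHom (BurnsideRing G)) _ _
  have h3 : (((∏ M ∈ T, ((u M : (BurnsideRing G)ˣ) : BurnsideRing G) : BurnsideRing G))
        : Subgroup G → ℤ)
      = ∏ M ∈ T, (((u M : (BurnsideRing G)ˣ) : BurnsideRing G) : Subgroup G → ℤ) :=
    map_prod ((BurnsideRing G).subtype) _ _
  have hεv : (((ε : (BurnsideRing G)ˣ) : BurnsideRing G) : Subgroup G → ℤ) L = c := by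
    rcases hcpm with h | h
    · rw [hε, if_pos h, h]
      simp
    · rw [hε, if_neg (by rw [h]; norm_num), h]
      simp
  have hTval : ∀ M ∈ T, (((u M : (BurnsideRing G)ˣ) : BurnsideRing G) : Subgroup G → ℤ) L
      = if L ≤ M then 1 else -1 := by
    intro M hM
    have hprop := hTprop M hM
    rw [hu]
    simp only [dif_pos hprop]
    rfl
  show f L = _
  rw [Units.val_mul, h2, MulMemClass.coe_mul, Pi.mul_apply, h3, Finset.prod_apply,
    hεv, Finset.prod_congr rfl hTval]
  rw [hfinal L, hPapp]
end

section
/- Let p be an odd prime and G = D₂ₚ the dihedral group of order 2p, with I = ⟨x⟩ a reflection subgroup. Then the number of (I,I)-double cosets in G equals 1 + (p−1)/2, and the unit Ten^G_I(−1) has marks: |Ten^G_I(−1)^1| = −1, |Ten^G_I(−1)^I| = (−1)^{1+(p−1)/2}, |Ten^G_I(−1)^{Cₚ}| = −1, |Ten^G_I(−1)^G| = −1. -/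
open Pointwise

namespace TenNegOneAux

open DihedralGroup

variable {p : ℕ}

lemma mem_I {g : DihedralGroup p} (h : g ∈ Subgroup.zpowers (sr (0 : ZMod p))) :
    g = 1 ∨ g = sr 0 := by
  obtain ⟨n, rfl⟩ := h
  have hsq : (sr (0 : ZMod p)) ^ (2 : ℤ) = 1 := by
    rw [zpow_two, sr_mul_self]
  rcases Int.even_or_odd n with ⟨m, rfl⟩ | ⟨m, rfl⟩
  · left
    show (sr (0 : ZMod p)) ^ (m + m) = 1
    rw [show m + m = 2 * m by ring, zpow_mul, hsq, one_zpow]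
  · right
    show (sr (0 : ZMod p)) ^ (2 * m + 1) = sr 0
    rw [zpow_add, zpow_mul, hsq, one_zpow, one_mul, zpow_one]

lemma r_mem_C (i : ZMod p) [NeZero p] : r i ∈ Subgroup.zpowers (r (1 : ZMod p)) := by
  refine ⟨(i.val : ℤ), ?_⟩
  show (r (1 : ZMod p)) ^ ((i.val : ℕ) : ℤ) = r i
  rw [zpow_natCast, r_one_pow, ZMod.natCast_rightInverse i]

/-- number of (I,I) double cosets -/
lemma count_II (hp : p.Prime) (hodd : Odd p) :
    Nat.card (DoubleCoset.Quotient
        ((Subgroup.zpowers (sr (0 : ZMod p)) : Subgroup (DihedralGroup p)) : Set (DihedralGroup p))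
        ((Subgroup.zpowers (sr (0 : ZMod p)) : Subgroup (DihedralGroup p)) : Set (DihedralGroup p)))
      = 1 + (p - 1) / 2 := by
  haveI : NeZero p := ⟨hp.ne_zero⟩
  obtain ⟨t, ht⟩ := hodd
  set I := (Subgroup.zpowers (sr (0 : ZMod p)) : Subgroup (DihedralGroup p)) with hI
  have ht2 : (p - 1) / 2 = t := by omega
  set n : ℕ := 1 + (p - 1) / 2 with hn
  -- the bijection
  have key : Function.Bijective
      (fun k : Fin n => DoubleCoset.mk I I (r ((k : ℕ) : ZMod p))) := by
    constructor
    · intro k l hkl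
      rw [DoubleCoset.eq] at hkl
      obtain ⟨h, hh, k', hk', heq⟩ := hkl
      have hk0 : (k : ℕ) < n := k.2
      have hl0 : (l : ℕ) < n := l.2
      have hk1 : (k : ℕ) < p := by omega
      have hl1 : (l : ℕ) < p := by omega
      have hcast : ∀ a b : Fin n, ((a : ℕ) : ZMod p) = ((b : ℕ) : ZMod p) → a = b := by
        intro a b hab
        have := congrArg ZMod.val hab
        rw [ZMod.val_cast_of_lt (by omega), ZMod.val_cast_of_lt (by omega)] at this
        exact Fin.ext this
      have hcast' : ∀ a b : Fin n, ((a : ℕ) : ZMod p) = -((b : ℕ) : ZMod p) → a = b := by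
        intro a b hab
        have h0 : (((a : ℕ) + (b : ℕ) : ℕ) : ZMod p) = 0 := by
          push_cast
          rw [hab]; ring
        rw [ZMod.natCast_eq_zero_iff] at h0
        have ha0 : (a : ℕ) < n := a.2
        have hb0 : (b : ℕ) < n := b.2
        rcases Nat.eq_zero_or_pos ((a : ℕ) + (b : ℕ)) with h1 | h1
        · exact Fin.ext (by omega)
        · have := Nat.le_of_dvd h1 h0
          exact absurd this (by omega)
      rcases mem_I (hI ▸ hh) with rfl | rfl <;> rcases mem_I (hI ▸ hk') with rfl | rfl <;>
          simp only [one_mul, mul_one, sr_mul_r, r_mul_sr, sr_mul_sr, r_mul_r] at heq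
      · simp only [r.injEq] at heq
        exact (hcast l k (by rw [heq])).symm
      · exact absurd heq (by simp)
      · exact absurd heq (by simp)
      · simp only [r.injEq] at heq
        exact (hcast' l k (by rw [heq]; ring)).symm
    · intro q
      obtain ⟨a, rfl⟩ := Quotient.mk''_surjective q
      have hself : ∀ i : ZMod p, DoubleCoset.mk I I (r ((i.val : ℕ) : ZMod p)) = DoubleCoset.mk I I (r i) := by
        intro i
        rw [ZMod.natCast_rightInverse i]
      have hneg : ∀ i : ZMod p, DoubleCoset.mk I I (r (-i)) = DoubleCoset.mk I I (r i) := by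
        intro i
        rw [DoubleCoset.eq]
        exact ⟨sr 0, Subgroup.mem_zpowers _, sr 0, Subgroup.mem_zpowers _, by
          simp only [sr_mul_r, r_mul_sr, sr_mul_sr, zero_add, zero_sub, neg_neg]⟩
      have hsr : ∀ i : ZMod p, DoubleCoset.mk I I (r i) = DoubleCoset.mk I I (sr i) := by
        intro i
        rw [DoubleCoset.eq]
        exact ⟨sr 0, Subgroup.mem_zpowers _, 1, one_mem _, by
          simp only [sr_mul_r, mul_one, zero_add]⟩
      -- reduce to rotations
      have main : ∀ i : ZMod p, ∃ k : Fin n, DoubleCoset.mk I I (r ((k : ℕ) : ZMod p)) = DoubleCoset.mk I I (r i) := by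
        intro i
        have hval : i.val < p := ZMod.val_lt i
        by_cases hm : i.val ≤ (p - 1) / 2
        · exact ⟨⟨i.val, by omega⟩, hself i⟩
        · refine ⟨⟨p - i.val, by omega⟩, ?_⟩
          have : ((p - i.val : ℕ) : ZMod p) = -i := by
            push_cast [Nat.cast_sub (le_of_lt hval)]
            rw [ZMod.natCast_self, ZMod.natCast_rightInverse i]
            ring
          rw [show (((⟨p - i.val, by omega⟩ : Fin n) : ℕ) : ZMod p) = ((p - i.val : ℕ) : ZMod p) from rfl,
            this]
          exact hneg i
      cases a with
      | r i => exact main i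
      | sr i =>
        obtain ⟨k, hk⟩ := main i
        exact ⟨k, hk.trans (hsr i)⟩
  exact Nat.card_eq_of_equiv_fin (Equiv.ofBijective _ key).symm

lemma card_bot (hp : p.Prime) :
    Nat.card (DoubleCoset.Quotient ((⊥ : Subgroup (DihedralGroup p)) : Set (DihedralGroup p))
        ((Subgroup.zpowers (sr (0 : ZMod p)) : Subgroup (DihedralGroup p)) : Set (DihedralGroup p)))
      = p := by
  haveI : NeZero p := ⟨hp.ne_zero⟩
  set I := (Subgroup.zpowers (sr (0 : ZMod p)) : Subgroup (DihedralGroup p)) with hI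
  have hset : DoubleCoset.setoid ((⊥ : Subgroup (DihedralGroup p)) : Set (DihedralGroup p)) (I : Set (DihedralGroup p))
      = QuotientGroup.leftRel I := by
    ext a b
    exact iff_of_eq (congrFun (congrFun (DoubleCoset.bot_rel_eq_leftRel I) a) b)
  have : Nat.card (DoubleCoset.Quotient ((⊥ : Subgroup (DihedralGroup p)) : Set (DihedralGroup p))
      (I : Set (DihedralGroup p))) = I.index := by
    show Nat.card (Quotient (DoubleCoset.setoid _ _)) = I.index
    rw [hset]
    rfl
  rw [this]
  have h1 : Nat.card I * I.index = Nat.card (DihedralGroup p) := Subgroup.card_mul_index I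
  have h2 : Nat.card I = 2 := by
    rw [hI, Nat.card_zpowers, orderOf_sr]
  rw [h2, DihedralGroup.nat_card] at h1
  omega

lemma card_one_of_rel {L : Subgroup (DihedralGroup p)}
    (h : ∀ a b : DihedralGroup p, DoubleCoset.mk L (Subgroup.zpowers (sr (0 : ZMod p))) a
      = DoubleCoset.mk L (Subgroup.zpowers (sr (0 : ZMod p))) b) :
    Nat.card (DoubleCoset.Quotient (L : Set (DihedralGroup p))
        ((Subgroup.zpowers (sr (0 : ZMod p)) : Subgroup (DihedralGroup p)) : Set (DihedralGroup p)))
      = 1 := by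
  rw [Nat.card_eq_one_iff_unique]
  constructor
  · constructor
    intro q q'
    obtain ⟨a, rfl⟩ := Quotient.mk''_surjective q
    obtain ⟨b, rfl⟩ := Quotient.mk''_surjective q'
    exact h a b
  · exact ⟨DoubleCoset.mk L _ 1⟩

end TenNegOneAux

open DihedralGroup TenNegOneAux

/-- In the dihedral group `G = D₂ₚ` (`p` an odd prime) with reflection subgroup
`I = ⟨x⟩`: the number of `(I,I)`-double cosets is `1 + (p-1)/2`, and the marks of
the tensor induction `Ten^G_I(-1)` are `-1` at the trivial subgroup, 
`(-1) ^ (1 + (p-1)/2)` at `I`, `-1` at `Cₚ`, and `-1` at `G`. -/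
theorem tenNegOne_marks_dihedral (p : ℕ) (hp : p.Prime) (hodd : Odd p) :
    Nat.card (DoubleCoset.Quotient
        ((Subgroup.zpowers (DihedralGroup.sr (0 : ZMod p)) : Subgroup (DihedralGroup p)) : Set (DihedralGroup p))
        ((Subgroup.zpowers (DihedralGroup.sr (0 : ZMod p)) : Subgroup (DihedralGroup p)) : Set (DihedralGroup p)))
      = 1 + (p - 1) / 2 ∧
    tenNegOne (Subgroup.zpowers (DihedralGroup.sr (0 : ZMod p))) (⊥ : Subgroup (DihedralGroup p)) = -1 ∧
    tenNegOne (Subgroup.zpowers (DihedralGroup.sr (0 : ZMod p)))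
        (Subgroup.zpowers (DihedralGroup.sr (0 : ZMod p))) = (-1) ^ (1 + (p - 1) / 2) ∧
    tenNegOne (Subgroup.zpowers (DihedralGroup.sr (0 : ZMod p)))
        (Subgroup.zpowers (DihedralGroup.r (1 : ZMod p))) = -1 ∧
    tenNegOne (Subgroup.zpowers (DihedralGroup.sr (0 : ZMod p)))
        (⊤ : Subgroup (DihedralGroup p)) = -1 := by
  haveI : NeZero p := ⟨hp.ne_zero⟩
  refine ⟨count_II hp hodd, ?_, ?_, ?_, ?_⟩
  · show ((-1 : ℤ)) ^ _ = -1
    rw [card_bot hp]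
    exact hodd.neg_one_pow
  · show ((-1 : ℤ)) ^ _ = _
    rw [count_II hp hodd]
  · show ((-1 : ℤ)) ^ _ = -1
    rw [card_one_of_rel ?_, pow_one]
    intro a b
    rw [DoubleCoset.eq]
    cases a with
    | r i =>
      cases b with
      | r j => exact ⟨r (j - i), r_mem_C _, 1, one_mem _, by simp⟩
      | sr j => exact ⟨r (-j - i), r_mem_C _, sr 0, Subgroup.mem_zpowers _, by
          simp only [r_mul_r, r_mul_sr, mul_one]; ring_nf⟩
    | sr i =>
      cases b with
      | r j => exact ⟨r (j + i), r_mem_C _, sr 0, Subgroup.mem_zpowers _, by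
          simp only [r_mul_sr, sr_mul_sr, mul_one]; ring_nf⟩
      | sr j => exact ⟨r (i - j), r_mem_C _, 1, one_mem _, by
          simp only [r_mul_sr, mul_one]; ring_nf⟩
  · show ((-1 : ℤ)) ^ _ = -1
    rw [card_one_of_rel ?_, pow_one]
    intro a b
    rw [DoubleCoset.eq]
    exact ⟨b * a⁻¹, Subgroup.mem_top _, 1, one_mem _, by group⟩
end

section
/- For a prime p ≡ 1 (mod 4), the dihedral group D₂ₚ is residual with respect to B^×: the subgroup of B^×(D₂ₚ) generated by all Ten^{D₂ₚ}_H(−1) for H ≤ D₂ₚ has index 2 in B^×(D₂ₚ), which has order 2³. For p ≡ 3 (mod 4), these elements generate all of B^×(D₂ₚ). -/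
open Pointwise

open DihedralGroup

namespace DRes

@[simp] theorem inv_r' {p : ℕ} (i : ZMod p) : (r i : DihedralGroup p)⁻¹ = r (-i) := rfl
@[simp] theorem inv_sr' {p : ℕ} (i : ZMod p) : (sr i : DihedralGroup p)⁻¹ = sr i := rfl

variable {p : ℕ}

/-- The reflection subgroup `{1, sr i}`. -/
def Rsub (p : ℕ) (i : ZMod p) : Subgroup (DihedralGroup p) where
  carrier := {r 0, sr i}
  one_mem' := Or.inl rfl
  mul_mem' := by rintro a b (rfl | rfl) (rfl | rfl) <;> simp [one_def, -r_zero]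
  inv_mem' := by rintro a (rfl | rfl) <;> simp [one_def, -r_zero]

/-- The rotation subgroup. -/
def Csub (p : ℕ) : Subgroup (DihedralGroup p) where
  carrier := Set.range r
  one_mem' := ⟨0, rfl⟩
  mul_mem' := by rintro a b ⟨i, rfl⟩ ⟨j, rfl⟩; exact ⟨i + j, (r_mul_r i j).symm⟩
  inv_mem' := by rintro a ⟨i, rfl⟩; exact ⟨-i, rfl⟩

theorem mem_Rsub {i : ZMod p} {x : DihedralGroup p} : x ∈ Rsub p i ↔ x = r 0 ∨ x = sr i := Iff.rfl
theorem mem_Csub {x : DihedralGroup p} : x ∈ Csub p ↔ ∃ k, r k = x := Iff.rfl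

theorem two_ne_zero' (hp : p.Prime) (h2 : p % 2 = 1) : (2 : ZMod p) ≠ 0 := by
  haveI : NeZero p := ⟨hp.ne_zero⟩
  intro h
  have : ((2 : ℕ) : ZMod p) = 0 := by exact_mod_cast h
  rw [ZMod.natCast_eq_zero_iff] at this
  have := (Nat.prime_dvd_prime_iff_eq hp Nat.prime_two).mp this
  omega

theorem fixed_iff {K : Subgroup (DihedralGroup p)} {h g : DihedralGroup p} :
    h • (g : DihedralGroup p ⧸ K) = g ↔ g⁻¹ * h⁻¹ * g ∈ K := by
  rw [MulAction.Quotient.smul_mk, QuotientGroup.eq]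
  have : (h • g)⁻¹ * g = g⁻¹ * h⁻¹ * g := by rw [smul_eq_mul]; group
  rw [this]

theorem card_Rsub (i : ZMod p) : Nat.card (Rsub p i) = 2 := by
  rw [show (Nat.card (Rsub p i)) = ({r 0, sr i} : Set (DihedralGroup p)).ncard from
    Nat.card_coe_set_eq _]
  exact Set.ncard_pair (fun h => by cases h)

theorem card_Csub : Nat.card (Csub p) = p := by
  have e : ZMod p ≃ (Csub p) := Equiv.ofInjective r (fun a b h => by injection h)
  rw [← Nat.card_congr e, Nat.card_zmod]

theorem index_Rsub (i : ZMod p) : (Rsub p i).index = p := by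
  have := Subgroup.card_mul_index (Rsub p i)
  rw [card_Rsub, DihedralGroup.nat_card] at this
  omega

theorem index_Csub (hp : p.Prime) : (Csub p).index = 2 := by
  have := Subgroup.card_mul_index (Csub p)
  rw [card_Csub, DihedralGroup.nat_card] at this
  have hp0 := hp.pos
  nlinarith [this]

theorem mark_K_bot (K : Subgroup (DihedralGroup p)) :
    burnsideMark (DihedralGroup p) K ⊥ = K.index := by
  unfold burnsideMark
  rw [Subgroup.index]
  congr 1
  exact Nat.card_congr (Equiv.subtypeUnivEquiv (fun x => by
    intro h hh
    rw [Subgroup.mem_bot] at hh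
    subst hh; exact one_smul _ x))

theorem r_pow (k : ZMod p) (m : ℕ) : (r k : DihedralGroup p) ^ m = r (m • k) := by
  induction m with
  | zero => simp [one_def, -r_zero]
  | succ n ih => rw [pow_succ, ih, r_mul_r, succ_nsmul]

theorem rot_mem_of_mem {H : Subgroup (DihedralGroup p)} (hp : p.Prime) {k : ZMod p}
    (hk : k ≠ 0) (h : r k ∈ H) (m : ZMod p) : r m ∈ H := by
  haveI : Fact p.Prime := ⟨hp⟩
  have h2 : r k ^ (m * k⁻¹).val = r ((m * k⁻¹).val • k) := r_pow k _
  have h3 : ((m * k⁻¹).val • k : ZMod p) = m := by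
    rw [nsmul_eq_mul, ZMod.natCast_val, ZMod.cast_id]
    field_simp
  rw [h3] at h2
  exact h2 ▸ pow_mem h _

theorem subgroup_classification (hp : p.Prime) (H : Subgroup (DihedralGroup p)) :
    H = ⊥ ∨ (∃ i, H = Rsub p i) ∨ H = Csub p ∨ H = ⊤ := by
  by_cases hC : ∃ i, sr i ∈ H
  · obtain ⟨i, hi⟩ := hC
    by_cases hrot : ∃ k, k ≠ 0 ∧ r k ∈ H
    · -- H = ⊤
      right; right; right
      obtain ⟨k, hk, hrk⟩ := hrot
      rw [eq_top_iff]
      rintro (m | m) _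
      · exact rot_mem_of_mem hp hk hrk m
      · have : sr i * r (m - i) = sr m := by rw [sr_mul_r]; ring_nf
        exact this ▸ H.mul_mem hi (rot_mem_of_mem hp hk hrk (m - i))
    · -- H = Rsub p i
      push_neg at hrot
      right; left; refine ⟨i, ?_⟩
      ext x
      constructor
      · intro hx
        cases x with
        | r k =>
          left
          by_cases h0 : k = 0
          · rw [h0]
          · exact absurd hx (by simpa using hrot k h0)
        | sr m =>
          right
          have : r (i - m) ∈ H := by
            have := H.mul_mem hx hi
            rwa [sr_mul_sr] at this
          by_cases h0 : i - m = 0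
          · have : m = i := by linear_combination -h0
            rw [this]; rfl
          · exact absurd this (by simpa using hrot _ h0)
      · rintro (rfl | rfl)
        · exact (one_def ▸ H.one_mem :)
        · exact hi
  · push_neg at hC
    by_cases hrot : ∃ k, k ≠ 0 ∧ r k ∈ H
    · right; right; left
      obtain ⟨k, hk, hrk⟩ := hrot
      ext x
      constructor
      · intro hx
        cases x with
        | r m => exact ⟨m, rfl⟩
        | sr m => exact absurd hx (hC m)
      · rintro ⟨m, rfl⟩
        exact rot_mem_of_mem hp hk hrk m
    · left
      push_neg at hrot
      rw [eq_bot_iff]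
      intro x hx
      cases x with
      | r k =>
        by_cases h0 : k = 0
        · simp [h0, Subgroup.mem_bot, ← one_def]
        · exact absurd hx (by simpa using hrot k h0)
      | sr m => exact absurd hx (hC m)


theorem mark_zero {K H : Subgroup (DihedralGroup p)} (h : DihedralGroup p) (hh : h ∈ H)
    (hcond : ∀ g : DihedralGroup p, g⁻¹ * h⁻¹ * g ∉ K) :
    burnsideMark (DihedralGroup p) K H = 0 := by
  unfold burnsideMark
  norm_cast
  have : IsEmpty {x : DihedralGroup p ⧸ K // ∀ h ∈ H, h • x = x} := by
    constructor
    rintro ⟨x, hx⟩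
    obtain ⟨g, rfl⟩ := QuotientGroup.mk_surjective x
    exact hcond g (fixed_iff.mp (hx h hh))
  exact Nat.card_of_isEmpty

theorem mark_bot_R (i : ZMod p) :
    burnsideMark (DihedralGroup p) ⊥ (Rsub p i) = 0 := by
  refine mark_zero (sr i) (Or.inr rfl) ?_
  rintro (k | m) h <;> simp [Subgroup.mem_bot, one_def, -r_zero] at h

theorem mark_bot_C (hp : p.Prime) :
    burnsideMark (DihedralGroup p) ⊥ (Csub p) = 0 := by
  haveI : Fact (1 < p) := ⟨hp.one_lt⟩
  refine mark_zero (r 1) ⟨1, rfl⟩ ?_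
  rintro (k | m) h <;> simp [Subgroup.mem_bot, one_def, -r_zero] at h

theorem mark_bot_top (hp : p.Prime) :
    burnsideMark (DihedralGroup p) ⊥ ⊤ = 0 := by
  refine mark_zero (sr 0) trivial ?_
  rintro (k | m) h <;> simp [Subgroup.mem_bot, one_def, -r_zero] at h

theorem mark_R_C (hp : p.Prime) (j : ZMod p) :
    burnsideMark (DihedralGroup p) (Rsub p j) (Csub p) = 0 := by
  haveI : Fact (1 < p) := ⟨hp.one_lt⟩
  refine mark_zero (r 1) ⟨1, rfl⟩ ?_
  rintro (k | m) h <;> simp [mem_Rsub, -r_zero] at h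

theorem mark_R_top (hp : p.Prime) (j : ZMod p) :
    burnsideMark (DihedralGroup p) (Rsub p j) ⊤ = 0 := by
  haveI : Fact (1 < p) := ⟨hp.one_lt⟩
  refine mark_zero (r 1) trivial ?_
  rintro (k | m) h <;> simp [mem_Rsub, -r_zero] at h

theorem mark_C_R (i : ZMod p) :
    burnsideMark (DihedralGroup p) (Csub p) (Rsub p i) = 0 := by
  refine mark_zero (sr i) (Or.inr rfl) ?_
  rintro (k | m) h <;> obtain ⟨t, ht⟩ := h <;> cases ht

theorem mark_C_top :
    burnsideMark (DihedralGroup p) (Csub p) ⊤ = 0 := by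
  refine mark_zero (sr 0) trivial ?_
  rintro (k | m) h <;> obtain ⟨t, ht⟩ := h <;> cases ht

theorem mark_top (H : Subgroup (DihedralGroup p)) :
    burnsideMark (DihedralGroup p) ⊤ H = 1 := by
  unfold burnsideMark
  norm_cast
  haveI := QuotientGroup.subsingleton_quotient_top (G := DihedralGroup p)
  rw [Nat.card_eq_one_iff_unique]
  constructor
  · exact ⟨fun a b => Subtype.ext (Subsingleton.elim _ _)⟩
  · exact ⟨⟨(1 : DihedralGroup p ⧸ ⊤), fun h _ => Subsingleton.elim _ _⟩⟩



theorem mark_R_R (hp : p.Prime) (h2 : p % 2 = 1) (j i : ZMod p) :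
    burnsideMark (DihedralGroup p) (Rsub p j) (Rsub p i) = 1 := by
  haveI : Fact p.Prime := ⟨hp⟩
  have htwo : (2 : ZMod p) ≠ 0 := two_ne_zero' hp h2
  unfold burnsideMark
  norm_cast
  rw [Nat.card_eq_one_iff_unique]
  have key : ∀ g : DihedralGroup p, (∀ h ∈ Rsub p i, h • (g : DihedralGroup p ⧸ Rsub p j) = g) ↔
      (g = r ((j - i) * 2⁻¹) ∨ g = sr ((i + j) * 2⁻¹)) := by
    intro g
    constructor
    · intro hg
      have h1 := fixed_iff.mp (hg (sr i) (Or.inr rfl))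
      cases g with
      | r k =>
        left
        simp [mem_Rsub, -r_zero] at h1
        have : k = (j - i) * 2⁻¹ := by
          field_simp
          linear_combination h1
        rw [this]
      | sr m =>
        right
        simp [mem_Rsub, -r_zero] at h1
        have : m = (i + j) * 2⁻¹ := by
          field_simp
          linear_combination h1
        rw [this]
    · intro hg h hh
      rcases hh with rfl | rfl
      · rw [show (r 0 : DihedralGroup p) = 1 from rfl]; exact one_smul _ _
      · rw [fixed_iff]
        rcases hg with rfl | rfl
        · refine Or.inr ?_
          simp only [inv_r', inv_sr', r_mul_sr, sr_mul_r]
          congr 1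
          field_simp
          ring
        · refine Or.inr ?_
          simp only [inv_r', inv_sr', sr_mul_sr, r_mul_sr, sr_mul_r, r_mul_r]
          congr 1
          field_simp
          ring
  constructor
  · constructor
    rintro ⟨x, hx⟩ ⟨y, hy⟩
    apply Subtype.ext
    obtain ⟨g, rfl⟩ := QuotientGroup.mk_surjective x
    obtain ⟨g', rfl⟩ := QuotientGroup.mk_surjective y
    have hg := (key g).mp hx
    have hg' := (key g').mp hy
    have main : ((r ((j - i) * 2⁻¹) : DihedralGroup p) : DihedralGroup p ⧸ Rsub p j)
        = ((sr ((i + j) * 2⁻¹) : DihedralGroup p) : DihedralGroup p ⧸ Rsub p j) := by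
      rw [QuotientGroup.eq]
      refine Or.inr ?_
      simp only [inv_r', r_mul_sr]
      congr 1
      field_simp
      ring
    rcases hg with rfl | rfl <;> rcases hg' with rfl | rfl
    · rfl
    · exact main
    · exact main.symm
    · rfl
  · refine ⟨⟨((r ((j - i) * 2⁻¹) : DihedralGroup p) : DihedralGroup p ⧸ Rsub p j), ?_⟩⟩
    exact (key _).mpr (Or.inl rfl)

theorem mark_C_C (hp : p.Prime) :
    burnsideMark (DihedralGroup p) (Csub p) (Csub p) = 2 := by
  unfold burnsideMark
  have : Nat.card {x : DihedralGroup p ⧸ Csub p // ∀ h ∈ Csub p, h • x = x}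
      = Nat.card (DihedralGroup p ⧸ Csub p) := by
    refine Nat.card_congr (Equiv.subtypeUnivEquiv ?_)
    intro x h hh
    obtain ⟨g, rfl⟩ := QuotientGroup.mk_surjective x
    obtain ⟨a, rfl⟩ := hh
    rw [fixed_iff]
    cases g with
    | r k => exact ⟨-a, by simp⟩
    | sr m => exact ⟨a, by simp⟩
  rw [this, show Nat.card (DihedralGroup p ⧸ Csub p) = (Csub p).index from rfl, index_Csub hp]
  norm_cast

theorem dmk_surjective (L H : Subgroup (DihedralGroup p))
    (x : DoubleCoset.Quotient (L : Set (DihedralGroup p)) (H : Set (DihedralGroup p))) :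
    ∃ a, DoubleCoset.mk L H a = x := ⟨x.out, DoubleCoset.out_eq' L H x⟩


theorem dq_left_top (L : Subgroup (DihedralGroup p)) :
    Nat.card (DoubleCoset.Quotient (L : Set (DihedralGroup p)) ((⊤ : Subgroup (DihedralGroup p)) : Set (DihedralGroup p))) = 1 := by
  rw [Nat.card_eq_one_iff_unique]
  refine ⟨⟨?_⟩, ⟨DoubleCoset.mk _ _ 1⟩⟩
  intro x y
  obtain ⟨a, rfl⟩ := dmk_surjective L ⊤ x
  obtain ⟨b, rfl⟩ := dmk_surjective L ⊤ y
  rw [DoubleCoset.eq]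
  exact ⟨1, L.one_mem, a⁻¹ * b, trivial, by group⟩

theorem dq_top_right (H : Subgroup (DihedralGroup p)) :
    Nat.card (DoubleCoset.Quotient ((⊤ : Subgroup (DihedralGroup p)) : Set (DihedralGroup p)) (H : Set (DihedralGroup p))) = 1 := by
  rw [Nat.card_eq_one_iff_unique]
  refine ⟨⟨?_⟩, ⟨DoubleCoset.mk _ _ 1⟩⟩
  intro x y
  obtain ⟨a, rfl⟩ := dmk_surjective ⊤ H x
  obtain ⟨b, rfl⟩ := dmk_surjective ⊤ H y
  rw [DoubleCoset.eq]
  exact ⟨b * a⁻¹, trivial, 1, H.one_mem, by group⟩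

theorem dq_C_R (j : ZMod p) :
    Nat.card (DoubleCoset.Quotient ((Csub p) : Set (DihedralGroup p)) ((Rsub p j) : Set (DihedralGroup p))) = 1 := by
  rw [Nat.card_eq_one_iff_unique]
  refine ⟨⟨?_⟩, ⟨DoubleCoset.mk _ _ 1⟩⟩
  intro x y
  obtain ⟨a, rfl⟩ := dmk_surjective (Csub p) (Rsub p j) x
  obtain ⟨b, rfl⟩ := dmk_surjective (Csub p) (Rsub p j) y
  rw [DoubleCoset.eq]
  cases a with
  | r k =>
    cases b with
    | r k' => exact ⟨r (k' - k), ⟨_, rfl⟩, r 0, Or.inl rfl, by simp⟩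
    | sr m' => exact ⟨r (j - m' - k), ⟨_, rfl⟩, sr j, Or.inr rfl, by simp⟩
  | sr m =>
    cases b with
    | r k' => exact ⟨r (k' - j + m), ⟨_, rfl⟩, sr j, Or.inr rfl, by simp⟩
    | sr m' => exact ⟨r (m - m'), ⟨_, rfl⟩, r 0, Or.inl rfl, by simp⟩

theorem dq_R_C (i : ZMod p) :
    Nat.card (DoubleCoset.Quotient ((Rsub p i) : Set (DihedralGroup p)) ((Csub p) : Set (DihedralGroup p))) = 1 := by
  rw [Nat.card_eq_one_iff_unique]
  refine ⟨⟨?_⟩, ⟨DoubleCoset.mk _ _ 1⟩⟩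
  intro x y
  obtain ⟨a, rfl⟩ := dmk_surjective (Rsub p i) (Csub p) x
  obtain ⟨b, rfl⟩ := dmk_surjective (Rsub p i) (Csub p) y
  rw [DoubleCoset.eq]
  cases a with
  | r k =>
    cases b with
    | r k' => exact ⟨r 0, Or.inl rfl, r (k' - k), ⟨_, rfl⟩, by simp⟩
    | sr m' => exact ⟨sr i, Or.inr rfl, r (m' - i - k), ⟨_, rfl⟩, by simp⟩
  | sr m =>
    cases b with
    | r k' => exact ⟨sr i, Or.inr rfl, r (k' - m + i), ⟨_, rfl⟩, by simp⟩
    | sr m' => exact ⟨r 0, Or.inl rfl, r (m' - m), ⟨_, rfl⟩, by simp⟩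


theorem dq_bot_bot :
    Nat.card (DoubleCoset.Quotient ((⊥ : Subgroup (DihedralGroup p)) : Set (DihedralGroup p))
      ((⊥ : Subgroup (DihedralGroup p)) : Set (DihedralGroup p))) = 2 * p := by
  rw [← DihedralGroup.nat_card]
  refine (Nat.card_congr (Equiv.ofBijective (fun g => DoubleCoset.mk ⊥ ⊥ g) ⟨?_, ?_⟩)).symm
  · intro a b h
    rw [DoubleCoset.eq] at h
    obtain ⟨h, hh, k, hk, rfl⟩ := h
    rw [Subgroup.mem_bot] at hh hk
    rw [hh, hk, one_mul, mul_one]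
  · intro x; exact dmk_surjective ⊥ ⊥ x

theorem dq_R_bot (i : ZMod p) :
    Nat.card (DoubleCoset.Quotient ((Rsub p i) : Set (DihedralGroup p))
      ((⊥ : Subgroup (DihedralGroup p)) : Set (DihedralGroup p))) = p := by
  refine Eq.trans (Nat.card_congr (Equiv.ofBijective
    (fun k : ZMod p => DoubleCoset.mk (Rsub p i) ⊥ (r k)) ⟨?_, ?_⟩).symm) (Nat.card_zmod p)
  · intro a b h
    rw [DoubleCoset.eq] at h
    obtain ⟨h, hh, k, hk, heq⟩ := h
    rw [Subgroup.mem_bot] at hk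
    subst hk
    rcases mem_Rsub.mp hh with rfl | rfl <;> simp at heq
    exact (by rw [heq] : b = a).symm ▸ rfl
  · intro x
    obtain ⟨a, rfl⟩ := dmk_surjective (Rsub p i) ⊥ x
    cases a with
    | r k => exact ⟨k, rfl⟩
    | sr m =>
      refine ⟨m - i, (DoubleCoset.eq _ _ _ _).mpr ⟨sr i, Or.inr rfl, 1, Subgroup.one_mem _, by simp⟩⟩

theorem dq_bot_R (j : ZMod p) :
    Nat.card (DoubleCoset.Quotient ((⊥ : Subgroup (DihedralGroup p)) : Set (DihedralGroup p))
      ((Rsub p j) : Set (DihedralGroup p))) = p := by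
  refine Eq.trans (Nat.card_congr (Equiv.ofBijective
    (fun k : ZMod p => DoubleCoset.mk ⊥ (Rsub p j) (r k)) ⟨?_, ?_⟩).symm) (Nat.card_zmod p)
  · intro a b h
    rw [DoubleCoset.eq] at h
    obtain ⟨h, hh, k, hk, heq⟩ := h
    rw [Subgroup.mem_bot] at hh
    subst hh
    rcases mem_Rsub.mp hk with rfl | rfl <;> simp at heq
    exact (by rw [heq] : b = a).symm ▸ rfl
  · intro x
    obtain ⟨a, rfl⟩ := dmk_surjective ⊥ (Rsub p j) x
    cases a with
    | r k => exact ⟨k, rfl⟩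
    | sr m =>
      refine ⟨j - m, (DoubleCoset.eq _ _ _ _).mpr ⟨1, Subgroup.one_mem _, sr j, Or.inr rfl, by simp⟩⟩

theorem dq_bot_C :
    Nat.card (DoubleCoset.Quotient ((⊥ : Subgroup (DihedralGroup p)) : Set (DihedralGroup p))
      ((Csub p) : Set (DihedralGroup p))) = 2 := by
  rw [show (2 : ℕ) = Nat.card Bool by simp [Nat.card_eq_fintype_card]]
  refine (Nat.card_congr (Equiv.ofBijective
    (fun b => DoubleCoset.mk ⊥ (Csub p) (cond b (sr 0) (r 0))) ⟨?_, ?_⟩)).symm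
  · intro a b h
    cases a <;> cases b <;> simp only [cond] at h <;> try rfl
    · rw [DoubleCoset.eq] at h
      obtain ⟨h, hh, k, hk, heq⟩ := h
      rw [Subgroup.mem_bot] at hh
      subst hh
      obtain ⟨t, rfl⟩ := hk
      simp at heq
    · rw [DoubleCoset.eq] at h
      obtain ⟨h, hh, k, hk, heq⟩ := h
      rw [Subgroup.mem_bot] at hh
      subst hh
      obtain ⟨t, rfl⟩ := hk
      simp [one_def, -r_zero] at heq
  · intro x
    obtain ⟨a, rfl⟩ := dmk_surjective ⊥ (Csub p) x
    cases a with
    | r k => exact ⟨false, (DoubleCoset.eq _ _ _ _).mpr ⟨1, Subgroup.one_mem _, r k, ⟨k, rfl⟩, by simp⟩⟩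
    | sr m => exact ⟨true, (DoubleCoset.eq _ _ _ _).mpr ⟨1, Subgroup.one_mem _, r m, ⟨m, rfl⟩, by simp⟩⟩

theorem dq_C_bot :
    Nat.card (DoubleCoset.Quotient ((Csub p) : Set (DihedralGroup p))
      ((⊥ : Subgroup (DihedralGroup p)) : Set (DihedralGroup p))) = 2 := by
  rw [show (2 : ℕ) = Nat.card Bool by simp [Nat.card_eq_fintype_card]]
  refine (Nat.card_congr (Equiv.ofBijective
    (fun b => DoubleCoset.mk (Csub p) ⊥ (cond b (sr 0) (r 0))) ⟨?_, ?_⟩)).symm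
  · intro a b h
    cases a <;> cases b <;> simp only [cond] at h <;> try rfl
    · rw [DoubleCoset.eq] at h
      obtain ⟨h, hh, k, hk, heq⟩ := h
      rw [Subgroup.mem_bot] at hk
      subst hk
      obtain ⟨t, rfl⟩ := hh
      simp at heq
    · rw [DoubleCoset.eq] at h
      obtain ⟨h, hh, k, hk, heq⟩ := h
      rw [Subgroup.mem_bot] at hk
      subst hk
      obtain ⟨t, rfl⟩ := hh
      simp [one_def, -r_zero] at heq
  · intro x
    obtain ⟨a, rfl⟩ := dmk_surjective (Csub p) ⊥ x
    cases a with
    | r k => exact ⟨false, (DoubleCoset.eq _ _ _ _).mpr ⟨r k, ⟨k, rfl⟩, 1, Subgroup.one_mem _, by simp⟩⟩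
    | sr m => exact ⟨true, (DoubleCoset.eq _ _ _ _).mpr ⟨r (-m), ⟨-m, rfl⟩, 1, Subgroup.one_mem _, by simp⟩⟩

theorem dq_C_C :
    Nat.card (DoubleCoset.Quotient ((Csub p) : Set (DihedralGroup p))
      ((Csub p) : Set (DihedralGroup p))) = 2 := by
  rw [show (2 : ℕ) = Nat.card Bool by simp [Nat.card_eq_fintype_card]]
  refine (Nat.card_congr (Equiv.ofBijective
    (fun b => DoubleCoset.mk (Csub p) (Csub p) (cond b (sr 0) (r 0))) ⟨?_, ?_⟩)).symm
  · intro a b h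
    cases a <;> cases b <;> simp only [cond] at h <;> try rfl
    · rw [DoubleCoset.eq] at h
      obtain ⟨h, hh, k, hk, heq⟩ := h
      obtain ⟨t, rfl⟩ := hh
      obtain ⟨u, rfl⟩ := hk
      simp at heq
    · rw [DoubleCoset.eq] at h
      obtain ⟨h, hh, k, hk, heq⟩ := h
      obtain ⟨t, rfl⟩ := hh
      obtain ⟨u, rfl⟩ := hk
      simp [one_def, -r_zero] at heq
  · intro x
    obtain ⟨a, rfl⟩ := dmk_surjective (Csub p) (Csub p) x
    cases a with
    | r k =>
      exact ⟨false, (DoubleCoset.eq _ _ _ _).mpr ⟨r k, ⟨k, rfl⟩, r 0, ⟨0, rfl⟩, by simp⟩⟩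
    | sr m =>
      exact ⟨true, (DoubleCoset.eq _ _ _ _).mpr ⟨r (-m), ⟨-m, rfl⟩, r 0, ⟨0, rfl⟩, by simp⟩⟩

theorem dq_R_R (hp : p.Prime) (h2 : p % 2 = 1) (i j : ZMod p) :
    Nat.card (DoubleCoset.Quotient ((Rsub p i) : Set (DihedralGroup p))
      ((Rsub p j) : Set (DihedralGroup p))) = (p + 1) / 2 := by
  haveI : Fact p.Prime := ⟨hp⟩
  haveI : NeZero p := ⟨hp.ne_zero⟩
  have htwo := two_ne_zero' hp h2
  have hp2 := hp.two_le
  set q := (p + 1) / 2 with hq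
  have hqp : 2 * q = p + 1 := by omega
  set e : ZMod p := (j - i) * 2⁻¹ with he
  have h2e : e + e = j - i := by
    rw [he]
    field_simp
    ring
  have hval : ∀ t : Fin q, ((t : ℕ) : ZMod p).val = (t : ℕ) :=
    fun t => ZMod.val_cast_of_lt (by omega)
  refine Eq.trans (Nat.card_congr (Equiv.ofBijective
    (fun t : Fin q => DoubleCoset.mk (Rsub p i) (Rsub p j) (r (e + ((t : ℕ) : ZMod p))))
      ⟨?_, ?_⟩).symm) (by simp [Nat.card_eq_fintype_card])
  · intro t t' hmk
    rw [DoubleCoset.eq] at hmk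
    obtain ⟨h, hh, c, hc, heq⟩ := hmk
    rcases mem_Rsub.mp hh with rfl | rfl <;> rcases mem_Rsub.mp hc with rfl | rfl <;>
      simp at heq
    · -- e + t' = e + t
      have h1 : ((t' : ℕ) : ZMod p) = ((t : ℕ) : ZMod p) := by linear_combination heq
      have := congrArg ZMod.val h1
      rw [hval, hval] at this
      exact (Fin.ext this).symm
    · have h1 : (((t : ℕ) + (t' : ℕ) : ℕ) : ZMod p) = 0 := by
        push_cast
        linear_combination heq - h2e
      rw [ZMod.natCast_eq_zero_iff] at h1
      have h0 : (t : ℕ) + (t' : ℕ) = 0 := Nat.eq_zero_of_dvd_of_lt h1 (by omega)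
      have : (t : ℕ) = (t' : ℕ) := by omega
      exact Fin.ext this
  · have claim : ∀ k : ZMod p, ∃ t : Fin q,
        DoubleCoset.mk (Rsub p i) (Rsub p j) (r (e + ((t : ℕ) : ZMod p))) = DoubleCoset.mk _ _ (r k) := by
      intro k
      set d : ZMod p := k - e with hd
      have hdv : ((d.val : ℕ) : ZMod p) = d := by
        rw [ZMod.natCast_val, ZMod.cast_id]
      by_cases hlt : d.val < q
      · refine ⟨⟨d.val, hlt⟩, ?_⟩
        congr 1
        rw [hdv, hd]
        congr 1
        ring
      · have hd0 : d ≠ 0 := by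
          intro h0
          rw [h0, ZMod.val_zero] at hlt
          omega
        have hdlt := ZMod.val_lt d
        refine ⟨⟨p - d.val, by omega⟩, ?_⟩
        have hnegval : (((p - d.val : ℕ)) : ZMod p) = -d := by
          have : ((p - d.val : ℕ) : ZMod p) = ((p : ℕ) : ZMod p) - ((d.val : ℕ) : ZMod p) := by
            push_cast [Nat.cast_sub (le_of_lt hdlt)]
            ring
          rw [this, ZMod.natCast_self, hdv]
          ring
        rw [DoubleCoset.eq]
        refine ⟨sr i, Or.inr rfl, sr j, Or.inr rfl, ?_⟩
        rw [hnegval]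
        simp only [sr_mul_r, sr_mul_sr, r.injEq]
        linear_combination h2e - hd
      
    intro x
    obtain ⟨a, rfl⟩ := dmk_surjective (Rsub p i) (Rsub p j) x
    cases a with
    | r k => exact claim k
    | sr m =>
      obtain ⟨t, ht⟩ := claim (m - i)
      refine ⟨t, ht.trans ((DoubleCoset.eq _ _ _ _).mpr ⟨sr i, Or.inr rfl, 1, Subgroup.one_mem _, by simp⟩)⟩


section algebra

theorem cast_two_mul_p_zero (h : 0 < p) : ((2 : ZMod (2*p)) * (p : ZMod (2*p))) = 0 := by
  have : (((2 * p : ℕ)) : ZMod (2*p)) = 0 := ZMod.natCast_self _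
  push_cast at this
  linear_combination this

theorem cast_p_sq (h2 : p % 2 = 1) :
    ((p : ZMod (2*p)) * (p : ZMod (2*p))) = (p : ZMod (2*p)) := by
  obtain ⟨s, hs⟩ : ∃ s, p = 2 * s + 1 := ⟨p / 2, by omega⟩
  have key : ((p : ℤ) * p - p : ℤ) = (2 * p) * s := by
    rw [hs]; push_cast; ring
  have : (((p : ℤ) * p - p : ℤ) : ZMod (2*p)) = 0 := by
    rw [key]
    push_cast
    rw [show ((2:ZMod (2*p)) * p * s) = ((2:ZMod (2*p)) * p) * s from by ring,
      cast_two_mul_p_zero (by omega), zero_mul]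
  push_cast at this
  linear_combination this

/-- An explicit subring of the ghost ring containing the Burnside ring. -/
def Sring (p : ℕ) (hp : p.Prime) (h2 : p % 2 = 1) :
    Subring (Subgroup (DihedralGroup p) → ℤ) where
  carrier := {f | (∀ i : ZMod p, f (Rsub p i) = f (Rsub p 0)) ∧
    ((2 : ℤ) ∣ (f (Csub p) - f ⊤)) ∧
    ((2 * p : ℤ) ∣ (f ⊥ - ((p : ℤ) * (f (Rsub p 0) - f ⊤) + f (Csub p))))}
  zero_mem' := by
    refine ⟨fun i => rfl, ⟨0, by simp⟩, ⟨0, by simp⟩⟩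
  one_mem' := by
    refine ⟨fun i => rfl, ⟨0, by simp⟩, ⟨0, ?_⟩⟩
    simp [Pi.one_apply]
  add_mem' := by
    rintro f g ⟨hfR, hfC, hfB⟩ ⟨hgR, hgC, hgB⟩
    refine ⟨fun i => by simp [Pi.add_apply, hfR i, hgR i], ?_, ?_⟩
    · have : (f + g) (Csub p) - (f + g) ⊤ = (f (Csub p) - f ⊤) + (g (Csub p) - g ⊤) := by
        simp [Pi.add_apply]; ring
      rw [this]; exact dvd_add hfC hgC
    · have : (f + g) ⊥ - ((p : ℤ) * ((f + g) (Rsub p 0) - (f + g) ⊤) + (f + g) (Csub p))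
          = (f ⊥ - ((p : ℤ) * (f (Rsub p 0) - f ⊤) + f (Csub p)))
          + (g ⊥ - ((p : ℤ) * (g (Rsub p 0) - g ⊤) + g (Csub p))) := by
        simp [Pi.add_apply]; ring
      rw [this]; exact dvd_add hfB hgB
  neg_mem' := by
    rintro f ⟨hfR, hfC, hfB⟩
    refine ⟨fun i => by simp [Pi.neg_apply, hfR i], ?_, ?_⟩
    · have : (-f) (Csub p) - (-f) ⊤ = -(f (Csub p) - f ⊤) := by simp; ring
      rw [this]; exact dvd_neg.mpr hfC
    · have : (-f) ⊥ - ((p : ℤ) * ((-f) (Rsub p 0) - (-f) ⊤) + (-f) (Csub p))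
          = -(f ⊥ - ((p : ℤ) * (f (Rsub p 0) - f ⊤) + f (Csub p))) := by simp; ring
      rw [this]; exact dvd_neg.mpr hfB
  mul_mem' := by
    rintro f g ⟨hfR, hfC, hfB⟩ ⟨hgR, hgC, hgB⟩
    haveI : NeZero (2 * p) := ⟨by have := hp.pos; omega⟩
    refine ⟨fun i => by simp [Pi.mul_apply, hfR i, hgR i], ?_, ?_⟩
    · obtain ⟨a, ha⟩ := hfC
      obtain ⟨b, hb⟩ := hgC
      refine ⟨a * g ⊤ + f (Csub p) * b, ?_⟩
      simp only [Pi.mul_apply]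
      linear_combination (g ⊤) * ha + (f (Csub p)) * hb
    · obtain ⟨a, ha⟩ := hfC
      obtain ⟨b, hb⟩ := hgC
      obtain ⟨x, hx⟩ := hfB
      obtain ⟨y, hy⟩ := hgB
      have h2p : ((2*p : ℤ)) ∣ ((f * g) ⊥ - ((p : ℤ) * ((f * g) (Rsub p 0) - (f * g) ⊤)
          + (f * g) (Csub p))) := by
        have := ZMod.intCast_zmod_eq_zero_iff_dvd
          ((f * g) ⊥ - ((p : ℤ) * ((f * g) (Rsub p 0) - (f * g) ⊤) + (f * g) (Csub p))) (2 * p)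
        rw [show (((2*p : ℕ)) : ℤ) = (2*p : ℤ) from by push_cast; ring] at this
        rw [← this]
        push_cast [Pi.mul_apply]
        set R2 := ZMod (2*p)
        have hfB' : ((f ⊥ : ℤ) : R2) = (p : R2) * (((f (Rsub p 0) : ℤ) : R2)
            - ((f ⊤ : ℤ) : R2)) + ((f (Csub p) : ℤ) : R2) := by
          have : ((f ⊥ : ℤ) : R2) - ((p:R2) * (((f (Rsub p 0) : ℤ):R2) - ((f ⊤ : ℤ):R2))
              + ((f (Csub p) : ℤ):R2)) = ((2*p : ℤ) : R2) * ((x : ℤ) : R2) := by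
            push_cast (config := {zetaDelta := true})
            exact_mod_cast congrArg (fun z : ℤ => (z : R2)) hx
          have hz : ((2*p : ℤ) : R2) = 0 := by
            push_cast (config := {zetaDelta := true})
            exact cast_two_mul_p_zero hp.pos
          rw [hz, zero_mul] at this
          linear_combination this
        have hgB' : ((g ⊥ : ℤ) : R2) = (p : R2) * (((g (Rsub p 0) : ℤ) : R2)
            - ((g ⊤ : ℤ) : R2)) + ((g (Csub p) : ℤ) : R2) := by
          have : ((g ⊥ : ℤ) : R2) - ((p:R2) * (((g (Rsub p 0) : ℤ):R2) - ((g ⊤ : ℤ):R2))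
              + ((g (Csub p) : ℤ):R2)) = ((2*p : ℤ) : R2) * ((y : ℤ) : R2) := by
            push_cast (config := {zetaDelta := true})
            exact_mod_cast congrArg (fun z : ℤ => (z : R2)) hy
          have hz : ((2*p : ℤ) : R2) = 0 := by
            push_cast (config := {zetaDelta := true})
            exact cast_two_mul_p_zero hp.pos
          rw [hz, zero_mul] at this
          linear_combination this
        have haR : ((f (Csub p) : ℤ) : R2) = ((f ⊤ : ℤ) : R2) + 2 * ((a : ℤ) : R2) := by
          have h := congrArg (fun z : ℤ => (z : R2)) (by linarith [ha] : f (Csub p) = f ⊤ + 2*a)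
          simp (config := {zetaDelta := true}) only [Int.cast_add, Int.cast_mul, Int.cast_ofNat] at h
          exact h
        have hbR : ((g (Csub p) : ℤ) : R2) = ((g ⊤ : ℤ) : R2) + 2 * ((b : ℤ) : R2) := by
          have h := congrArg (fun z : ℤ => (z : R2)) (by linarith [hb] : g (Csub p) = g ⊤ + 2*b)
          simp (config := {zetaDelta := true}) only [Int.cast_add, Int.cast_mul, Int.cast_ofNat] at h
          exact h
        have hpp := cast_p_sq (p := p) h2
        have h2P := cast_two_mul_p_zero (p := p) hp.pos
        rw [hfB', hgB', haR, hbR]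
        linear_combination ((((f (Rsub p 0) : ℤ) : R2) - ((f ⊤ : ℤ) : R2)) *
            (((g (Rsub p 0) : ℤ) : R2) - ((g ⊤ : ℤ) : R2))) * hpp +
          (((((f (Rsub p 0) : ℤ) : R2) - ((f ⊤ : ℤ) : R2)) * ((b : ℤ) : R2)) +
            (((a : ℤ) : R2) * ((((g (Rsub p 0) : ℤ) : R2) - ((g ⊤ : ℤ) : R2))))) * h2P
      exact h2p

end algebra

theorem mark_bot_bot : burnsideMark (DihedralGroup p) ⊥ ⊥ = (2 * p : ℤ) := by
  rw [mark_K_bot, Subgroup.index_bot, DihedralGroup.nat_card]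
  push_cast; ring

theorem mark_R_bot (i : ZMod p) :
    burnsideMark (DihedralGroup p) (Rsub p i) ⊥ = (p : ℤ) := by
  rw [mark_K_bot, index_Rsub]

theorem mark_C_bot (hp : p.Prime) : burnsideMark (DihedralGroup p) (Csub p) ⊥ = 2 := by
  rw [mark_K_bot, index_Csub hp]
  norm_cast

theorem burnside_le_Sring (hp : p.Prime) (h2 : p % 2 = 1) :
    BurnsideRing (DihedralGroup p) ≤ Sring p hp h2 := by
  rw [BurnsideRing, Subring.closure_le]
  rintro f ⟨K, rfl⟩
  rcases subgroup_classification hp K with rfl | ⟨i, rfl⟩ | rfl | rfl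
  · exact ⟨fun i => by rw [mark_bot_R, mark_bot_R],
      ⟨0, by rw [mark_bot_C hp, mark_bot_top hp]; ring⟩,
      ⟨1, by rw [mark_bot_bot, mark_bot_R, mark_bot_top hp, mark_bot_C hp]; ring⟩⟩
  · exact ⟨fun i' => by rw [mark_R_R hp h2, mark_R_R hp h2],
      ⟨0, by rw [mark_R_C hp, mark_R_top hp]; ring⟩,
      ⟨0, by rw [mark_R_bot, mark_R_R hp h2, mark_R_top hp, mark_R_C hp]; ring⟩⟩
  · exact ⟨fun i => by rw [mark_C_R, mark_C_R],
      ⟨1, by rw [mark_C_C hp, mark_C_top]; ring⟩,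
      ⟨0, by rw [mark_C_bot hp, mark_C_R, mark_C_top, mark_C_C hp]; ring⟩⟩
  · exact ⟨fun i => by simp only [mark_top],
      ⟨0, by simp only [mark_top]; ring⟩,
      ⟨0, by simp only [mark_top]; ring⟩⟩

theorem units_key : ∀ x y : ℤˣ, x ≠ y → ((x : ℤ)) = -((y : ℤ)) := by
  intro x y hxy
  rcases Int.units_eq_one_or x with rfl | rfl <;> rcases Int.units_eq_one_or y with rfl | rfl <;>
    simp_all

theorem units_sq (x : ℤˣ) : ((x : ℤ)) * ((x : ℤ)) = 1 := by
  rcases Int.units_eq_one_or x with rfl | rfl <;> simp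

/-- Ghost vector of a prospective unit with signs `e1` (at `⊥` and `Cₚ`), `eR`, `eG`. -/
noncomputable def uVec (p : ℕ) (e1 eR eG : ℤˣ) : Subgroup (DihedralGroup p) → ℤ :=
  (if eR = eG then 0 else (eG : ℤ)) • burnsideMark (DihedralGroup p) ⊥
  + ((eR : ℤ) - (eG : ℤ)) • burnsideMark (DihedralGroup p) (Rsub p 0)
  + (if e1 = eG then 0 else (e1 : ℤ)) • burnsideMark (DihedralGroup p) (Csub p)
  + (eG : ℤ) • burnsideMark (DihedralGroup p) ⊤

theorem uVec_mem (e1 eR eG : ℤˣ) : uVec p e1 eR eG ∈ BurnsideRing (DihedralGroup p) := by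
  have m : ∀ K : Subgroup (DihedralGroup p),
      burnsideMark (DihedralGroup p) K ∈ BurnsideRing (DihedralGroup p) :=
    fun K => Subring.subset_closure ⟨K, rfl⟩
  exact add_mem (add_mem (add_mem (zsmul_mem (m _) _) (zsmul_mem (m _) _)) (zsmul_mem (m _) _))
    (zsmul_mem (m _) _)

theorem uVec_apply (e1 eR eG : ℤˣ) (X : Subgroup (DihedralGroup p)) :
    uVec p e1 eR eG X = (if eR = eG then 0 else (eG : ℤ)) * burnsideMark (DihedralGroup p) ⊥ X
      + ((eR : ℤ) - (eG : ℤ)) * burnsideMark (DihedralGroup p) (Rsub p 0) X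
      + (if e1 = eG then 0 else (e1 : ℤ)) * burnsideMark (DihedralGroup p) (Csub p) X
      + (eG : ℤ) * burnsideMark (DihedralGroup p) ⊤ X := by
  by_cases hRG : eR = eG <;> by_cases h1G : e1 = eG <;>
    simp [uVec, Pi.add_apply, Pi.smul_apply, smul_eq_mul, hRG, h1G]

theorem uVec_bot (hp : p.Prime) (h2 : p % 2 = 1) (e1 eR eG : ℤˣ) :
    uVec p e1 eR eG ⊥ = (e1 : ℤ) := by
  rw [uVec_apply, mark_bot_bot, mark_R_bot, mark_C_bot hp, mark_top]
  by_cases hRG : eR = eG <;> by_cases h1G : e1 = eG <;>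
    simp only [hRG, h1G, if_true, if_false, ite_true, ite_false]
  · ring
  · have hn : (eG : ℤ) = -(e1 : ℤ) := units_key eG e1 (fun h => h1G h.symm)
    rw [hn]; ring
  · have hn := units_key eR eG hRG
    rw [hn]; ring
  · have hn := units_key eR eG hRG
    have hn2 : (eG : ℤ) = -(e1 : ℤ) := units_key eG e1 (fun h => h1G h.symm)
    rw [hn, hn2]; ring

theorem uVec_R (hp : p.Prime) (h2 : p % 2 = 1) (e1 eR eG : ℤˣ) (i : ZMod p) :
    uVec p e1 eR eG (Rsub p i) = (eR : ℤ) := by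
  rw [uVec_apply, mark_bot_R, mark_R_R hp h2, mark_C_R, mark_top]
  by_cases hRG : eR = eG <;> by_cases h1G : e1 = eG <;>
    simp only [hRG, h1G, if_true, if_false, ite_true, ite_false] <;> ring

theorem uVec_C (hp : p.Prime) (h2 : p % 2 = 1) (e1 eR eG : ℤˣ) :
    uVec p e1 eR eG (Csub p) = (e1 : ℤ) := by
  rw [uVec_apply, mark_bot_C hp, mark_R_C hp, mark_C_C hp, mark_top]
  by_cases hRG : eR = eG <;> by_cases h1G : e1 = eG <;>
    simp only [hRG, h1G, if_true, if_false, ite_true, ite_false]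
  · ring
  · have hn : (eG : ℤ) = -(e1 : ℤ) := units_key eG e1 (fun h => h1G h.symm)
    rw [hn]; ring
  · ring
  · have hn : (eG : ℤ) = -(e1 : ℤ) := units_key eG e1 (fun h => h1G h.symm)
    rw [hn]; ring

theorem uVec_top (hp : p.Prime) (h2 : p % 2 = 1) (e1 eR eG : ℤˣ) :
    uVec p e1 eR eG ⊤ = (eG : ℤ) := by
  rw [uVec_apply, mark_bot_top hp, mark_R_top hp, mark_C_top, mark_top]
  by_cases hRG : eR = eG <;> by_cases h1G : e1 = eG <;>
    simp only [hRG, h1G, if_true, if_false, ite_true, ite_false] <;> ring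

theorem uVec_sq (hp : p.Prime) (h2 : p % 2 = 1) (e1 eR eG : ℤˣ) :
    uVec p e1 eR eG * uVec p e1 eR eG = 1 := by
  funext X
  rw [Pi.mul_apply, Pi.one_apply]
  rcases subgroup_classification hp X with rfl | ⟨i, rfl⟩ | rfl | rfl
  · rw [uVec_bot hp h2]; exact units_sq e1
  · rw [uVec_R hp h2]; exact units_sq eR
  · rw [uVec_C hp h2]; exact units_sq e1
  · rw [uVec_top hp h2]; exact units_sq eG

/-- The unit of the Burnside ring with sign vector `(e1, eR, e1, eG)`. -/
noncomputable def uu (hp : p.Prime) (h2 : p % 2 = 1) (e1 eR eG : ℤˣ) :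
    (BurnsideRing (DihedralGroup p))ˣ where
  val := ⟨uVec p e1 eR eG, uVec_mem e1 eR eG⟩
  inv := ⟨uVec p e1 eR eG, uVec_mem e1 eR eG⟩
  val_inv := Subtype.ext (uVec_sq hp h2 e1 eR eG)
  inv_val := Subtype.ext (uVec_sq hp h2 e1 eR eG)

theorem ghost_uu (hp : p.Prime) (h2 : p % 2 = 1) (e1 eR eG : ℤˣ) :
    ghost (uu hp h2 e1 eR eG) = uVec p e1 eR eG := rfl

/-- Evaluation of units of the Burnside ring at a subgroup. -/
noncomputable def evalU (p : ℕ) (H : Subgroup (DihedralGroup p)) :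
    (BurnsideRing (DihedralGroup p))ˣ →* ℤˣ :=
  Units.map ((Pi.evalRingHom (fun _ : Subgroup (DihedralGroup p) => ℤ) H).comp
    (BurnsideRing (DihedralGroup p)).subtype).toMonoidHom

theorem evalU_coe (H : Subgroup (DihedralGroup p)) (u : (BurnsideRing (DihedralGroup p))ˣ) :
    ((evalU p H u : ℤˣ) : ℤ) = ghost u H := rfl

theorem evalU_uu_bot (hp : p.Prime) (h2 : p % 2 = 1) (e1 eR eG : ℤˣ) :
    evalU p ⊥ (uu hp h2 e1 eR eG) = e1 :=
  Units.ext (uVec_bot hp h2 e1 eR eG)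

theorem evalU_uu_R (hp : p.Prime) (h2 : p % 2 = 1) (e1 eR eG : ℤˣ) (i : ZMod p) :
    evalU p (Rsub p i) (uu hp h2 e1 eR eG) = eR :=
  Units.ext (uVec_R hp h2 e1 eR eG i)

theorem evalU_uu_top (hp : p.Prime) (h2 : p % 2 = 1) (e1 eR eG : ℤˣ) :
    evalU p ⊤ (uu hp h2 e1 eR eG) = eG :=
  Units.ext (uVec_top hp h2 e1 eR eG)

theorem ghost_eq_uVec (hp : p.Prime) (h2 : p % 2 = 1) (u : (BurnsideRing (DihedralGroup p))ˣ) :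
    ghost u = uVec p (evalU p ⊥ u) (evalU p (Rsub p 0) u) (evalU p ⊤ u) := by
  have hp3 : 3 ≤ p := by
    have := hp.two_le
    rcases Nat.lt_or_ge p 3 with h | h
    · interval_cases p <;> omega
    · exact h
  set f : Subgroup (DihedralGroup p) → ℤ := ghost u with hf
  have hmemS := burnside_le_Sring hp h2 u.val.2
  obtain ⟨hfR, hfC, hfB⟩ := hmemS
  have hunit : ∀ X : Subgroup (DihedralGroup p), f X = 1 ∨ f X = -1 := by
    intro X
    have h1 : (u.val.val : Subgroup (DihedralGroup p) → ℤ) X * ((u⁻¹).val.val) X = 1 := by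
      have h0 : (u.val * (u⁻¹).val : Subring.closure
          (Set.range (burnsideMark (DihedralGroup p)))) = 1 := by
        rw [← Units.val_mul, mul_inv_cancel]; rfl
      have := congrFun (congrArg Subtype.val h0) X
      simp only [MulMemClass.coe_mul, Pi.mul_apply, OneMemClass.coe_one, Pi.one_apply] at this
      exact this
    exact Int.isUnit_iff.mp (IsUnit.of_mul_eq_one _ h1)
  -- f (Csub p) = f ⊥
  have hCbot : f (Csub p) = f ⊥ := by
    have hM : (2 * (p : ℤ)) ∣ (p : ℤ) * (f (Rsub p 0) - f ⊤) := by
      rcases hunit (Rsub p 0) with hR | hR <;> rcases hunit ⊤ with hT | hT <;>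
        rw [hR, hT]
      · exact ⟨0, by ring⟩
      · exact ⟨1, by ring⟩
      · exact ⟨-1, by ring⟩
      · exact ⟨0, by ring⟩
    have hdvd : (2 * (p : ℤ)) ∣ (f ⊥ - f (Csub p)) := by
      have h' : (2 * (p : ℤ)) ∣ f ⊥ - ((p : ℤ) * (f (Rsub p 0) - f ⊤) + f (Csub p))
          + (p : ℤ) * (f (Rsub p 0) - f ⊤) := dvd_add hfB hM
      have heq : f ⊥ - ((p : ℤ) * (f (Rsub p 0) - f ⊤) + f (Csub p))
          + (p : ℤ) * (f (Rsub p 0) - f ⊤) = f ⊥ - f (Csub p) := by ring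
      rwa [heq] at h'
    have habs : |f ⊥ - f (Csub p)| < 2 * (p : ℤ) := by
      rcases hunit ⊥ with h1 | h1 <;> rcases hunit (Csub p) with hc | hc <;>
        rw [h1, hc] <;> norm_num <;> push_cast <;> omega
    exact (sub_eq_zero.mp (Int.eq_zero_of_abs_lt_dvd hdvd habs)).symm
  funext X
  rcases subgroup_classification hp X with rfl | ⟨i, rfl⟩ | rfl | rfl
  · rw [uVec_bot hp h2, evalU_coe]
  · rw [uVec_R hp h2, evalU_coe, hf]
    exact (hfR i)
  · rw [uVec_C hp h2, evalU_coe]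
    exact hCbot.symm ▸ hCbot
  · rw [uVec_top hp h2, evalU_coe]

theorem uu_eval (hp : p.Prime) (h2 : p % 2 = 1) (u : (BurnsideRing (DihedralGroup p))ˣ) :
    u = uu hp h2 (evalU p ⊥ u) (evalU p (Rsub p 0) u) (evalU p ⊤ u) :=
  Units.ext (Subtype.ext (ghost_eq_uVec hp h2 u))

theorem card_units_eq_eight (hp : p.Prime) (h2 : p % 2 = 1) :
    Nat.card ((BurnsideRing (DihedralGroup p))ˣ) = 8 := by
  have e : ((BurnsideRing (DihedralGroup p))ˣ) ≃ (ℤˣ × ℤˣ × ℤˣ) := {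
    toFun := fun u => (evalU p ⊥ u, evalU p (Rsub p 0) u, evalU p ⊤ u)
    invFun := fun t => uu hp h2 t.1 t.2.1 t.2.2
    left_inv := fun u => (uu_eval hp h2 u).symm
    right_inv := fun t => by
      refine Prod.ext ?_ (Prod.ext ?_ ?_) <;>
        simp [evalU_uu_bot hp h2, evalU_uu_R hp h2, evalU_uu_top hp h2] }
  rw [Nat.card_congr e]
  rw [Nat.card_prod, Nat.card_prod, Nat.card_eq_fintype_card]
  simp [Fintype.card_units_int, Nat.card_eq_fintype_card]

section ten

theorem ten_bot (hp : p.Prime) (h2 : p % 2 = 1) : tenNegOne (⊥ : Subgroup (DihedralGroup p)) = uVec p 1 (-1) (-1) := by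
  funext L
  show ((-1 : ℤ)) ^ _ = _
  rcases subgroup_classification hp L with rfl | ⟨i, rfl⟩ | rfl | rfl
  · rw [dq_bot_bot, uVec_bot hp h2, Even.neg_one_pow (even_two_mul p)]
    simp
  · rw [dq_R_bot, uVec_R hp h2, Odd.neg_one_pow (Nat.odd_iff.mpr h2)]
    simp
  · rw [dq_C_bot, uVec_C hp h2]
    simp
  · rw [dq_top_right, uVec_top hp h2]
    simp

theorem ten_C (hp : p.Prime) (h2 : p % 2 = 1) : tenNegOne (Csub p) = uVec p 1 (-1) (-1) := by
  funext L
  show ((-1 : ℤ)) ^ _ = _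
  rcases subgroup_classification hp L with rfl | ⟨i, rfl⟩ | rfl | rfl
  · rw [dq_bot_C, uVec_bot hp h2]; simp
  · rw [dq_R_C, uVec_R hp h2]; simp
  · rw [dq_C_C, uVec_C hp h2]; simp
  · rw [dq_top_right, uVec_top hp h2]; simp

theorem ten_top (hp : p.Prime) (h2 : p % 2 = 1) : tenNegOne (⊤ : Subgroup (DihedralGroup p)) = uVec p (-1) (-1) (-1) := by
  funext L
  show ((-1 : ℤ)) ^ _ = _
  rcases subgroup_classification hp L with rfl | ⟨i, rfl⟩ | rfl | rfl <;>
    rw [dq_left_top] <;>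
    [rw [uVec_bot hp h2]; rw [uVec_R hp h2]; rw [uVec_C hp h2]; rw [uVec_top hp h2]] <;> simp

theorem ten_R1 (hp : p.Prime) (h2 : p % 2 = 1) (h4 : p % 4 = 1) (j : ZMod p) :
    tenNegOne (Rsub p j) = uVec p (-1) (-1) (-1) := by
  funext L
  show ((-1 : ℤ)) ^ _ = _
  rcases subgroup_classification hp L with rfl | ⟨i, rfl⟩ | rfl | rfl
  · rw [dq_bot_R, uVec_bot hp h2, Odd.neg_one_pow (Nat.odd_iff.mpr h2)]; simp
  · rw [dq_R_R hp h2, uVec_R hp h2, Odd.neg_one_pow (Nat.odd_iff.mpr (by omega))]; simp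
  · rw [dq_C_R, uVec_C hp h2]; simp
  · rw [dq_top_right, uVec_top hp h2]; simp

theorem ten_R3 (hp : p.Prime) (h2 : p % 2 = 1) (h4 : p % 4 = 3) (j : ZMod p) :
    tenNegOne (Rsub p j) = uVec p (-1) 1 (-1) := by
  funext L
  show ((-1 : ℤ)) ^ _ = _
  rcases subgroup_classification hp L with rfl | ⟨i, rfl⟩ | rfl | rfl
  · rw [dq_bot_R, uVec_bot hp h2, Odd.neg_one_pow (Nat.odd_iff.mpr h2)]; simp
  · rw [dq_R_R hp h2, uVec_R hp h2, Even.neg_one_pow (Nat.even_iff.mpr (by omega))]; simp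
  · rw [dq_C_R, uVec_C hp h2]; simp
  · rw [dq_top_right, uVec_top hp h2]; simp

theorem uu_mul (hp : p.Prime) (h2 : p % 2 = 1) (a b c a' b' c' : ℤˣ) :
    uu hp h2 a b c * uu hp h2 a' b' c' = uu hp h2 (a*a') (b*b') (c*c') := by
  refine Units.ext (Subtype.ext ?_)
  show (uVec p a b c) * (uVec p a' b' c') = uVec p (a*a') (b*b') (c*c')
  funext X
  rw [Pi.mul_apply]
  rcases subgroup_classification hp X with rfl | ⟨i, rfl⟩ | rfl | rfl <;>
    simp only [uVec_bot hp h2, uVec_R hp h2, uVec_C hp h2, uVec_top hp h2, Units.val_mul]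

theorem uu_one (hp : p.Prime) (h2 : p % 2 = 1) : uu hp h2 1 1 1 = 1 := by
  refine Units.ext (Subtype.ext ?_)
  show uVec p 1 1 1 = (1 : Subgroup (DihedralGroup p) → ℤ)
  funext X
  rcases subgroup_classification hp X with rfl | ⟨i, rfl⟩ | rfl | rfl <;>
    simp only [uVec_bot hp h2, uVec_R hp h2, uVec_C hp h2, uVec_top hp h2,
      Units.val_one, Pi.one_apply]

theorem unit_eq (hp : p.Prime) (h2 : p % 2 = 1) {v : (BurnsideRing (DihedralGroup p))ˣ} {a b c : ℤˣ}
    (h : ghost v = uVec p a b c) : v = uu hp h2 a b c :=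
  Units.ext (Subtype.ext h)

end ten

/-- The set of ghost vectors of tensor-induced units. -/
def Sset (p : ℕ) : Set ((BurnsideRing (DihedralGroup p))ˣ) :=
  {v : (BurnsideRing (DihedralGroup p))ˣ |
    ∃ H : Subgroup (DihedralGroup p), ghost v = tenNegOne H}

theorem g1_mem (hp : p.Prime) (h2 : p % 2 = 1) : uu hp h2 1 (-1) (-1) ∈ Sset p :=
  ⟨⊥, by rw [ghost_uu]; exact (ten_bot hp h2).symm⟩

theorem g3_mem (hp : p.Prime) (h2 : p % 2 = 1) : uu hp h2 (-1) (-1) (-1) ∈ Sset p :=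
  ⟨⊤, by rw [ghost_uu]; exact (ten_top hp h2).symm⟩

theorem closure_eq_top_of_three (hp : p.Prime) (h2 : p % 2 = 1) (h4 : p % 4 = 3) :
    Subgroup.closure (Sset p) = ⊤ := by
  have m1 := Subgroup.subset_closure (g1_mem hp h2)
  have m3 := Subgroup.subset_closure (g3_mem hp h2)
  have m2 : uu hp h2 (-1) 1 (-1) ∈ Subgroup.closure (Sset p) :=
    Subgroup.subset_closure ⟨Rsub p 0, by rw [ghost_uu]; exact (ten_R3 hp h2 h4 0).symm⟩
  rw [eq_top_iff]
  intro u _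
  rw [uu_eval hp h2 u]
  rcases Int.units_eq_one_or (evalU p ⊥ u) with ha | ha <;>
    rcases Int.units_eq_one_or (evalU p (Rsub p 0) u) with hb | hb <;>
    rcases Int.units_eq_one_or (evalU p ⊤ u) with hc | hc <;> rw [ha, hb, hc]
  · rw [uu_one hp h2]; exact one_mem _
  · have : uu hp h2 (1 : ℤˣ) 1 (-1) = uu hp h2 1 (-1) (-1) * (uu hp h2 (-1) 1 (-1)
        * uu hp h2 (-1) (-1) (-1)) := by
      rw [uu_mul hp h2, uu_mul hp h2]; norm_num
    rw [this]; exact mul_mem m1 (mul_mem m2 m3)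
  · have : uu hp h2 (1 : ℤˣ) (-1) 1 = uu hp h2 (-1) 1 (-1) * uu hp h2 (-1) (-1) (-1) := by
      rw [uu_mul hp h2]; norm_num
    rw [this]; exact mul_mem m2 m3
  · exact m1
  · have : uu hp h2 (-1 : ℤˣ) 1 1 = uu hp h2 1 (-1) (-1) * uu hp h2 (-1) (-1) (-1) := by
      rw [uu_mul hp h2]; norm_num
    rw [this]; exact mul_mem m1 m3
  · exact m2
  · have : uu hp h2 (-1 : ℤˣ) (-1) 1 = uu hp h2 1 (-1) (-1) * uu hp h2 (-1) 1 (-1) := by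
      rw [uu_mul hp h2]; norm_num
    rw [this]; exact mul_mem m1 m2
  · exact m3

/-- The sign homomorphism detecting the product of the marks at `R` and `⊤`. -/
noncomputable def psi (p : ℕ) : ((BurnsideRing (DihedralGroup p))ˣ) →* ℤˣ :=
  (evalU p (Rsub p 0)) * (evalU p ⊤)

theorem psi_uu (hp : p.Prime) (h2 : p % 2 = 1) (a b c : ℤˣ) :
    psi p (uu hp h2 a b c) = b * c := by
  rw [psi, MonoidHom.mul_apply, evalU_uu_R hp h2, evalU_uu_top hp h2]

theorem closure_eq_ker_of_one (hp : p.Prime) (h2 : p % 2 = 1) (h4 : p % 4 = 1) :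
    Subgroup.closure (Sset p) = (psi p).ker := by
  apply le_antisymm
  · rw [Subgroup.closure_le]
    rintro v ⟨H, hH⟩
    rw [SetLike.mem_coe, MonoidHom.mem_ker]
    rcases subgroup_classification hp H with rfl | ⟨j, rfl⟩ | rfl | rfl
    · rw [ten_bot hp h2] at hH
      rw [unit_eq hp h2 hH, psi_uu hp h2]; norm_num
    · rw [ten_R1 hp h2 h4 j] at hH
      rw [unit_eq hp h2 hH, psi_uu hp h2]; norm_num
    · rw [ten_C hp h2] at hH
      rw [unit_eq hp h2 hH, psi_uu hp h2]; norm_num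
    · rw [ten_top hp h2] at hH
      rw [unit_eq hp h2 hH, psi_uu hp h2]; norm_num
  · intro u hu
    rw [MonoidHom.mem_ker] at hu
    have m1 := Subgroup.subset_closure (g1_mem hp h2)
    have m3 := Subgroup.subset_closure (g3_mem hp h2)
    have hueq := uu_eval hp h2 u
    have hpsi : psi p u = (evalU p (Rsub p 0) u) * (evalU p ⊤ u) := by
      rw [psi, MonoidHom.mul_apply]
    rcases Int.units_eq_one_or (evalU p ⊥ u) with ha | ha <;>
      rcases Int.units_eq_one_or (evalU p (Rsub p 0) u) with hb | hb <;>
      rcases Int.units_eq_one_or (evalU p ⊤ u) with hc | hc <;>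
      rw [ha, hb, hc] at hueq <;> rw [hpsi, hb, hc] at hu
    · rw [hueq, uu_one hp h2]; exact one_mem _
    · norm_num at hu
    · norm_num at hu
    · rw [hueq]; exact m1
    · rw [hueq]
      have : uu hp h2 (-1 : ℤˣ) 1 1 = uu hp h2 1 (-1) (-1) * uu hp h2 (-1) (-1) (-1) := by
        rw [uu_mul hp h2]; norm_num
      rw [this]; exact mul_mem m1 m3
    · norm_num at hu
    · norm_num at hu
    · rw [hueq]; exact m3

theorem psi_surjective (hp : p.Prime) (h2 : p % 2 = 1) : Function.Surjective (psi p) := by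
  intro x
  rcases Int.units_eq_one_or x with rfl | rfl
  · exact ⟨1, map_one _⟩
  · exact ⟨uu hp h2 1 1 (-1), by rw [psi_uu hp h2]; norm_num⟩

theorem index_eq_two_of_one (hp : p.Prime) (h2 : p % 2 = 1) (h4 : p % 4 = 1) :
    (Subgroup.closure (Sset p)).index = 2 := by
  rw [closure_eq_ker_of_one hp h2 h4, Subgroup.index_ker]
  rw [MonoidHom.range_eq_top.mpr (psi_surjective hp h2), Subgroup.card_top]
  rw [Nat.card_eq_fintype_card]
  exact Fintype.card_units_int

end DRes

/-- For a prime `p ≡ 1 (mod 4)`, the dihedral group `D₂ₚ` is residual with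
respect to `B^×`: the subgroup of `B^×(D₂ₚ)` generated by the tensor inductions
`Ten^{D₂ₚ}_H(-1)` has index `2` in `B^×(D₂ₚ)`, which has order `2³ = 8`.
For `p ≡ 3 (mod 4)` these elements generate all of `B^×(D₂ₚ)`. -/
theorem dihedral_residual_iff_one_mod_four (p : ℕ) (hp : p.Prime) :
    (p % 4 = 1 →
      Nat.card ((BurnsideRing (DihedralGroup p))ˣ) = 8 ∧
      (Subgroup.closure {v : (BurnsideRing (DihedralGroup p))ˣ |
        ∃ H : Subgroup (DihedralGroup p), ghost v = tenNegOne H}).index = 2) ∧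
    (p % 4 = 3 →
      Subgroup.closure {v : (BurnsideRing (DihedralGroup p))ˣ |
        ∃ H : Subgroup (DihedralGroup p), ghost v = tenNegOne H} = ⊤) := by
  constructor
  · intro h4
    have h2 : p % 2 = 1 := by omega
    exact ⟨DRes.card_units_eq_eight hp h2, DRes.index_eq_two_of_one hp h2 h4⟩
  · intro h4
    have h2 : p % 2 = 1 := by omega
    exact DRes.closure_eq_top_of_three hp h2 h4
end

section
/- For every positive integer n, there are only countably many subsets of ℕⁿ that are downward closed under the componentwise (product) partial order. -/
open Pointwise

/-- For every positive integer `n`, there are only countably many subsets of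
`ℕⁿ` that are downward closed under the componentwise partial order. -/
theorem countable_downward_closed_subsets (n : ℕ) (hn : 0 < n) :
    Set.Countable {I : Set (Fin n → ℕ) |
      ∀ a ∈ I, ∀ b : Fin n → ℕ, (∀ i, b i ≤ a i) → b ∈ I} := by
  -- map each downward-closed set to the set of minimal elements of its complement
  set f : Set (Fin n → ℕ) → Set (Fin n → ℕ) :=
    fun I => {x | x ∉ I ∧ ∀ y, y ∉ I → y ≤ x → y = x} with hf
  -- every element of the complement dominates a minimal element
  have key : ∀ I : Set (Fin n → ℕ), ∀ x, x ∉ I → ∃ m ∈ f I, m ≤ x := by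
    intro I x hx
    have wf : WellFoundedLT (Fin n → ℕ) := inferInstance
    obtain ⟨m, hm, hmin⟩ := wf.wf.has_min {y | y ∉ I ∧ y ≤ x} ⟨x, hx, le_refl x⟩
    refine ⟨m, ⟨hm.1, fun y hy hle => ?_⟩, hm.2⟩
    by_contra hne
    exact hmin y ⟨hy, hle.trans hm.2⟩ (lt_of_le_of_ne hle hne)
  -- reconstruct I from f I, for downward-closed I
  have recon : ∀ I ∈ {I : Set (Fin n → ℕ) |
      ∀ a ∈ I, ∀ b : Fin n → ℕ, (∀ i, b i ≤ a i) → b ∈ I},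
      I = {x | ∀ m ∈ f I, ¬ m ≤ x} := by
    intro I hI
    ext x
    constructor
    · intro hx m hm hle
      exact hm.1 (hI x hx m fun i => hle i)
    · intro hx
      by_contra hxI
      obtain ⟨m, hm, hle⟩ := key I x hxI
      exact hx m hm hle
  apply Set.countable_of_injective_of_countable_image
    (f := f)
  · intro I hI J hJ hIJ
    rw [recon I hI, recon J hJ, hIJ]
  · -- each f I is finite: it's an antichain in a PWO set
    refine Set.Countable.mono ?_ (Set.countable_setOf_finite_subset Set.countable_univ)
    rintro S ⟨I, -, rfl⟩
    refine ⟨?_, Set.subset_univ _⟩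
    have hanti : IsAntichain (· ≤ ·) (f I) := by
      rintro a ⟨ha, hamin⟩ b ⟨hb, hbmin⟩ hne hle
      exact hne (hbmin a ha hle)
    haveI : IsWellOrder ℕ (· < · ) := inferInstance
    exact hanti.finite_of_partiallyWellOrderedOn ((Set.isPWO_of_wellQuasiOrderedLE (Set.univ : Set (Fin n → ℕ))).mono (Set.subset_univ _))
end

section
/- For a positive integer x, Euler's totient φ(x) is congruent to 2 modulo 4 if and only if x = 4, or x is a power pᵏ (k ≥ 1) of a prime p ≡ 3 (mod 4), or x is twice such a prime power. -/
open Pointwise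

private lemma odd_mul_mod4 (a b : ℕ) (ha : a % 2 = 1) (hb : b % 4 = 2) :
    (a * b) % 4 = 2 := by
  have h : a % 4 % 2 = 1 := by rw [Nat.mod_mod_of_dvd a (by norm_num)]; exact ha
  rw [Nat.mul_mod, hb]
  have h4 : a % 4 < 4 := Nat.mod_lt _ (by norm_num)
  interval_cases h' : a % 4 <;> simp_all

private lemma pow_odd (p k : ℕ) (hp : p % 2 = 1) : p ^ k % 2 = 1 := by
  rw [Nat.pow_mod, hp, one_pow]; rfl

private lemma totient_pp (p k : ℕ) (hp : p.Prime) (hp3 : p % 4 = 3) (hk : 1 ≤ k) :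
    Nat.totient (p ^ k) % 4 = 2 := by
  rw [Nat.totient_prime_pow hp hk]
  have hp2 : p % 2 = 1 := by omega
  exact odd_mul_mod4 _ _ (pow_odd p _ hp2) (by have := hp.two_le; omega)

/-- `φ(x) ≡ 2 (mod 4)` iff `x = 4`, or `x` is a power `p ^ k` (`k ≥ 1`) of a
prime `p ≡ 3 (mod 4)`, or `x` is twice such a prime power. -/
theorem totient_mod_four_eq_two_iff (x : ℕ) (hx : 0 < x) :
    Nat.totient x % 4 = 2 ↔
      x = 4 ∨ ∃ p k : ℕ, p.Prime ∧ p % 4 = 3 ∧ 1 ≤ k ∧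
        (x = p ^ k ∨ x = 2 * p ^ k) := by
  constructor
  · intro h
    -- no divisor of x has totient divisible by 4
    have h4 : ∀ d, d ∣ x → ¬ (4 ∣ d.totient) := by
      intro d hd hdvd
      have h1 : d.totient ∣ x.totient := Nat.totient_dvd_of_dvd hd
      have : 4 ∣ x.totient := hdvd.trans h1
      omega
    -- every odd prime factor of x is ≡ 3 mod 4
    have hop : ∀ p, p.Prime → p ∣ x → p ≠ 2 → p % 4 = 3 := by
      intro p hp hpx hp2
      have hnd : ¬ 2 ∣ p := fun hd =>
        hp2 ((Nat.prime_dvd_prime_iff_eq Nat.prime_two hp).mp hd).symm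
      have hpodd : p % 2 = 1 := by omega
      by_contra hc
      have hmod : p % 4 % 2 = p % 2 := Nat.mod_mod_of_dvd p (by norm_num)
      have hp1 : p % 4 = 1 := by omega
      have hdvd : 4 ∣ p.totient := by
        rw [Nat.totient_prime hp]
        have := hp.two_le
        omega
      exact h4 p hpx hdvd
    -- at most one odd prime factor
    have huniq : ∀ p q, p.Prime → q.Prime → p ∣ x → q ∣ x → p ≠ 2 → q ≠ 2 → p = q := by
      intro p q hp hq hpx hqx hp2 hq2
      by_contra hne
      have hcop : Nat.Coprime p q := (Nat.coprime_primes hp hq).mpr hne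
      have hpq : p * q ∣ x := hcop.mul_dvd_of_dvd_of_dvd hpx hqx
      refine h4 _ hpq ?_
      rw [Nat.totient_mul hcop, Nat.totient_prime hp, Nat.totient_prime hq]
      have h2p : 2 ∣ p - 1 := by
        have hnd : ¬ 2 ∣ p := fun hd =>
          hp2 ((Nat.prime_dvd_prime_iff_eq Nat.prime_two hp).mp hd).symm
        have := hp.two_le
        omega
      have h2q : 2 ∣ q - 1 := by
        have hnd : ¬ 2 ∣ q := fun hd =>
          hq2 ((Nat.prime_dvd_prime_iff_eq Nat.prime_two hq).mp hd).symm
        have := hq.two_le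
        omega
      have := Nat.mul_dvd_mul h2p h2q
      simpa using this
    set a := x.factorization 2 with ha
    set m := x / 2 ^ a with hm
    have hxm : 2 ^ a * m = x := Nat.ordProj_mul_ordCompl_eq_self x 2
    have hmodd : ¬ 2 ∣ m := Nat.not_dvd_ordCompl Nat.prime_two hx.ne'
    have hmpos : 0 < m := by
      rcases Nat.eq_zero_or_pos m with h0 | h0
      · rw [h0, mul_zero] at hxm; omega
      · exact h0
    have h8 : ¬ (8 ∣ x) := by
      intro h8
      refine h4 8 h8 ?_
      decide
    by_cases hm1 : m = 1
    · -- x is a power of two; must be 4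
      left
      rw [hm1, mul_one] at hxm
      -- 8 ∤ x bounds a ≤ 2
      have ha2 : a ≤ 2 := by
        by_contra hc
        push_neg at hc
        refine h8 ?_
        have h1 : (2:ℕ) ^ 3 ∣ 2 ^ a := pow_dvd_pow 2 (by omega)
        calc (8:ℕ) = 2 ^ 3 := by norm_num
        _ ∣ 2 ^ a := h1
        _ = x := hxm
      interval_cases a
      · simp at hxm; rw [← hxm] at h; simp [Nat.totient_one] at h
      · rw [← hxm] at h; norm_num at h
      · omega
    · -- m has a unique odd prime factor p
      set p := m.minFac with hpdef
      have hp : p.Prime := Nat.minFac_prime hm1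
      have hpm : p ∣ m := Nat.minFac_dvd m
      have hmx : m ∣ x := ⟨2 ^ a, by rw [mul_comm]; exact hxm.symm⟩
      have hpx : p ∣ x := hpm.trans hmx
      have hp2 : p ≠ 2 := fun hpe => hmodd (hpe ▸ hpm)
      have hp3 : p % 4 = 3 := hop p hp hpx hp2
      -- m = p ^ k
      have hmpk : m = p ^ m.primeFactorsList.length := by
        refine Nat.eq_prime_pow_of_unique_prime_dvd hmpos.ne' ?_
        intro q hq hqm
        have hq2 : q ≠ 2 := fun hqe => hmodd (hqe ▸ hqm)
        exact huniq q p hq hp (hqm.trans hmx) hpx hq2 hp2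
      set k := m.primeFactorsList.length with hkdef
      have hk1 : 1 ≤ k := by
        by_contra hc
        push_neg at hc
        interval_cases k
        · simp at hmpk; omega
      -- a ≤ 1
      have ha1 : a ≤ 1 := by
        by_contra hc
        push_neg at hc
        have h4x : 4 ∣ x := by
          have : (2:ℕ) ^ 2 ∣ 2 ^ a := pow_dvd_pow 2 (by omega)
          calc (4:ℕ) = 2 ^ 2 := by norm_num
          _ ∣ 2 ^ a := this
          _ ∣ x := ⟨m, hxm.symm⟩
        have hcop4 : Nat.Coprime 4 p := by
          have : Nat.Coprime 2 p := (Nat.prime_two.coprime_iff_not_dvd).mpr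
            (fun hd => hp2 ((Nat.prime_dvd_prime_iff_eq Nat.prime_two hp).mp hd).symm)
          simpa using this.pow_left 2
        have h4px : 4 * p ∣ x := hcop4.mul_dvd_of_dvd_of_dvd h4x hpx
        refine h4 _ h4px ?_
        rw [Nat.totient_mul hcop4, Nat.totient_prime hp]
        have : Nat.totient 4 = 2 := by decide
        rw [this]
        have := hp.two_le
        omega
      right
      refine ⟨p, k, hp, hp3, hk1, ?_⟩
      interval_cases a
      · left; rw [← hxm, pow_zero, one_mul]; exact hmpk
      · right; rw [← hxm, pow_one]; rw [hmpk]
  · rintro (rfl | ⟨p, k, hp, hp3, hk, (rfl | rfl)⟩)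
    · decide
    · exact totient_pp p k hp hp3 hk
    · have hcop : Nat.Coprime 2 (p ^ k) :=
        Nat.Coprime.pow_right k ((Nat.prime_two.coprime_iff_not_dvd).mpr (by omega))
      rw [Nat.totient_mul hcop, Nat.totient_two, one_mul]
      exact totient_pp p k hp hp3 hk
end

section
/- Let n ≥ 3 and define s(n) to be the 𝔽₂-dimension of S_{1,𝔽₂}(D₂ₙ), which equals m + 2 if n is odd and m + 4 if n is even, where m is the number of positive divisors d of n with φ(d) ≡ 2 (mod 4). Then the exponential map ε_{D₂ₙ} : B(D₂ₙ) → B^×(D₂ₙ), [G/H] ↦ Ten^G_H(−1), is surjective if and only if φ(n) ≡ 2 (mod 4). Equivalently (since the image of ε_{D₂ₙ} has 𝔽₂-dimension s(n) and dim B^×(D₂ₙ) = d(n)+1 for n odd, d(n)+2 for n even), the equality s(n) = dim_{𝔽₂} B^×(D₂ₙ) holds iff φ(n) ≡ 2 (mod 4). In purely arithmetic form: for n ≥ 3, the number of divisors d of n with φ(d) ≡ 2 (mod 4) equals d(n) − 1 if n is odd (resp. d(n) − 2 if n is even) if and only if φ(n) ≡ 2 (mod 4). -/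
open Pointwise

/-- Arithmetic form of the surjectivity criterion for the exponential map
`ε_{D₂ₙ} : B(D₂ₙ) → B^×(D₂ₙ)`: for `n ≥ 3`, the number `m` of divisors `d` of
`n` with `φ(d) ≡ 2 (mod 4)` satisfies `m = d(n) - 1` (`n` odd), resp.
`m = d(n) - 2` (`n` even), if and only if `φ(n) ≡ 2 (mod 4)`. -/
theorem exponential_surjective_dihedral_iff (n : ℕ) (hn : 3 ≤ n) :
    ((n.divisors.filter (fun d => Nat.totient d % 4 = 2)).card =
        if n % 2 = 1 then n.divisors.card - 1 else n.divisors.card - 2) ↔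
      Nat.totient n % 4 = 2 := by
  have hn0 : n ≠ 0 := by omega
  have hsum := Finset.card_filter_add_card_filter_not
    (s := n.divisors) (p := fun d => Nat.totient d % 4 = 2)
  set S := n.divisors.filter (fun d => Nat.totient d % 4 = 2) with hS
  set T := n.divisors.filter (fun d => ¬ Nat.totient d % 4 = 2) with hT
  constructor
  · intro h
    by_contra hne
    have h1T : 1 ∈ T := by
      simp [hT, Nat.mem_divisors, hn0, Nat.totient_one]
    have hnT : n ∈ T := by
      simp [hT, Nat.mem_divisors, hn0, hne]
    rcases Nat.even_or_odd n with he | ho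
    · have h2 : n % 2 = 0 := Nat.even_iff.mp he
      rw [if_neg (by omega)] at h
      have h2T : 2 ∈ T := by
        simp [hT, Nat.mem_divisors, hn0, Nat.totient_two, Nat.dvd_of_mod_eq_zero h2]
      have hsub : ({1, 2, n} : Finset ℕ) ⊆ T := by
        intro x hx
        simp only [Finset.mem_insert, Finset.mem_singleton] at hx
        rcases hx with rfl | rfl | rfl <;> assumption
      have hc : ({1, 2, n} : Finset ℕ).card = 3 := by
        rw [Finset.card_insert_of_notMem (by simp; omega),
          Finset.card_insert_of_notMem (by simp; omega), Finset.card_singleton]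
      have := Finset.card_le_card hsub
      omega
    · have h1 : n % 2 = 1 := Nat.odd_iff.mp ho
      rw [if_pos h1] at h
      have hsub : ({1, n} : Finset ℕ) ⊆ T := by
        intro x hx
        simp only [Finset.mem_insert, Finset.mem_singleton] at hx
        rcases hx with rfl | rfl <;> assumption
      have hc : ({1, n} : Finset ℕ).card = 2 := by
        rw [Finset.card_insert_of_notMem (by simp; omega), Finset.card_singleton]
      have := Finset.card_le_card hsub
      omega
  · intro h2
    -- key: for d ∣ n, φ(d) % 4 = 2 ↔ 2 < d
    have key : ∀ d ∈ n.divisors, (Nat.totient d % 4 = 2 ↔ 2 < d) := by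
      intro d hd
      rw [Nat.mem_divisors] at hd
      obtain ⟨hdvd, -⟩ := hd
      constructor
      · intro hφ
        by_contra hle
        have hd0 : d ≠ 0 := by rintro rfl; exact hn0 (Nat.eq_zero_of_zero_dvd hdvd)
        have : d = 1 ∨ d = 2 := by omega
        rcases this with rfl | rfl <;> simp [Nat.totient_one, Nat.totient_two] at hφ
      · intro hlt
        have heven : Even (Nat.totient d) := Nat.totient_even hlt
        have hdd : Nat.totient d ∣ Nat.totient n := Nat.totient_dvd_of_dvd hdvd
        have hmod2 : Nat.totient d % 2 = 0 := Nat.even_iff.mp heven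
        have hnot4 : ¬ (4 ∣ Nat.totient d) := by
          intro h4
          obtain ⟨c, hc⟩ := h4.trans hdd
          omega
        rw [Nat.dvd_iff_mod_eq_zero] at hnot4
        omega
    have hfe : S = n.divisors.filter (fun d => ¬ d ≤ 2) := by
      rw [hS]
      refine Finset.filter_congr ?_
      intro d hd
      simp only [not_le]
      exact key d hd
    have hsum2 := Finset.card_filter_add_card_filter_not
      (s := n.divisors) (p := fun d => d ≤ 2)
    rcases Nat.even_or_odd n with he | ho
    · have hm2 : n % 2 = 0 := Nat.even_iff.mp he
      rw [if_neg (by omega)]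
      have hsmall : n.divisors.filter (fun d => d ≤ 2) = {1, 2} := by
        ext d
        simp only [Finset.mem_filter, Nat.mem_divisors, Finset.mem_insert,
          Finset.mem_singleton]
        constructor
        · rintro ⟨⟨hdvd, -⟩, hle⟩
          have hd0 : d ≠ 0 := by rintro rfl; exact hn0 (Nat.eq_zero_of_zero_dvd hdvd)
          omega
        · rintro (rfl | rfl)
          · exact ⟨⟨one_dvd n, hn0⟩, by omega⟩
          · exact ⟨⟨Nat.dvd_of_mod_eq_zero hm2, hn0⟩, by omega⟩
      rw [hsmall] at hsum2
      have hc2 : ({1, 2} : Finset ℕ).card = 2 := by decide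
      rw [hfe]
      omega
    · have hm1 : n % 2 = 1 := Nat.odd_iff.mp ho
      rw [if_pos hm1]
      have hsmall : n.divisors.filter (fun d => d ≤ 2) = {1} := by
        ext d
        simp only [Finset.mem_filter, Nat.mem_divisors, Finset.mem_singleton]
        constructor
        · rintro ⟨⟨hdvd, -⟩, hle⟩
          have hd0 : d ≠ 0 := by rintro rfl; exact hn0 (Nat.eq_zero_of_zero_dvd hdvd)
          have : d = 1 ∨ d = 2 := by omega
          rcases this with rfl | rfl
          · rfl
          · obtain ⟨c, hc⟩ := hdvd; omega
        · rintro rfl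
          exact ⟨⟨one_dvd n, hn0⟩, by omega⟩
      rw [hsmall] at hsum2
      rw [hfe]
      simp only [Finset.card_singleton] at hsum2
      omega
end
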